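/- arXiv:2306.08897 — 3 statements merged into one kernel-verified Lean document; each statement's English description precedes it below -/
import Mathlib

section
/- For every continuum X and every point x ∈ X, the blocked set B(x) = {y ∈ X : {x} blocks {y}} is connected. -/
open Set Metric TopologicalSpace unitInterval

variable {X : Type*} [MetricSpace X] [CompactSpace X] [ConnectedSpace X] [Nonempty X]

/-- An order arc in the hyperspace `C(X)`: a continuous map into nonempty compact
(connected-valued) subsets, strictly increasing with respect to inclusion. -/
def IsOrderArc {X : Type*} [MetricSpace X] (α : unitInterval → NonemptyCompacts X) : Prop :=
  Continuous α ∧ (∀ t, IsConnected (α t : Set X)) ∧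
    ∀ s t : unitInterval, s < t → (α s : Set X) ⊂ (α t : Set X)

/-- `B` blocks `A`: every continuous path in `2^X` from `A` to `X` meets `B`
at some time `t < 1`. -/
def Blocks {X : Type*} [MetricSpace X] (B A : Set X) : Prop :=
  ∀ γ : unitInterval → NonemptyCompacts X, Continuous γ →
    (γ 0 : Set X) = A → (γ 1 : Set X) = univ →
    ∃ t : unitInterval, t < 1 ∧ ((γ t : Set X) ∩ B).Nonempty

/-- The blocked set of a point `x`: all points `y` such that `{x}` blocks `{y}`. -/
def BlockedSet {X : Type*} [MetricSpace X] (x : X) : Set X :=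
  {y | Blocks {x} {y}}

/-- A nonblocker of singletons: a nonempty proper closed set `A` such that every
point outside `A` admits an order arc from its singleton to `X` avoiding `A`
at all times `t < 1`. -/
def IsNonBlocker {X : Type*} [MetricSpace X] (A : Set X) : Prop :=
  IsClosed A ∧ A.Nonempty ∧ A ≠ univ ∧
    ∀ x ∉ A, ∃ α : unitInterval → NonemptyCompacts X, IsOrderArc α ∧
      (α 0 : Set X) = {x} ∧ (α 1 : Set X) = univ ∧
      ∀ t : unitInterval, t < 1 → (α t : Set X) ∩ A = ∅

open Classical in
/-- `π(x)`: the intersection of all nonblockers of singletons containing `x`,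
or `X` if no such nonblocker exists. -/
noncomputable def piSet {X : Type*} [MetricSpace X] (x : X) : Set X :=
  if ∃ A : Set X, IsNonBlocker A ∧ x ∈ A then ⋂₀ {A : Set X | IsNonBlocker A ∧ x ∈ A}
  else univ

/-- The Kelley property of a continuum. -/
def KelleyContinuum (X : Type*) [MetricSpace X] : Prop :=
  ∀ ε > (0 : ℝ), ∃ δ > (0 : ℝ), ∀ p q : X, dist p q < δ →
    ∀ A : Set X, IsCompact A → IsConnected A → p ∈ A →
      ∃ B : Set X, IsCompact B ∧ IsConnected B ∧ q ∈ B ∧ hausdorffDist A B < ε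

/-- A shore set: a nonempty proper closed set which can be avoided by subcontinua
arbitrarily close (in Hausdorff distance) to the whole space. -/
def IsShoreSet {X : Type*} [MetricSpace X] (A : Set X) : Prop :=
  IsClosed A ∧ A.Nonempty ∧ A ≠ univ ∧
    ∀ ε > (0 : ℝ), ∃ B : Set X, IsCompact B ∧ IsConnected B ∧
      hausdorffDist B (univ : Set X) < ε ∧ B ∩ A = ∅

/-- A shore point: a point whose singleton is a shore set. -/
def IsShorePoint {X : Type*} [MetricSpace X] (x : X) : Prop :=
  IsShoreSet ({x} : Set X)

/-- Two points of `S` are joined by an arc lying in `S` (or are equal). -/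
def ArcIn {X : Type*} [MetricSpace X] (S : Set X) (x y : X) : Prop :=
  x = y ∨ ∃ f : unitInterval → X, Continuous f ∧ Function.Injective f ∧
    f 0 = x ∧ f 1 = y ∧ ∀ t, f t ∈ S

/-- A set is arcwise connected if any two of its points are joined by an arc in it. -/
def IsArcwiseConnected {X : Type*} [MetricSpace X] (S : Set X) : Prop :=
  ∀ x ∈ S, ∀ y ∈ S, ArcIn S x y

/-- The arc component of `x` in `S`. -/
def arcComponent {X : Type*} [MetricSpace X] (S : Set X) (x : X) : Set X :=
  {y | y ∈ S ∧ ArcIn S x y}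

/-- A continuum `K` is unicoherent if the intersection of any two subcontinua
whose union is `K` is connected. -/
def IsUnicoherent {X : Type*} [MetricSpace X] (K : Set X) : Prop :=
  ∀ A B : Set X, IsCompact A → IsConnected A → IsCompact B → IsConnected B →
    A ∪ B = K → IsConnected (A ∩ B)

/-- A dendroid: an arcwise connected, hereditarily unicoherent continuum. -/
def IsDendroid (X : Type*) [MetricSpace X] [CompactSpace X] [ConnectedSpace X]
    [Nonempty X] : Prop :=
  IsArcwiseConnected (univ : Set X) ∧
    ∀ K : Set X, IsCompact K → IsConnected K → IsUnicoherent K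

/-- A strong center: a point `p` for which there are nonempty open sets `U`, `V`
such that every arc from `U` to `V` passes through `p`. -/
def IsStrongCenter {X : Type*} [MetricSpace X] (p : X) : Prop :=
  ∃ U V : Set X, IsOpen U ∧ IsOpen V ∧ U.Nonempty ∧ V.Nonempty ∧
    ∀ f : unitInterval → X, Continuous f → Function.Injective f →
      f 0 ∈ U → f 1 ∈ V → ∃ t, f t = p

/-- A homogeneous space: any point can be mapped to any other by a self-homeomorphism. -/
def IsHomogeneous (X : Type*) [MetricSpace X] : Prop :=
  ∀ p q : X, ∃ h : X ≃ₜ X, h p = q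


set_option linter.unusedSectionVars false
namespace BlockedAux

variable {X : Type*} [MetricSpace X] [CompactSpace X]

lemma hEdist_ne_top (s t : Set X) (hs : s.Nonempty) (ht : t.Nonempty) :
    EMetric.hausdorffEdist s t ≠ ⊤ :=
  hausdorffEdist_ne_top_of_nonempty_of_bounded hs ht
    (isCompact_univ.isBounded.subset (subset_univ s))
    (isCompact_univ.isBounded.subset (subset_univ t))

lemma hd_mono_outer {A B C : Set X} (hAB : A ⊆ B) (hBC : B ⊆ C)
    (hA : A.Nonempty) (hAc : IsCompact A) (hC : C.Nonempty) :
    hausdorffDist B C ≤ hausdorffDist A C := by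
  apply hausdorffDist_le_of_mem_dist hausdorffDist_nonneg
  · intro p hp; exact ⟨p, hBC hp, by simpa using hausdorffDist_nonneg⟩
  · intro q hq
    have h1 : infDist q A ≤ hausdorffDist C A :=
      infDist_le_hausdorffDist_of_mem hq (hEdist_ne_top _ _ hC hA)
    obtain ⟨a, ha, hae⟩ := hAc.exists_infDist_eq_dist hA q
    refine ⟨a, hAB ha, ?_⟩
    calc dist q a = infDist q A := hae.symm
      _ ≤ hausdorffDist C A := h1
      _ = hausdorffDist A C := hausdorffDist_comm

lemma hd_mono_inner {A B C : Set X} (hAB : A ⊆ B) (hBC : B ⊆ C)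
    (hA : A.Nonempty) (hAc : IsCompact A) (hC : C.Nonempty) :
    hausdorffDist A B ≤ hausdorffDist A C := by
  apply hausdorffDist_le_of_mem_dist hausdorffDist_nonneg
  · intro p hp; exact ⟨p, hAB hp, by simpa using hausdorffDist_nonneg⟩
  · intro q hq
    have h1 : infDist q A ≤ hausdorffDist C A :=
      infDist_le_hausdorffDist_of_mem (hBC hq) (hEdist_ne_top _ _ hC hA)
    obtain ⟨a, ha, hae⟩ := hAc.exists_infDist_eq_dist hA q
    refine ⟨a, ha, ?_⟩
    calc dist q a = infDist q A := hae.symm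
      _ ≤ hausdorffDist C A := h1
      _ = hausdorffDist A C := hausdorffDist_comm

lemma hd_union (K A B : Set X) (hA : A.Nonempty) (hB : B.Nonempty) :
    hausdorffDist (K ∪ A) (K ∪ B) ≤ hausdorffDist A B := by
  apply hausdorffDist_le_of_infDist hausdorffDist_nonneg
  · rintro p (hp | hp)
    · exact (infDist_zero_of_mem (mem_union_left B hp)).le.trans hausdorffDist_nonneg
    · calc infDist p (K ∪ B) ≤ infDist p B :=
            infDist_le_infDist_of_subset subset_union_right hB
        _ ≤ hausdorffDist A B := infDist_le_hausdorffDist_of_mem hp (hEdist_ne_top _ _ hA hB)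
  · rintro q (hq | hq)
    · exact (infDist_zero_of_mem (mem_union_left A hq)).le.trans hausdorffDist_nonneg
    · calc infDist q (K ∪ A) ≤ infDist q A :=
            infDist_le_infDist_of_subset subset_union_right hA
        _ ≤ hausdorffDist B A := infDist_le_hausdorffDist_of_mem hq (hEdist_ne_top _ _ hB hA)
        _ = hausdorffDist A B := hausdorffDist_comm

lemma chain_ub {D : Set (Set X)} (hD : IsChain (· ⊆ ·) D) :
    ∀ (n : ℕ) (f : ℕ → Set X), (∀ i, i ≤ n → f i ∈ D) → ∃ T ∈ D, ∀ i, i ≤ n → f i ⊆ T := by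
  intro n
  induction n with
  | zero =>
    intro f hf
    exact ⟨f 0, hf 0 le_rfl, fun i hi => by simp [Nat.le_zero.mp hi]⟩
  | succ n ih =>
    intro f hf
    obtain ⟨T, hTD, hT⟩ := ih f (fun i hi => hf i (hi.trans (Nat.le_succ n)))
    rcases eq_or_ne (f (n+1)) T with h | h
    · exact ⟨T, hTD, fun i hi => by
        rcases Nat.le_succ_iff.mp hi with hi' | hi'
        · exact hT i hi'
        · rw [hi', h]⟩
    · rcases hD (hf (n+1) le_rfl) hTD h with h' | h'
      · exact ⟨T, hTD, fun i hi => by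
          rcases Nat.le_succ_iff.mp hi with hi' | hi'
          · exact hT i hi'
          · rw [hi']; exact h'⟩
      · exact ⟨f (n+1), hf (n+1) le_rfl, fun i hi => by
          rcases Nat.le_succ_iff.mp hi with hi' | hi'
          · exact (hT i hi').trans h'
          · rw [hi']⟩

lemma chain_lb {D : Set (Set X)} (hD : IsChain (· ⊆ ·) D) :
    ∀ (n : ℕ) (f : ℕ → Set X), (∀ i, i ≤ n → f i ∈ D) → ∃ T ∈ D, ∀ i, i ≤ n → T ⊆ f i := by
  intro n
  induction n with
  | zero =>
    intro f hf
    exact ⟨f 0, hf 0 le_rfl, fun i hi => by simp [Nat.le_zero.mp hi]⟩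
  | succ n ih =>
    intro f hf
    obtain ⟨T, hTD, hT⟩ := ih f (fun i hi => hf i (hi.trans (Nat.le_succ n)))
    rcases eq_or_ne (f (n+1)) T with h | h
    · exact ⟨T, hTD, fun i hi => by
        rcases Nat.le_succ_iff.mp hi with hi' | hi'
        · exact hT i hi'
        · rw [hi', h]⟩
    · rcases hD (hf (n+1) le_rfl) hTD h with h' | h'
      · exact ⟨f (n+1), hf (n+1) le_rfl, fun i hi => by
          rcases Nat.le_succ_iff.mp hi with hi' | hi'
          · exact h'.trans (hT i hi')
          · rw [hi']⟩
      · exact ⟨T, hTD, fun i hi => by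
          rcases Nat.le_succ_iff.mp hi with hi' | hi'
          · exact hT i hi'
          · rw [hi']; exact h'⟩

variable (u : ℕ → X)

noncomputable def nu (A : Set X) : ℝ := ∑' n, (1/2:ℝ)^n * infDist (u n) A

lemma infDist_le_diam {w : X} {A : Set X} (hA : A.Nonempty) :
    infDist w A ≤ diam (univ : Set X) := by
  obtain ⟨a, ha⟩ := hA
  exact (infDist_le_dist_of_mem ha).trans
    (dist_le_diam_of_mem isCompact_univ.isBounded trivial trivial)

lemma nu_term_nonneg (A : Set X) (n : ℕ) : 0 ≤ (1/2:ℝ)^n * infDist (u n) A :=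
  mul_nonneg (pow_nonneg (by norm_num) n) infDist_nonneg

lemma nu_summable {A : Set X} (hA : A.Nonempty) :
    Summable (fun n => (1/2:ℝ)^n * infDist (u n) A) := by
  have hb : ∀ n, (1/2:ℝ)^n * infDist (u n) A ≤ (1/2:ℝ)^n * diam (univ : Set X) := by
    intro n
    exact mul_le_mul_of_nonneg_left (infDist_le_diam hA) (pow_nonneg (by norm_num) n)
  exact Summable.of_nonneg_of_le (nu_term_nonneg u A) hb (summable_geometric_two.mul_right _)

lemma nu_nonneg (A : Set X) : 0 ≤ nu u A :=
  tsum_nonneg (nu_term_nonneg u A)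

lemma nu_mono {A B : Set X} (hA : A.Nonempty) (h : A ⊆ B) : nu u B ≤ nu u A := by
  apply Summable.tsum_le_tsum _ (nu_summable u (hA.mono h)) (nu_summable u hA)
  intro n
  exact mul_le_mul_of_nonneg_left (infDist_le_infDist_of_subset h hA)
    (pow_nonneg (by norm_num) n)

lemma nu_strict (hu : DenseRange u) {A B : Set X} (hAcl : IsClosed A) (hA : A.Nonempty)
    (hAB : A ⊆ B) {b : X} (hbB : b ∈ B) (hbA : b ∉ A) : nu u B < nu u A := by
  have hε : 0 < infDist b A := (hAcl.notMem_iff_infDist_pos hA).mp hbA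
  set ε := infDist b A with hεdef
  obtain ⟨n, hn⟩ := hu.exists_dist_lt b (by positivity : (0:ℝ) < ε/3)
  have h1 : infDist (u n) B ≤ dist b (u n) := by
    calc infDist (u n) B ≤ dist (u n) b := infDist_le_dist_of_mem hbB
      _ = dist b (u n) := dist_comm _ _
  have h2 : ε - ε/3 ≤ infDist (u n) A := by
    have := infDist_le_infDist_add_dist (s := A) (x := b) (y := u n)
    linarith [le_of_lt hn]
  apply Summable.tsum_lt_tsum (i := n)
  · intro m
    exact mul_le_mul_of_nonneg_left (infDist_le_infDist_of_subset hAB hA)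
      (pow_nonneg (by norm_num) m)
  · apply mul_lt_mul_of_pos_left _ (by positivity : (0:ℝ) < (1/2)^n)
    calc infDist (u n) B ≤ dist b (u n) := h1
      _ < ε/3 := hn
      _ < ε - ε/3 := by linarith
      _ ≤ infDist (u n) A := h2
  · exact nu_summable u (hA.mono hAB)
  · exact nu_summable u hA

lemma nu_le_of {A B : Set X} (hA : A.Nonempty) (hB : B.Nonempty) (n₀ : ℕ) {η : ℝ}
    (hη : 0 ≤ η) (h : ∀ n, n < n₀ → infDist (u n) B ≤ infDist (u n) A + η) :
    nu u B ≤ nu u A + 2*η + diam (univ : Set X) * (1/2)^n₀ * 2 := by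
  set C := diam (univ : Set X) with hC
  have hC0 : 0 ≤ C := diam_nonneg
  have hsB := nu_summable u hB
  have hsA := nu_summable u hA
  have hsplit := Summable.sum_add_tsum_nat_add (f := fun n => (1/2:ℝ)^n * infDist (u n) B) n₀ hsB
  have hgeo : ∀ (k : ℕ), ∑ i ∈ Finset.range k, (1/2:ℝ)^i ≤ 2 := by
    intro k
    have := Summable.sum_le_tsum (f := fun n => (1/2:ℝ)^n) (Finset.range k)
      (fun i _ => pow_nonneg (by norm_num) i) summable_geometric_two
    rwa [tsum_geometric_two] at this
  have hhead : ∑ i ∈ Finset.range n₀, (1/2:ℝ)^i * infDist (u i) B ≤ nu u A + 2*η := by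
    have h1 : ∑ i ∈ Finset.range n₀, (1/2:ℝ)^i * infDist (u i) B
        ≤ ∑ i ∈ Finset.range n₀, ((1/2:ℝ)^i * infDist (u i) A + (1/2:ℝ)^i * η) := by
      apply Finset.sum_le_sum
      intro i hi
      have := h i (Finset.mem_range.mp hi)
      have hp : (0:ℝ) ≤ (1/2)^i := pow_nonneg (by norm_num) i
      nlinarith
    rw [Finset.sum_add_distrib] at h1
    have h2 : ∑ i ∈ Finset.range n₀, (1/2:ℝ)^i * infDist (u i) A ≤ nu u A :=
      Summable.sum_le_tsum _ (fun i _ => nu_term_nonneg u A i) hsA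
    have h3 : ∑ i ∈ Finset.range n₀, (1/2:ℝ)^i * η ≤ 2 * η := by
      rw [← Finset.sum_mul]
      nlinarith [hgeo n₀]
    linarith
  have htail : ∑' (i : ℕ), (1/2:ℝ)^(i+n₀) * infDist (u (i+n₀)) B ≤ C * (1/2)^n₀ * 2 := by
    have hsum2 : Summable (fun i : ℕ => (1/2:ℝ)^i * ((1/2:ℝ)^n₀ * C)) :=
      summable_geometric_two.mul_right _
    have hsum1 : Summable (fun i : ℕ => (1/2:ℝ)^(i+n₀) * infDist (u (i+n₀)) B) :=
      hsB.comp_injective (add_left_injective n₀)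
    have hpt : ∀ i : ℕ, (1/2:ℝ)^(i+n₀) * infDist (u (i+n₀)) B
        ≤ (1/2:ℝ)^i * ((1/2:ℝ)^n₀ * C) := by
      intro i
      rw [pow_add]
      have hp : (0:ℝ) ≤ (1/2:ℝ)^i := pow_nonneg (by norm_num) i
      have hq : (0:ℝ) ≤ (1/2:ℝ)^n₀ := pow_nonneg (by norm_num) n₀
      have hd := infDist_le_diam (w := u (i+n₀)) hB
      rw [← hC] at hd
      calc (1/2:ℝ)^i * (1/2:ℝ)^n₀ * infDist (u (i+n₀)) B
          ≤ (1/2:ℝ)^i * (1/2:ℝ)^n₀ * C :=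
            mul_le_mul_of_nonneg_left hd (mul_nonneg hp hq)
        _ = (1/2:ℝ)^i * ((1/2:ℝ)^n₀ * C) := by ring
    have h1 := Summable.tsum_le_tsum hpt hsum1 hsum2
    rw [tsum_mul_right, tsum_geometric_two] at h1
    nlinarith [h1]
  have hfin : nu u B = (∑ i ∈ Finset.range n₀, (1/2:ℝ)^i * infDist (u i) B)
      + ∑' (i : ℕ), (1/2:ℝ)^(i+n₀) * infDist (u (i+n₀)) B := by
    rw [nu, ← hsplit]
  linarith


lemma sUnion_nonempty_of {D : Set (Set X)} (hne : D.Nonempty)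
    (hTne : ∀ T ∈ D, T.Nonempty) : (⋃₀ D).Nonempty := by
  obtain ⟨T, hT⟩ := hne
  obtain ⟨t, ht⟩ := hTne T hT
  exact ⟨t, T, hT, ht⟩

lemma E1 {D : Set (Set X)} (hD : IsChain (· ⊆ ·) D) (hne : D.Nonempty)
    (hTne : ∀ T ∈ D, T.Nonempty) {ε : ℝ} (hε : 0 < ε) :
    ∃ T ∈ D, nu u T ≤ nu u (closure (⋃₀ D)) + ε := by
  classical
  set M := closure (⋃₀ D) with hM
  have hMne : M.Nonempty := (sUnion_nonempty_of hne hTne).mono subset_closure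
  set C := diam (univ : Set X) with hC
  have hC0 : (0:ℝ) ≤ C := diam_nonneg
  obtain ⟨n₀, hn₀⟩ : ∃ n₀ : ℕ, ((1:ℝ)/2)^n₀ < ε / (4*(C+1)) := by
    apply exists_pow_lt_of_lt_one (by positivity) (by norm_num)
  have htailbd : C * ((1:ℝ)/2)^n₀ * 2 < ε/2 := by
    have hp : (0:ℝ) ≤ ((1:ℝ)/2)^n₀ := pow_nonneg (by norm_num) n₀
    have hkey : (C+1) * (ε / (4*(C+1))) * 2 = ε/2 := by
      field_simp
      ring
    nlinarith [mul_lt_mul_of_pos_left hn₀ (by positivity : (0:ℝ) < C+1)]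
  set η := ε/100 with hη
  have hch : ∀ n : ℕ, ∃ T, T ∈ D ∧ (n < n₀ → infDist (u n) T ≤ infDist (u n) M + η) := by
    intro n
    by_cases hn : n < n₀
    · have h0 : infDist (u n) M = infDist (u n) (⋃₀ D) := infDist_closure
      have h1 : infDist (u n) (⋃₀ D) < infDist (u n) (⋃₀ D) + η := by
        have : (0:ℝ) < η := by positivity
        linarith
      obtain ⟨p, hp, hdp⟩ := (infDist_lt_iff (sUnion_nonempty_of hne hTne)).mp h1
      obtain ⟨T, hTD, hpT⟩ := hp
      refine ⟨T, hTD, fun _ => ?_⟩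
      have h2 : infDist (u n) T ≤ dist (u n) p := infDist_le_dist_of_mem hpT
      rw [h0]
      linarith
    · exact ⟨hne.choose, hne.choose_spec, fun h => absurd h hn⟩
  choose f hfD hf using hch
  obtain ⟨T, hTD, hsub⟩ := chain_ub hD n₀ f (fun i _ => hfD i)
  refine ⟨T, hTD, ?_⟩
  have hTne' : T.Nonempty := hTne T hTD
  have hkey : ∀ n, n < n₀ → infDist (u n) T ≤ infDist (u n) M + η := by
    intro n hn
    calc infDist (u n) T ≤ infDist (u n) (f n) :=
          infDist_le_infDist_of_subset (hsub n hn.le) (hTne _ (hfD n))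
      _ ≤ infDist (u n) M + η := hf n hn
  have := nu_le_of u hMne hTne' n₀ (by positivity) hkey
  have hη2 : 2*η ≤ ε/2 := by rw [hη]; linarith
  linarith

lemma infDist_sInter_le {D : Set (Set X)} (hD : IsChain (· ⊆ ·) D) (hne : D.Nonempty)
    (hcpt : ∀ T ∈ D, IsCompact T) (hTne : ∀ T ∈ D, T.Nonempty) (w : X) {c : ℝ}
    (hc : ∀ T ∈ D, infDist w T ≤ c) : infDist w (⋂₀ D) ≤ c := by
  haveI : Nonempty ↥D := hne.to_subtype
  set G : ↥D → Set X := fun T => {p ∈ (T : Set X) | dist w p ≤ c} with hG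
  have hGne : ∀ T : ↥D, (G T).Nonempty := by
    intro T
    obtain ⟨p, hp, hpe⟩ := (hcpt T T.2).exists_infDist_eq_dist (hTne T T.2) w
    exact ⟨p, hp, by rw [← hpe]; exact hc T T.2⟩
  have hGcpt : ∀ T : ↥D, IsCompact (G T) := by
    intro T
    apply (hcpt T T.2).inter_right
    exact isClosed_le (continuous_const.dist continuous_id) continuous_const
  have hGdir : Directed (fun x1 x2 => x1 ⊇ x2) G := by
    intro T₁ T₂
    rcases eq_or_ne (T₁ : Set X) (T₂ : Set X) with h | h
    · exact ⟨T₁, subset_refl _, fun p hp => ⟨h ▸ hp.1, hp.2⟩⟩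
    · rcases hD T₁.2 T₂.2 h with h' | h'
      · exact ⟨T₁, subset_refl _, fun p hp => ⟨h' hp.1, hp.2⟩⟩
      · exact ⟨T₂, fun p hp => ⟨h' hp.1, hp.2⟩, subset_refl _⟩
  obtain ⟨p, hp⟩ := IsCompact.nonempty_iInter_of_directed_nonempty_isCompact_isClosed
    G hGdir hGne hGcpt (fun T => (hGcpt T).isClosed)
  have hpD : p ∈ ⋂₀ D := by
    intro T hT
    exact (mem_iInter.mp hp ⟨T, hT⟩).1
  have hpd : dist w p ≤ c := (mem_iInter.mp hp (Classical.arbitrary _)).2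
  exact (infDist_le_dist_of_mem hpD).trans hpd

lemma sInter_nonempty_of {D : Set (Set X)} (hD : IsChain (· ⊆ ·) D) (hne : D.Nonempty)
    (hcpt : ∀ T ∈ D, IsCompact T) (hTne : ∀ T ∈ D, T.Nonempty) : (⋂₀ D).Nonempty := by
  haveI : Nonempty ↥D := hne.to_subtype
  have hdir : Directed (fun x1 x2 => x1 ⊇ x2) (fun T : ↥D => (T : Set X)) := by
    intro T₁ T₂
    rcases eq_or_ne (T₁ : Set X) (T₂ : Set X) with h | h
    · refine ⟨T₁, subset_refl _, ?_⟩
      show (T₁ : Set X) ⊆ (T₂ : Set X)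
      rw [h]
    · rcases hD T₁.2 T₂.2 h with h' | h'
      · exact ⟨T₁, subset_refl _, h'⟩
      · exact ⟨T₂, h', subset_refl _⟩
  obtain ⟨p, hp⟩ := IsCompact.nonempty_iInter_of_directed_nonempty_isCompact_isClosed
    _ hdir (fun T => hTne T T.2) (fun T => hcpt T T.2) (fun T => (hcpt T T.2).isClosed)
  exact ⟨p, fun T hT => mem_iInter.mp hp ⟨T, hT⟩⟩

lemma E2 {D : Set (Set X)} (hD : IsChain (· ⊆ ·) D) (hne : D.Nonempty)
    (hcpt : ∀ T ∈ D, IsCompact T) (hTne : ∀ T ∈ D, T.Nonempty) {ε : ℝ} (hε : 0 < ε) :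
    ∃ T ∈ D, nu u (⋂₀ D) ≤ nu u T + ε := by
  classical
  set N := ⋂₀ D with hN
  have hNne : N.Nonempty := sInter_nonempty_of hD hne hcpt hTne
  set C := diam (univ : Set X) with hC
  have hC0 : (0:ℝ) ≤ C := diam_nonneg
  obtain ⟨n₀, hn₀⟩ : ∃ n₀ : ℕ, ((1:ℝ)/2)^n₀ < ε / (4*(C+1)) := by
    apply exists_pow_lt_of_lt_one (by positivity) (by norm_num)
  have htailbd : C * ((1:ℝ)/2)^n₀ * 2 < ε/2 := by
    have hp : (0:ℝ) ≤ ((1:ℝ)/2)^n₀ := pow_nonneg (by norm_num) n₀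
    have hkey : (C+1) * (ε / (4*(C+1))) * 2 = ε/2 := by
      field_simp
      ring
    nlinarith [mul_lt_mul_of_pos_left hn₀ (by positivity : (0:ℝ) < C+1)]
  set η := ε/100 with hη
  have hηpos : (0:ℝ) < η := by positivity
  have hch : ∀ n : ℕ, ∃ T, T ∈ D ∧ (n < n₀ → infDist (u n) N ≤ infDist (u n) T + η) := by
    intro n
    by_cases hn : n < n₀
    · by_contra hcon
      push_neg at hcon
      have hc : ∀ T ∈ D, infDist (u n) T ≤ infDist (u n) N - η := by
        intro T hT
        have h := (hcon T hT).2
        linarith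
      have := infDist_sInter_le hD hne hcpt hTne (u n) hc
      linarith
    · exact ⟨hne.choose, hne.choose_spec, fun h => absurd h hn⟩
  choose f hfD hf using hch
  obtain ⟨T, hTD, hsub⟩ := chain_lb hD n₀ f (fun i _ => hfD i)
  refine ⟨T, hTD, ?_⟩
  have hTne' : T.Nonempty := hTne T hTD
  have hkey : ∀ n, n < n₀ → infDist (u n) N ≤ infDist (u n) T + η := by
    intro n hn
    have h1 : infDist (u n) (f n) ≤ infDist (u n) T :=
      infDist_le_infDist_of_subset (hsub n hn.le) hTne'
    linarith [hf n hn]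
  have := nu_le_of u hTne' hNne n₀ (by positivity) hkey
  have hη2 : 2*η ≤ ε/2 := by rw [hη]; linarith
  linarith


lemma sInter_preconn {D : Set (Set X)} (hD : IsChain (· ⊆ ·) D) (hne : D.Nonempty)
    (hcpt : ∀ T ∈ D, IsCompact T) (hTne : ∀ T ∈ D, T.Nonempty)
    (hTc : ∀ T ∈ D, IsPreconnected T) : IsPreconnected (⋂₀ D) := by
  set N := ⋂₀ D with hNdef
  have hNcl : IsClosed N := isClosed_sInter (fun T hT => (hcpt T hT).isClosed)
  have hNT : ∀ T ∈ D, N ⊆ T := fun T hT => sInter_subset_of_mem hT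
  intro o₁ o₂ ho₁ ho₂ hcov hne₁ hne₂
  by_contra hdis
  rw [Set.not_nonempty_iff_eq_empty] at hdis
  have hdis' : ∀ z, z ∈ N → z ∈ o₁ → z ∈ o₂ → False := by
    intro z h1 h2 h3
    exact absurd hdis (Set.Nonempty.ne_empty ⟨z, h1, h2, h3⟩)
  set A := N ∩ o₁ with hA
  set B := N ∩ o₂ with hB
  have hANo₂ : A = N \ o₂ := by
    apply Subset.antisymm
    · rintro z ⟨h1, h2⟩
      exact ⟨h1, fun h3 => hdis' z h1 h2 h3⟩
    · rintro z ⟨h1, h2⟩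
      rcases hcov h1 with h | h
      · exact ⟨h1, h⟩
      · exact absurd h h2
  have hBNo₁ : B = N \ o₁ := by
    apply Subset.antisymm
    · rintro z ⟨h1, h2⟩
      exact ⟨h1, fun h3 => hdis' z h1 h3 h2⟩
    · rintro z ⟨h1, h2⟩
      rcases hcov h1 with h | h
      · exact absurd h h2
      · exact ⟨h1, h⟩
  have hAcl : IsClosed A := by rw [hANo₂]; exact hNcl.sdiff ho₂
  have hBcl : IsClosed B := by rw [hBNo₁]; exact hNcl.sdiff ho₁
  have hAne : A.Nonempty := hne₁
  have hBne : B.Nonempty := hne₂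
  set u' := {z : X | infDist z A < infDist z B} with hu'
  set v' := {z : X | infDist z B < infDist z A} with hv'
  have hou' : IsOpen u' := isOpen_lt (continuous_infDist_pt A) (continuous_infDist_pt B)
  have hov' : IsOpen v' := isOpen_lt (continuous_infDist_pt B) (continuous_infDist_pt A)
  have hAu' : A ⊆ u' := by
    intro z hz
    have h1 : infDist z A = 0 := infDist_zero_of_mem hz
    have h2 : 0 < infDist z B := by
      rw [← hBcl.notMem_iff_infDist_pos hBne]
      intro hzB
      exact hdis' z hz.1 hz.2 hzB.2
    simpa [hu', h1] using h2
  have hBv' : B ⊆ v' := by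
    intro z hz
    have h1 : infDist z B = 0 := infDist_zero_of_mem hz
    have h2 : 0 < infDist z A := by
      rw [← hAcl.notMem_iff_infDist_pos hAne]
      intro hzA
      exact hdis' z hz.1 hzA.2 hz.2
    simpa [hv', h1] using h2
  have hex : ∃ T ∈ D, T ⊆ u' ∪ v' := by
    by_contra hcon
    push_neg at hcon
    haveI : Nonempty ↥D := hne.to_subtype
    set H : ↥D → Set X := fun T => (T : Set X) \ (u' ∪ v') with hH
    have hHne : ∀ T : ↥D, (H T).Nonempty := by
      intro T
      obtain ⟨p, hp1, hp2⟩ := Set.not_subset.mp (hcon T T.2)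
      exact ⟨p, hp1, hp2⟩
    have hHcl : ∀ T : ↥D, IsClosed (H T) :=
      fun T => (hcpt T T.2).isClosed.sdiff (hou'.union hov')
    have hHcpt : ∀ T : ↥D, IsCompact (H T) :=
      fun T => (hcpt T T.2).of_isClosed_subset (hHcl T) diff_subset
    have hHdir : Directed (fun x1 x2 => x1 ⊇ x2) H := by
      intro T₁ T₂
      rcases eq_or_ne (T₁ : Set X) (T₂ : Set X) with h | h
      · refine ⟨T₁, subset_refl _, ?_⟩
        intro p hp
        exact ⟨by rw [← h]; exact hp.1, hp.2⟩
      · rcases hD T₁.2 T₂.2 h with h' | h'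
        · exact ⟨T₁, subset_refl _, fun p hp => ⟨h' hp.1, hp.2⟩⟩
        · exact ⟨T₂, fun p hp => ⟨h' hp.1, hp.2⟩, subset_refl _⟩
    obtain ⟨p, hp⟩ := IsCompact.nonempty_iInter_of_directed_nonempty_isCompact_isClosed
      H hHdir hHne hHcpt hHcl
    have hpN : p ∈ N := fun T hT => (mem_iInter.mp hp ⟨T, hT⟩).1
    have hpno : p ∉ u' ∪ v' := (mem_iInter.mp hp (Classical.arbitrary _)).2
    rcases hcov hpN with h | h
    · exact hpno (Or.inl (hAu' ⟨hpN, h⟩))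
    · exact hpno (Or.inr (hBv' ⟨hpN, h⟩))
  obtain ⟨T, hTD, hTuv⟩ := hex
  obtain ⟨p₁, hp₁⟩ := hAne
  obtain ⟨p₂, hp₂⟩ := hBne
  obtain ⟨z, hzT, hzu, hzv⟩ := hTc T hTD u' v' hou' hov' hTuv
    ⟨p₁, hNT T hTD hp₁.1, hAu' hp₁⟩ ⟨p₂, hNT T hTD hp₂.1, hBv' hp₂⟩
  simp only [hu', mem_setOf_eq] at hzu
  simp only [hv', mem_setOf_eq] at hzv
  exact lt_asymm hzu hzv

lemma bump {N M : Set X} (hN : IsCompact N) (hNc : IsPreconnected N) (hM : IsCompact M)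
    (hMc : IsPreconnected M) (hMne : M.Nonempty) (hMN : M ⊆ N) {q : X} (hqN : q ∈ N)
    (hqM : q ∉ M) :
    ∃ P, IsCompact P ∧ IsPreconnected P ∧ M ⊆ P ∧ P ⊆ N ∧ M ≠ P ∧ q ∉ P := by
  classical
  have hδ : 0 < infDist q M := (hM.isClosed.notMem_iff_infDist_pos hMne).mp hqM
  set δ := infDist q M with hδdef
  set U := {z : X | infDist z M < δ/2} with hU
  have hUo : IsOpen U := isOpen_lt (continuous_infDist_pt M) continuous_const
  have hMU : M ⊆ U := by
    intro z hz
    have : infDist z M = 0 := infDist_zero_of_mem hz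
    simp only [hU, mem_setOf_eq, this]
    linarith
  have hUc : closure U ⊆ {z : X | infDist z M ≤ δ/2} :=
    closure_minimal (fun z hz => show infDist z M ≤ δ/2 from le_of_lt hz)
      (isClosed_le (continuous_infDist_pt M) continuous_const)
  have hqU : q ∉ closure U := by
    intro hq
    have := hUc hq
    simp only [mem_setOf_eq, ← hδdef] at this
    linarith
  set E := closure U ∩ N with hE
  have hEcl : IsClosed E := isClosed_closure.inter hN.isClosed
  have hEcpt : IsCompact E := hEcl.isCompact
  have hME : M ⊆ E := fun z hz => ⟨subset_closure (hMU hz), hMN hz⟩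
  obtain ⟨m, hm⟩ := hMne
  have hmE : m ∈ E := hME hm
  set P := connectedComponentIn E m with hP
  have hPE : P ⊆ E := connectedComponentIn_subset E m
  have hPc : IsPreconnected P := isPreconnected_connectedComponentIn
  have hMP : M ⊆ P := hMc.subset_connectedComponentIn hm hME
  have hqP : q ∉ P := fun h => hqU (hPE h).1
  have hPN : P ⊆ N := fun z hz => (hPE hz).2
  haveI : CompactSpace ↥E := isCompact_iff_compactSpace.mp hEcpt
  have hPimg : P = Subtype.val '' connectedComponent (⟨m, hmE⟩ : ↥E) :=
    connectedComponentIn_eq_image hmE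
  have hPcpt : IsCompact P := by
    rw [hPimg]
    exact (isClosed_connectedComponent.isCompact).image continuous_subtype_val
  refine ⟨P, hPcpt, hPc, hMP, hPN, ?_, hqP⟩
  -- it remains to prove M ≠ P; we show P meets the frontier of U
  have hfront : ∃ p ∈ P, p ∈ frontier U := by
    by_contra hPF
    push_neg at hPF
    set m' : ↥E := ⟨m, hmE⟩ with hm'
    have hcompF : ∀ e : ↥E, e ∈ connectedComponent m' → (e : X) ∉ frontier U := by
      intro e he
      apply hPF
      rw [hPimg]
      exact ⟨e, he, rfl⟩
    set Fr : Set ↥E := {e : ↥E | (e : X) ∈ frontier U} with hFr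
    have hFrcl : IsClosed Fr := isClosed_frontier.preimage continuous_subtype_val
    have hFrcpt : IsCompact Fr := hFrcl.isCompact
    have hcover : Fr ⊆ ⋃ (s : {s : Set ↥E // IsClopen s ∧ m' ∈ s}), (↑s : Set ↥E)ᶜ := by
      intro e he
      have : e ∉ connectedComponent m' := fun h => hcompF e h he
      rw [connectedComponent_eq_iInter_isClopen] at this
      simp only [mem_iInter] at this
      push_neg at this
      obtain ⟨s, hs⟩ := this
      exact mem_iUnion.mpr ⟨s, hs⟩
    obtain ⟨t, ht⟩ := hFrcpt.elim_finite_subcover _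
      (fun s : {s : Set ↥E // IsClopen s ∧ m' ∈ s} => s.2.1.isClosed.isOpen_compl) hcover
    set Z : Set ↥E := ⋂ s ∈ t, (s : Set ↥E) with hZ
    have hZclopen : IsClopen Z := isClopen_biInter_finset (fun s _ => s.2.1)
    have hmZ : m' ∈ Z := mem_iInter₂.mpr (fun s _ => s.2.2)
    have hZFr : ∀ e ∈ Z, e ∉ Fr := by
      intro e heZ heFr
      obtain ⟨s, hst⟩ := mem_iUnion₂.mp (ht heFr)
      exact hst.2 (mem_iInter₂.mp heZ s hst.1)
    set W := Subtype.val '' Z with hW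
    have hWcpt : IsCompact W := (hZclopen.isClosed.isCompact).image continuous_subtype_val
    have hWE : W ⊆ E := by
      rintro w ⟨e, _, rfl⟩
      exact e.2
    have hWFr : ∀ w ∈ W, w ∉ frontier U := by
      rintro w ⟨e, heZ, rfl⟩ hw
      exact hZFr e heZ hw
    have hWU : W ⊆ U := by
      intro w hw
      have h1 : w ∈ closure U := (hWE hw).1
      by_contra hwu
      apply hWFr w hw
      rw [hUo.frontier_eq]
      exact ⟨h1, hwu⟩
    obtain ⟨O, hOo, hOZ⟩ := isOpen_induced_iff.mp hZclopen.isOpen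
    have hWeq : W = O ∩ U ∩ N := by
      apply Subset.antisymm
      · rintro w ⟨e, heZ, rfl⟩
        refine ⟨⟨?_, hWU ⟨e, heZ, rfl⟩⟩, e.2.2⟩
        rw [← hOZ] at heZ
        exact heZ
      · rintro w ⟨⟨hwO, hwU⟩, hwN⟩
        have hwE : w ∈ E := ⟨subset_closure hwU, hwN⟩
        refine ⟨⟨w, hwE⟩, ?_, rfl⟩
        rw [← hOZ]
        exact hwO
    have hmW : m ∈ W := ⟨m', hmZ, rfl⟩
    obtain ⟨z, hzN, hz₁, hz₂⟩ := hNc (O ∩ U) Wᶜ (hOo.inter hUo)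
      hWcpt.isClosed.isOpen_compl
      (by
        intro z hz
        by_cases hzW : z ∈ W
        · left
          have := hWeq ▸ hzW
          exact ⟨this.1.1, this.1.2⟩
        · right; exact hzW)
      ⟨m, hMN hm, by
        have := hWeq ▸ hmW
        exact ⟨this.1.1, this.1.2⟩⟩
      ⟨q, hqN, fun hqW => hqU (hWE hqW).1⟩
    exact hz₂ (hWeq.symm ▸ (⟨⟨hz₁.1, hz₁.2⟩, hzN⟩ : z ∈ O ∩ U ∩ N))
  obtain ⟨p, hpP, hpF⟩ := hfront
  intro hMPeq
  have hpM : p ∈ M := hMPeq ▸ hpP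
  have : p ∈ U := hMU hpM
  rw [hUo.frontier_eq] at hpF
  exact hpF.2 this

end BlockedAux
section Core

variable {X : Type*} [MetricSpace X] [CompactSpace X] [ConnectedSpace X] [Nonempty X]

lemma blocked_core (x y : X) (u v : Set X) (hu : IsOpen u) (hv : IsOpen v)
    (huv : u ∩ v = ∅) (hS : BlockedSet x ⊆ u ∪ v) (hxu : x ∈ u)
    (hyv : y ∈ v) (hy : y ∈ BlockedSet x) : False := by
  classical
  obtain ⟨w, hw⟩ : ∃ w : ℕ → X, DenseRange w := ⟨denseSeq X, denseRange_denseSeq X⟩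
  have hxy : x ≠ y := by
    intro h
    have : x ∈ u ∩ v := ⟨hxu, h ▸ hyv⟩
    rw [huv] at this
    exact this
  set PP : Set (Set X) := {K | IsCompact K ∧ IsPreconnected K ∧ y ∈ K ∧ x ∉ K} with hPP
  have hyPP : ({y} : Set X) ∈ PP :=
    ⟨isCompact_singleton, isPreconnected_singleton, rfl,
      fun h => hxy (mem_singleton_iff.mp h)⟩
  have hchain0 : IsChain (fun A B : ↥PP => (A : Set X) ⊆ B) {(⟨{y}, hyPP⟩ : ↥PP)} := by
    intro a ha b hb hne
    rw [mem_singleton_iff] at ha hb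
    exact absurd (ha.trans hb.symm) hne
  obtain ⟨CC, hCCmax, hCCy⟩ := hchain0.exists_maxChain
  have hchain := hCCmax.1
  have hmem : ∀ (P : Set X) (hP : P ∈ PP),
      (∀ A ∈ CC, (A : Set X) ⊆ P ∨ P ⊆ (A : Set X)) → (⟨P, hP⟩ : ↥PP) ∈ CC := by
    intro P hP hcomp
    by_contra hPC
    have hins : IsChain (fun A B : ↥PP => (A : Set X) ⊆ B) (insert ⟨P, hP⟩ CC) :=
      hchain.insert (fun B hB _ => (hcomp B hB).symm)
    have heq := hCCmax.2 hins (subset_insert _ _)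
    exact hPC (heq ▸ mem_insert _ _)
  have hyCC : (⟨{y}, hyPP⟩ : ↥PP) ∈ CC := hCCy rfl
  set W : Set X := ⋃ A ∈ CC, (A : Set X) with hWdef
  have hmemW : ∀ A ∈ CC, (A : Set X) ⊆ W := by
    intro A hA
    exact subset_biUnion_of_mem (u := fun A : ↥PP => (A : Set X)) hA
  have hyW : y ∈ W := hmemW _ hyCC rfl
  have hchainSets : ∀ {T T' : Set X}, (∃ A : ↥PP, A ∈ CC ∧ (A : Set X) = T) →
      (∃ A : ↥PP, A ∈ CC ∧ (A : Set X) = T') → T ⊆ T' ∨ T' ⊆ T := by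
    rintro T T' ⟨A, hA, rfl⟩ ⟨B, hB, rfl⟩
    rcases eq_or_ne (A : Set X) (B : Set X) with h | h
    · exact Or.inl (h ▸ Subset.rfl)
    · exact hchain hA hB (fun e => h (congrArg _ e))
  -- Step 1 : W ⊆ BlockedSet x
  have hstep1 : W ⊆ BlockedSet x := by
    intro z hzW
    by_contra hz
    obtain ⟨A₀, hA₀CC, hzA₀⟩ : ∃ A₀ : ↥PP, A₀ ∈ CC ∧ z ∈ (A₀ : Set X) := by
      simpa [hWdef] using hzW
    have hesc : ∃ γ : unitInterval → NonemptyCompacts X, Continuous γ ∧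
        (γ 0 : Set X) = {z} ∧ (γ 1 : Set X) = univ ∧
        ∀ t : unitInterval, t < 1 → x ∉ (γ t : Set X) := by
      by_contra hno
      apply hz
      intro γ hc h0 h1
      by_contra hnot
      push_neg at hnot
      refine hno ⟨γ, hc, h0, h1, fun t ht hxt => ?_⟩
      have h2 := hnot t ht
      have hmem2 : x ∈ (γ t : Set X) ∩ {x} := ⟨hxt, rfl⟩
      rw [h2] at hmem2
      exact hmem2
    obtain ⟨γz, hγzc, hγz0, hγz1, hγzx⟩ := hesc
    have hA₀cpt : IsCompact (A₀ : Set X) := A₀.2.1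
    have hA₀pre : IsPreconnected (A₀ : Set X) := A₀.2.2.1
    have hyA₀ : y ∈ (A₀ : Set X) := A₀.2.2.2.1
    have hxA₀ : x ∉ (A₀ : Set X) := A₀.2.2.2.2
    set ν : Set X → ℝ := BlockedAux.nu w with hν
    set a := ν ({y} : Set X) with ha
    set b := ν (A₀ : Set X) with hb
    have hba : b ≤ a :=
      BlockedAux.nu_mono w (singleton_nonempty y) (singleton_subset_iff.mpr hyA₀)
    have hUNIQ : ∀ A B : ↥PP, A ∈ CC → B ∈ CC → ν (A : Set X) = ν (B : Set X) →
        (A : Set X) = (B : Set X) := by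
      intro A B hA hB hnu
      rcases eq_or_ne (A : Set X) (B : Set X) with h | h
      · exact h
      · exfalso
        rcases hchain hA hB (fun e => h (congrArg _ e)) with h' | h'
        · obtain ⟨p, hpB, hpA⟩ := exists_of_ssubset (h'.ssubset_of_ne h)
          have := BlockedAux.nu_strict w hw A.2.1.isClosed ⟨y, A.2.2.2.1⟩ h' hpB hpA
          rw [← hν] at this
          linarith
        · obtain ⟨p, hpB, hpA⟩ := exists_of_ssubset (h'.ssubset_of_ne (Ne.symm h))
          have := BlockedAux.nu_strict w hw B.2.1.isClosed ⟨y, B.2.2.2.1⟩ h' hpB hpA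
          rw [← hν] at this
          linarith
    have hrange : ∀ A : ↥PP, A ∈ CC → (A : Set X) ⊆ (A₀ : Set X) →
        ν (A : Set X) ∈ Icc b a := by
      intro A _ hAA₀
      constructor
      · exact BlockedAux.nu_mono w ⟨y, A.2.2.2.1⟩ hAA₀
      · exact BlockedAux.nu_mono w (singleton_nonempty y)
          (singleton_subset_iff.mpr A.2.2.2.1)
    have hSURJ : ∀ r ∈ Icc b a, ∃ A : ↥PP, A ∈ CC ∧ (A : Set X) ⊆ (A₀ : Set X) ∧
        ν (A : Set X) = r := by
      intro r hr
      by_contra hcon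
      push_neg at hcon
      rcases eq_or_lt_of_le hr.2 with hra | hra
      · exact hcon ⟨{y}, hyPP⟩ hyCC (singleton_subset_iff.mpr hyA₀) (by rw [← ha, hra])
      rcases eq_or_lt_of_le hr.1 with hrb | hrb
      · exact hcon A₀ hA₀CC Subset.rfl (by rw [← hb, ← hrb])
      set Dsmall : Set (Set X) :=
        {T | ∃ A : ↥PP, A ∈ CC ∧ (A : Set X) = T ∧ T ⊆ (A₀ : Set X) ∧ r < ν T} with hDs
      set Dbig : Set (Set X) :=
        {T | ∃ A : ↥PP, A ∈ CC ∧ (A : Set X) = T ∧ T ⊆ (A₀ : Set X) ∧ ν T < r} with hDb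
      have hysmall : ({y} : Set X) ∈ Dsmall :=
        ⟨⟨{y}, hyPP⟩, hyCC, rfl, singleton_subset_iff.mpr hyA₀, by rw [← ha]; exact hra⟩
      have hbigA₀ : (A₀ : Set X) ∈ Dbig := ⟨A₀, hA₀CC, rfl, Subset.rfl, by rw [← hb]; exact hrb⟩
      have hDsmem : ∀ T ∈ Dsmall,
          IsCompact T ∧ y ∈ T ∧ IsPreconnected T ∧ T ⊆ (A₀ : Set X) := by
        rintro T ⟨A, hA, rfl, hsub, _⟩
        exact ⟨A.2.1, A.2.2.2.1, A.2.2.1, hsub⟩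
      have hDbmem : ∀ T ∈ Dbig,
          IsCompact T ∧ y ∈ T ∧ IsPreconnected T ∧ T ⊆ (A₀ : Set X) := by
        rintro T ⟨A, hA, rfl, hsub, _⟩
        exact ⟨A.2.1, A.2.2.2.1, A.2.2.1, hsub⟩
      have hDsch : IsChain (· ⊆ ·) Dsmall := by
        rintro T hT T' hT' hne
        obtain ⟨A, hA, rfl, _, _⟩ := hT
        obtain ⟨B, hB, rfl, _, _⟩ := hT'
        exact hchainSets ⟨A, hA, rfl⟩ ⟨B, hB, rfl⟩
      have hDbch : IsChain (· ⊆ ·) Dbig := by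
        rintro T hT T' hT' hne
        obtain ⟨A, hA, rfl, _, _⟩ := hT
        obtain ⟨B, hB, rfl, _, _⟩ := hT'
        exact hchainSets ⟨A, hA, rfl⟩ ⟨B, hB, rfl⟩
      -- the small side limit M
      set M : Set X := closure (⋃₀ Dsmall) with hM
      have hMcpt : IsCompact M := isClosed_closure.isCompact
      have hMsubA₀ : M ⊆ (A₀ : Set X) := by
        apply closure_minimal _ hA₀cpt.isClosed
        exact sUnion_subset (fun T hT => (hDsmem T hT).2.2.2)
      have hMpre : IsPreconnected M := by
        apply IsPreconnected.closure
        exact isPreconnected_sUnion y _ (fun T hT => (hDsmem T hT).2.1)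
          (fun T hT => (hDsmem T hT).2.2.1)
      have hyM : y ∈ M := subset_closure (mem_sUnion.mpr ⟨{y}, hysmall, rfl⟩)
      have hMPP : M ∈ PP := ⟨hMcpt, hMpre, hyM, fun hxM => hxA₀ (hMsubA₀ hxM)⟩
      have hMcomp : ∀ A ∈ CC, (A : Set X) ⊆ M ∨ M ⊆ (A : Set X) := by
        intro A hA
        by_cases hex : ∃ T ∈ Dsmall, (A : Set X) ⊆ T
        · obtain ⟨T, hT, hAT⟩ := hex
          exact Or.inl (hAT.trans ((subset_sUnion_of_mem hT).trans subset_closure))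
        · push_neg at hex
          right
          apply closure_minimal _ A.2.1.isClosed
          apply sUnion_subset
          intro T hT
          obtain ⟨B, hB, rfl, _, _⟩ := hT
          rcases hchainSets ⟨B, hB, rfl⟩ ⟨A, hA, rfl⟩ with h | h
          · exact h
          · exact absurd h (hex _ ⟨B, hB, rfl, ‹_›, ‹_›⟩)
      have hMCC : (⟨M, hMPP⟩ : ↥PP) ∈ CC := hmem M hMPP hMcomp
      have hνM : r ≤ ν M := by
        by_contra hlt
        push_neg at hlt
        obtain ⟨T, hT, hle⟩ := BlockedAux.E1 w (D := Dsmall) hDsch ⟨_, hysmall⟩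
          (fun T hT => ⟨y, (hDsmem T hT).2.1⟩) (show (0:ℝ) < (r - ν M)/2 by linarith)
        obtain ⟨A, hA, rfl, hsub, hgt⟩ := hT
        rw [← hM, ← hν] at hle
        linarith
      have hMsmall : M ∈ Dsmall := ⟨⟨M, hMPP⟩, hMCC, rfl, hMsubA₀,
        lt_of_le_of_ne hνM (Ne.symm (hcon ⟨M, hMPP⟩ hMCC hMsubA₀))⟩
      -- the big side limit N
      set N : Set X := ⋂₀ Dbig with hN
      have hNcpt : IsCompact N :=
        (isClosed_sInter (fun T hT => (hDbmem T hT).1.isClosed)).isCompact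
      have hNsubA₀ : N ⊆ (A₀ : Set X) := sInter_subset_of_mem hbigA₀
      have hyN : y ∈ N := fun T hT => (hDbmem T hT).2.1
      have hNpre : IsPreconnected N :=
        BlockedAux.sInter_preconn hDbch ⟨_, hbigA₀⟩ (fun T hT => (hDbmem T hT).1)
          (fun T hT => ⟨y, (hDbmem T hT).2.1⟩) (fun T hT => (hDbmem T hT).2.2.1)
      have hNPP : N ∈ PP := ⟨hNcpt, hNpre, hyN, fun hxN => hxA₀ (hNsubA₀ hxN)⟩
      have hNcomp : ∀ A ∈ CC, (A : Set X) ⊆ N ∨ N ⊆ (A : Set X) := by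
        intro A hA
        by_cases hex : ∃ T ∈ Dbig, ¬ (A : Set X) ⊆ T
        · obtain ⟨T, hT, hAT⟩ := hex
          have hT' := hT
          obtain ⟨B, hB, rfl, _, _⟩ := hT
          rcases hchainSets ⟨B, hB, rfl⟩ ⟨A, hA, rfl⟩ with h | h
          · exact Or.inr ((sInter_subset_of_mem hT').trans h)
          · exact absurd h hAT
        · push_neg at hex
          exact Or.inl (subset_sInter (fun T hT => hex T hT))
      have hNCC : (⟨N, hNPP⟩ : ↥PP) ∈ CC := hmem N hNPP hNcomp
      have hνN : ν N ≤ r := by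
        by_contra hlt
        push_neg at hlt
        obtain ⟨T, hT, hle⟩ := BlockedAux.E2 w (D := Dbig) hDbch ⟨_, hbigA₀⟩
          (fun T hT => (hDbmem T hT).1) (fun T hT => ⟨y, (hDbmem T hT).2.1⟩)
          (show (0:ℝ) < (ν N - r)/2 by linarith)
        obtain ⟨A, hA, rfl, hsub, hltT⟩ := hT
        rw [← hN, ← hν] at hle
        linarith
      have hNbig : N ∈ Dbig := ⟨⟨N, hNPP⟩, hNCC, rfl, hNsubA₀,
        lt_of_le_of_ne hνN (hcon ⟨N, hNPP⟩ hNCC hNsubA₀)⟩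
      have hMN : M ⊆ N := by
        apply subset_sInter
        intro T hT
        have hTsmM : T ⊆ M ∨ M ⊆ T := hchainSets
          ⟨hT.choose, hT.choose_spec.1, hT.choose_spec.2.1⟩ ⟨⟨M, hMPP⟩, hMCC, rfl⟩
        rcases hTsmM with h | h
        · exfalso
          obtain ⟨A, hA, rfl, hsub, hTlt⟩ := hT
          have := BlockedAux.nu_mono w ⟨y, A.2.2.2.1⟩ h
          rw [← hν] at this
          obtain ⟨B, hB, hBe, hsubM, hMgt⟩ := hMsmall
          linarith
        · exact h
      have hMneN : M ≠ N := by
        intro h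
        obtain ⟨A, hA, hAe, hsub, hMgt⟩ := hMsmall
        obtain ⟨B, hB, hBe, hsubN, hNlt⟩ := hNbig
        rw [h] at hMgt
        linarith
      obtain ⟨q, hqN, hqM⟩ := exists_of_ssubset (hMN.ssubset_of_ne hMneN)
      obtain ⟨P, hPcpt, hPpre, hMP, hPN, hMneP, hqP⟩ :=
        BlockedAux.bump hNcpt hNpre hMcpt hMpre ⟨y, hyM⟩ hMN hqN hqM
      have hPPP : P ∈ PP := ⟨hPcpt, hPpre, hMP hyM, fun hxP => hxA₀ (hNsubA₀ (hPN hxP))⟩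
      have hPcomp : ∀ A ∈ CC, (A : Set X) ⊆ P ∨ P ⊆ (A : Set X) := by
        intro A hA
        rcases hchainSets ⟨A, hA, rfl⟩ ⟨⟨M, hMPP⟩, hMCC, rfl⟩ with h1 | h1
        · exact Or.inl (h1.trans hMP)
        · rcases hchainSets ⟨A, hA, rfl⟩ ⟨⟨N, hNPP⟩, hNCC, rfl⟩ with h2 | h2
          · rcases lt_or_gt_of_ne (hcon A hA (h2.trans hNsubA₀)) with h3 | h3
            · have hAbig : (A : Set X) ∈ Dbig := ⟨A, hA, rfl, h2.trans hNsubA₀, h3⟩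
              exact Or.inr (hPN.trans (sInter_subset_of_mem hAbig))
            · have hAsmall : (A : Set X) ∈ Dsmall := ⟨A, hA, rfl, h2.trans hNsubA₀, h3⟩
              exact Or.inl (((subset_sUnion_of_mem hAsmall).trans
                  subset_closure).trans hMP)
          · exact Or.inr (hPN.trans h2)
      have hPCC : (⟨P, hPPP⟩ : ↥PP) ∈ CC := hmem P hPPP hPcomp
      have hPsubA₀ : P ⊆ (A₀ : Set X) := hPN.trans hNsubA₀
      rcases lt_or_gt_of_ne (hcon ⟨P, hPPP⟩ hPCC hPsubA₀) with h3 | h3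
      · have hPbig : P ∈ Dbig := ⟨⟨P, hPPP⟩, hPCC, rfl, hPsubA₀, h3⟩
        exact hqP (sInter_subset_of_mem hPbig hqN)
      · have hPsmall : P ∈ Dsmall := ⟨⟨P, hPPP⟩, hPCC, rfl, hPsubA₀, h3⟩
        have hPM : P ⊆ M := (subset_sUnion_of_mem hPsmall).trans subset_closure
        exact hMneP (Subset.antisymm hMP hPM)
    -- the parametrized chain from {y} to A₀
    set LSet : ℝ → Set X :=
      fun r => if h : r ∈ Icc b a then ((hSURJ r h).choose : Set X) else (A₀ : Set X)
      with hLSet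
    have hLprops : ∀ r, (∃ A : ↥PP, A ∈ CC ∧ (A : Set X) = LSet r) ∧
        LSet r ⊆ (A₀ : Set X) ∧ (r ∈ Icc b a → ν (LSet r) = r) := by
      intro r
      by_cases h : r ∈ Icc b a
      · have hspec := (hSURJ r h).choose_spec
        rw [hLSet]
        simp only [dif_pos h]
        exact ⟨⟨(hSURJ r h).choose, hspec.1, rfl⟩, hspec.2.1, fun _ => hspec.2.2⟩
      · rw [hLSet]
        simp only [dif_neg h]
        exact ⟨⟨A₀, hA₀CC, rfl⟩, Subset.rfl, fun hc => absurd hc h⟩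
    have hLmem : ∀ r, ∃ A : ↥PP, A ∈ CC ∧ (A : Set X) = LSet r := fun r => (hLprops r).1
    have hLsub : ∀ r, LSet r ⊆ (A₀ : Set X) := fun r => (hLprops r).2.1
    have hLν : ∀ r, r ∈ Icc b a → ν (LSet r) = r := fun r hr => (hLprops r).2.2 hr
    have hLcpt : ∀ r, IsCompact (LSet r) := by
      intro r
      obtain ⟨A, _, hAe⟩ := hLmem r
      exact hAe ▸ A.2.1
    have hLpre : ∀ r, IsPreconnected (LSet r) := by
      intro r
      obtain ⟨A, _, hAe⟩ := hLmem r
      exact hAe ▸ A.2.2.1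
    have hLy : ∀ r, y ∈ LSet r := by
      intro r
      obtain ⟨A, _, hAe⟩ := hLmem r
      exact hAe ▸ A.2.2.2.1
    have hLx : ∀ r, x ∉ LSet r := fun r hx => hxA₀ (hLsub r hx)
    have hLne : ∀ r, (LSet r).Nonempty := fun r => ⟨y, hLy r⟩
    have hLmono : ∀ r, r ∈ Icc b a → ∀ s, s ∈ Icc b a → r ≤ s → LSet s ⊆ LSet r := by
      intro r hr s hs hrs
      rcases hchainSets (hLmem s) (hLmem r) with h | h
      · exact h
      · have h2 := BlockedAux.nu_mono w (hLne r) h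
        rw [← hν, hLν r hr, hLν s hs] at h2
        have h3 : r = s := le_antisymm hrs h2
        rw [h3]
    have hLa : LSet a = ({y} : Set X) := by
      obtain ⟨A, hACC, hAe⟩ := hLmem a
      have h1 : ν (LSet a) = a := hLν a ⟨hba, le_refl a⟩
      have h2 := hUNIQ A ⟨{y}, hyPP⟩ hACC hyCC (by rw [hAe, h1])
      rw [← hAe]
      exact h2
    have hLb : LSet b = (A₀ : Set X) := by
      obtain ⟨A, hACC, hAe⟩ := hLmem b
      have h1 : ν (LSet b) = b := hLν b ⟨le_refl b, hba⟩
      have h2 := hUNIQ A A₀ hACC hA₀CC (by rw [hAe, h1])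
      rw [← hAe]
      exact h2
    -- right order-continuity
    have hR1 : ∀ r, b ≤ r → r < a → LSet r = closure (⋃ s ∈ Ioc r a, LSet s) := by
      intro r hbr hra
      set M1 : Set X := closure (⋃ s ∈ Ioc r a, LSet s) with hM1
      have hM1subL : M1 ⊆ LSet r := by
        apply closure_minimal _ (hLcpt r).isClosed
        apply iUnion₂_subset
        intro s hs
        exact hLmono r ⟨hbr, hra.le⟩ s ⟨hbr.trans hs.1.le, hs.2⟩ hs.1.le
      have hyM1 : y ∈ M1 :=
        subset_closure (mem_biUnion (show a ∈ Ioc r a from ⟨hra, le_refl a⟩) (hLy a))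
      have hM1pre : IsPreconnected M1 := by
        apply IsPreconnected.closure
        have himg : (⋃ s ∈ Ioc r a, LSet s) = ⋃₀ ((fun s => LSet s) '' (Ioc r a)) := by
          rw [sUnion_image]
        rw [himg]
        apply isPreconnected_sUnion y
        · rintro S ⟨s, _, rfl⟩
          exact hLy s
        · rintro S ⟨s, _, rfl⟩
          exact hLpre s
      have hM1PP : M1 ∈ PP :=
        ⟨isClosed_closure.isCompact, hM1pre, hyM1, fun hxM => hLx r (hM1subL hxM)⟩
      have hM1comp : ∀ A ∈ CC, (A : Set X) ⊆ M1 ∨ M1 ⊆ (A : Set X) := by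
        intro A hA
        by_cases hex : ∃ s ∈ Ioc r a, (A : Set X) ⊆ LSet s
        · obtain ⟨s, hs, h⟩ := hex
          exact Or.inl (h.trans ((subset_biUnion_of_mem hs).trans subset_closure))
        · push_neg at hex
          right
          apply closure_minimal _ A.2.1.isClosed
          apply iUnion₂_subset
          intro s hs
          rcases hchainSets (hLmem s) ⟨A, hA, rfl⟩ with h | h
          · exact h
          · exact absurd h (hex s hs)
      have hM1CC := hmem M1 hM1PP hM1comp
      have hM1sub : M1 ⊆ (A₀ : Set X) := hM1subL.trans (hLsub r)
      have hr1 : ν M1 ∈ Icc b a := hrange ⟨M1, hM1PP⟩ hM1CC hM1sub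
      have hM1eq : M1 = LSet (ν M1) := by
        obtain ⟨B, hBCC, hBe⟩ := hLmem (ν M1)
        have h2 := hUNIQ ⟨M1, hM1PP⟩ B hM1CC hBCC (by rw [hBe, hLν _ hr1])
        have h2' : M1 = (B : Set X) := h2
        exact h2'.trans hBe
      have hge : r ≤ ν M1 := by
        have h1 := BlockedAux.nu_mono w ⟨y, hyM1⟩ hM1subL
        rw [← hν, hLν r ⟨hbr, hra.le⟩] at h1
        exact h1
      rcases eq_or_lt_of_le hge with heq | hlt
      · rw [hM1eq, ← heq]
      · exfalso
        set s0 := (r + ν M1)/2 with hs0def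
        have hs0 : s0 ∈ Ioc r a := ⟨by rw [hs0def]; linarith, by rw [hs0def]; linarith [hr1.2]⟩
        have h1 : LSet s0 ⊆ M1 := (subset_biUnion_of_mem hs0).trans subset_closure
        have h2 : M1 ⊆ LSet s0 := by
          rw [hM1eq]
          exact hLmono s0 ⟨hbr.trans hs0.1.le, hs0.2⟩ (ν M1) hr1 (by rw [hs0def]; linarith)
        have hseq : LSet s0 = LSet (ν M1) := by
          rw [← hM1eq]
          exact Subset.antisymm h1 h2
        have hv1 : ν (LSet s0) = s0 := hLν s0 ⟨hbr.trans hs0.1.le, hs0.2⟩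
        have hv2 : ν (LSet (ν M1)) = ν M1 := hLν _ hr1
        rw [hseq, hv2] at hv1
        rw [hs0def] at hv1
        linarith
    -- left order-continuity
    have hL2 : ∀ r, b < r → r ≤ a → LSet r = ⋂ s ∈ Ico b r, LSet s := by
      intro r hbr hra
      set N1 : Set X := ⋂ s ∈ Ico b r, LSet s with hN1
      have hLN1 : LSet r ⊆ N1 :=
        subset_iInter₂ fun s hs =>
          hLmono s ⟨hs.1, hs.2.le.trans hra⟩ r ⟨hbr.le, hra⟩ hs.2.le
      have hN1cpt : IsCompact N1 :=
        (isClosed_iInter (fun s => isClosed_iInter (fun _ => (hLcpt s).isClosed))).isCompact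
      have hyN1 : y ∈ N1 := mem_iInter₂.mpr fun s _ => hLy s
      have himg : N1 = ⋂₀ ((fun s => LSet s) '' (Ico b r)) := by
        rw [sInter_image, hN1]
      have hbIco : b ∈ Ico b r := ⟨le_refl b, hbr⟩
      have hN1pre : IsPreconnected N1 := by
        rw [himg]
        apply BlockedAux.sInter_preconn
        · rintro T ⟨s, _, rfl⟩ T' ⟨s', _, rfl⟩ _
          exact hchainSets (hLmem s) (hLmem s')
        · exact ⟨LSet b, ⟨b, hbIco, rfl⟩⟩
        · rintro T ⟨s, _, rfl⟩
          exact hLcpt s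
        · rintro T ⟨s, _, rfl⟩
          exact hLne s
        · rintro T ⟨s, _, rfl⟩
          exact hLpre s
      have hN1sub : N1 ⊆ (A₀ : Set X) := (iInter₂_subset b hbIco).trans (hLsub b)
      have hN1PP : N1 ∈ PP := ⟨hN1cpt, hN1pre, hyN1, fun hxN => hxA₀ (hN1sub hxN)⟩
      have hN1comp : ∀ A ∈ CC, (A : Set X) ⊆ N1 ∨ N1 ⊆ (A : Set X) := by
        intro A hA
        by_cases hex : ∃ s ∈ Ico b r, ¬ (A : Set X) ⊆ LSet s
        · obtain ⟨s, hs, h⟩ := hex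
          rcases hchainSets (hLmem s) ⟨A, hA, rfl⟩ with h' | h'
          · exact Or.inr ((iInter₂_subset s hs).trans h')
          · exact absurd h' h
        · push_neg at hex
          exact Or.inl (subset_iInter₂ fun s hs => hex s hs)
      have hN1CC := hmem N1 hN1PP hN1comp
      have hrN : ν N1 ∈ Icc b a := hrange ⟨N1, hN1PP⟩ hN1CC hN1sub
      have hN1eq : N1 = LSet (ν N1) := by
        obtain ⟨B, hBCC, hBe⟩ := hLmem (ν N1)
        have h2 := hUNIQ ⟨N1, hN1PP⟩ B hN1CC hBCC (by rw [hBe, hLν _ hrN])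
        have h2' : N1 = (B : Set X) := h2
        exact h2'.trans hBe
      have hle : ν N1 ≤ r := by
        have h1 := BlockedAux.nu_mono w (hLne r) hLN1
        rw [← hν, hLν r ⟨hbr.le, hra⟩] at h1
        exact h1
      rcases eq_or_lt_of_le hle with heq | hlt
      · rw [hN1eq, heq]
      · exfalso
        set s0 := (ν N1 + r)/2 with hs0def
        have hs0 : s0 ∈ Ico b r :=
          ⟨by rw [hs0def]; linarith [hrN.1], by rw [hs0def]; linarith⟩
        have h1 : N1 ⊆ LSet s0 := iInter₂_subset s0 hs0
        have h2 : LSet s0 ⊆ N1 := by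
          rw [hN1eq]
          exact hLmono (ν N1) hrN s0 ⟨hs0.1, hs0.2.le.trans hra⟩ (by rw [hs0def]; linarith)
        have hseq : LSet s0 = LSet (ν N1) := by
          rw [← hN1eq]
          exact Subset.antisymm h2 h1
        have hv1 : ν (LSet s0) = s0 := hLν s0 ⟨hs0.1, hs0.2.le.trans hra⟩
        have hv2 : ν (LSet (ν N1)) = ν N1 := hLν _ hrN
        rw [hseq, hv2] at hv1
        rw [hs0def] at hv1
        linarith
    -- metric right-continuity
    have hRight : ∀ r, r ∈ Ico b a → ∀ ε : ℝ, 0 < ε →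
        ∃ s0, s0 ∈ Ioc r a ∧ hausdorffDist (LSet s0) (LSet r) < ε := by
      intro r hr ε hε
      by_contra hcon
      push_neg at hcon
      have hfar : ∀ s, s ∈ Ioc r a → ∃ p ∈ LSet r, ε/2 < infDist p (LSet s) := by
        intro s hs
        by_contra hc2
        push_neg at hc2
        have hle : hausdorffDist (LSet s) (LSet r) ≤ ε/2 := by
          apply hausdorffDist_le_of_infDist (by linarith)
          · intro p hp
            have hp' : p ∈ LSet r :=
              hLmono r ⟨hr.1, hr.2.le⟩ s ⟨hr.1.trans hs.1.le, hs.2⟩ hs.1.le hp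
            rw [infDist_zero_of_mem hp']
            linarith
          · intro p hp
            exact hc2 p hp
        linarith [hcon s hs]
      choose p hpmem hpfar using hfar
      set sq : ℕ → ℝ := fun n => r + (a - r)/(n+1) with hsq
      have hra : r < a := hr.2
      have hsqIoc : ∀ n : ℕ, sq n ∈ Ioc r a := by
        intro n
        have hpos : (0:ℝ) < (n:ℝ)+1 := by positivity
        constructor
        · have h1 : (0:ℝ) < (a - r)/((n:ℝ)+1) := div_pos (by linarith) hpos
          show r < r + (a - r)/((n:ℝ)+1)
          linarith
        · have h1 : (a - r)/((n:ℝ)+1) ≤ (a - r) := by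
            apply div_le_self (by linarith)
            linarith [Nat.cast_nonneg (α := ℝ) n]
          show r + (a - r)/((n:ℝ)+1) ≤ a
          linarith
      set pn : ℕ → X := fun n => p (sq n) (hsqIoc n) with hpn
      have hpnmem : ∀ n, pn n ∈ LSet r := fun n => hpmem _ _
      obtain ⟨pinf, hpinf, φ, hφ, htend⟩ := (hLcpt r).tendsto_subseq hpnmem
      have hclaim : ∀ t, t ∈ Ioc r a → ε/2 ≤ infDist pinf (LSet t) := by
        intro t ht
        by_contra hc3
        push_neg at hc3
        set ρ := ε/2 - infDist pinf (LSet t) with hρ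
        have hρpos : 0 < ρ := by rw [hρ]; linarith
        have htr : 0 < t - r := by linarith [ht.1]
        obtain ⟨n₀, hn₀⟩ := exists_nat_gt ((a - r)/(t - r))
        have hsqt : ∀ n, n₀ ≤ n → sq n ≤ t := by
          intro n hn
          have hpos : (0:ℝ) < (n:ℝ)+1 := by positivity
          have h3 : a - r < (t - r) * ((n₀:ℝ) + 1) := by
            rw [div_lt_iff₀ htr] at hn₀
            nlinarith [htr]
          have h4 : (t - r) * ((n₀:ℝ)+1) ≤ (t - r)*((n:ℝ)+1) := by
            apply mul_le_mul_of_nonneg_left _ htr.le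
            have : (n₀:ℝ) ≤ (n:ℝ) := by exact_mod_cast hn
            linarith
          have h5 : (a - r)/((n:ℝ)+1) ≤ t - r := by
            rw [div_le_iff₀ hpos]
            nlinarith
          show r + (a - r)/((n:ℝ)+1) ≤ t
          linarith
        rw [Metric.tendsto_atTop] at htend
        obtain ⟨Nk, hNk⟩ := htend (ρ/2) (by linarith)
        set k := max Nk n₀ with hk
        have hφk : n₀ ≤ φ k := le_trans (le_max_right _ _) (hφ.le_apply)
        have hd1 : dist (pn (φ k)) pinf < ρ/2 := hNk k (le_max_left _ _)
        have hsub : LSet t ⊆ LSet (sq (φ k)) :=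
          hLmono (sq (φ k)) ⟨hr.1.trans (hsqIoc _).1.le, (hsqIoc _).2⟩ t
            ⟨hr.1.trans ht.1.le, ht.2⟩ (hsqt _ hφk)
        have h6 : infDist (pn (φ k)) (LSet (sq (φ k))) ≤ infDist (pn (φ k)) (LSet t) :=
          infDist_le_infDist_of_subset hsub (hLne t)
        have h7 : infDist (pn (φ k)) (LSet t) ≤ infDist pinf (LSet t) + dist (pn (φ k)) pinf :=
          infDist_le_infDist_add_dist
        have h8 := hpfar (sq (φ k)) (hsqIoc (φ k))
        have h8' : ε/2 < infDist (pn (φ k)) (LSet (sq (φ k))) := h8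
        rw [hρ] at hd1
        linarith
      have hcl : pinf ∈ closure (⋃ s ∈ Ioc r a, LSet s) := by
        rw [← hR1 r hr.1 hr.2]
        exact hpinf
      obtain ⟨q, hq, hdq⟩ := Metric.mem_closure_iff.mp hcl (ε/2) (by linarith)
      obtain ⟨t, ht, hqt⟩ := mem_iUnion₂.mp hq
      have h10 := hclaim t ht
      have h9 : infDist pinf (LSet t) ≤ dist pinf q := infDist_le_dist_of_mem hqt
      linarith
    -- metric left-continuity
    have hLeft : ∀ r, r ∈ Ioc b a → ∀ ε : ℝ, 0 < ε →
        ∃ s0, s0 ∈ Ico b r ∧ hausdorffDist (LSet s0) (LSet r) < ε := by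
      intro r hr ε hε
      by_contra hcon
      push_neg at hcon
      have hfar : ∀ s, s ∈ Ico b r → ∃ p ∈ LSet s, ε/2 < infDist p (LSet r) := by
        intro s hs
        by_contra hc2
        push_neg at hc2
        have hle : hausdorffDist (LSet s) (LSet r) ≤ ε/2 := by
          apply hausdorffDist_le_of_infDist (by linarith)
          · intro p hp
            exact hc2 p hp
          · intro p hp
            have hp' : p ∈ LSet s :=
              hLmono s ⟨hs.1, hs.2.le.trans hr.2⟩ r ⟨hr.1.le, hr.2⟩ hs.2.le hp
            rw [infDist_zero_of_mem hp']
            linarith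
        linarith [hcon s hs]
      choose p hpmem hpfar using hfar
      set sq : ℕ → ℝ := fun n => r - (r - b)/(n+1) with hsq
      have hbr : b < r := hr.1
      have hsqIco : ∀ n : ℕ, sq n ∈ Ico b r := by
        intro n
        have hpos : (0:ℝ) < (n:ℝ)+1 := by positivity
        constructor
        · have h1 : (r - b)/((n:ℝ)+1) ≤ (r - b) := by
            apply div_le_self (by linarith)
            linarith [Nat.cast_nonneg (α := ℝ) n]
          show b ≤ r - (r - b)/((n:ℝ)+1)
          linarith
        · have h1 : (0:ℝ) < (r - b)/((n:ℝ)+1) := div_pos (by linarith) hpos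
          show r - (r - b)/((n:ℝ)+1) < r
          linarith
      set pn : ℕ → X := fun n => p (sq n) (hsqIco n) with hpn
      have hsqIcc : ∀ n : ℕ, sq n ∈ Icc b a := fun n =>
        ⟨(hsqIco n).1, (hsqIco n).2.le.trans hr.2⟩
      have hpnb : ∀ n, pn n ∈ LSet b := by
        intro n
        exact hLmono b ⟨le_refl b, hba⟩ (sq n) (hsqIcc n) (hsqIco n).1 (hpmem _ _)
      obtain ⟨pinf, _, φ, hφ, htend⟩ := (hLcpt b).tendsto_subseq hpnb
      have hmemt : ∀ t, t ∈ Ico b r → pinf ∈ LSet t := by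
        intro t ht
        apply (hLcpt t).isClosed.mem_of_tendsto htend
        have htr : 0 < r - t := by linarith [ht.2]
        obtain ⟨n₀, hn₀⟩ := exists_nat_gt ((r - b)/(r - t))
        have hsqt : ∀ n, n₀ ≤ n → t ≤ sq n := by
          intro n hn
          have hpos : (0:ℝ) < (n:ℝ)+1 := by positivity
          have h3 : r - b < (r - t) * ((n₀:ℝ) + 1) := by
            rw [div_lt_iff₀ htr] at hn₀
            nlinarith [htr]
          have h4 : (r - t) * ((n₀:ℝ)+1) ≤ (r - t)*((n:ℝ)+1) := by
            apply mul_le_mul_of_nonneg_left _ htr.le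
            have : (n₀:ℝ) ≤ (n:ℝ) := by exact_mod_cast hn
            linarith
          have h5 : (r - b)/((n:ℝ)+1) ≤ r - t := by
            rw [div_le_iff₀ hpos]
            nlinarith
          show t ≤ r - (r - b)/((n:ℝ)+1)
          linarith
        filter_upwards [Filter.eventually_ge_atTop n₀] with k hk
        have hφk : n₀ ≤ φ k := hk.trans hφ.le_apply
        exact hLmono t ⟨ht.1, ht.2.le.trans hr.2⟩ (sq (φ k)) (hsqIcc _)
          (hsqt _ hφk) (hpmem _ _)
      have hpinfr : pinf ∈ LSet r := by
        rw [hL2 r hr.1 hr.2]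
        exact mem_iInter₂.mpr fun t ht => hmemt t ht
      have hge : ε/2 ≤ infDist pinf (LSet r) := by
        by_contra hc3
        push_neg at hc3
        set ρ := ε/2 - infDist pinf (LSet r) with hρ
        rw [Metric.tendsto_atTop] at htend
        obtain ⟨Nk, hNk⟩ := htend (ρ/2) (by rw [hρ]; linarith)
        have hd1 : dist (pn (φ Nk)) pinf < ρ/2 := hNk Nk le_rfl
        have h7 : infDist (pn (φ Nk)) (LSet r) ≤ infDist pinf (LSet r) + dist (pn (φ Nk)) pinf :=
          infDist_le_infDist_add_dist
        have h8 : ε/2 < infDist (pn (φ Nk)) (LSet r) := hpfar (sq (φ Nk)) (hsqIco _)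
        rw [hρ] at hd1
        linarith
      rw [infDist_zero_of_mem hpinfr] at hge
      linarith
    -- full metric continuity on Icc b a
    have hLCONT : ∀ r, r ∈ Icc b a → ∀ ε : ℝ, 0 < ε → ∃ δ : ℝ, 0 < δ ∧
        ∀ s, s ∈ Icc b a → |s - r| < δ → hausdorffDist (LSet s) (LSet r) < ε := by
      intro r hr ε hε
      have hR : ∃ δR : ℝ, 0 < δR ∧ ∀ s, s ∈ Icc b a → r ≤ s → s - r < δR →
          hausdorffDist (LSet s) (LSet r) < ε := by
        rcases eq_or_lt_of_le hr.2 with hra | hra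
        · refine ⟨1, one_pos, fun s hs hrs _ => ?_⟩
          have hsr : s = r := le_antisymm (hra ▸ hs.2) hrs
          rw [hsr, hausdorffDist_self_zero]
          exact hε
        · obtain ⟨s0, hs0, hd0⟩ := hRight r ⟨hr.1, hra⟩ ε hε
          refine ⟨s0 - r, by linarith [hs0.1], fun s hs hrs hlt => ?_⟩
          have hss0 : s ≤ s0 := by linarith
          have hs0Icc : s0 ∈ Icc b a := ⟨hr.1.trans hs0.1.le, hs0.2⟩
          have hnest1 : LSet s0 ⊆ LSet s := hLmono s hs s0 hs0Icc hss0
          have hnest2 : LSet s ⊆ LSet r := hLmono r hr s hs hrs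
          calc hausdorffDist (LSet s) (LSet r)
              ≤ hausdorffDist (LSet s0) (LSet r) :=
                BlockedAux.hd_mono_outer hnest1 hnest2 (hLne s0) (hLcpt s0) (hLne r)
            _ < ε := hd0
      have hL : ∃ δL : ℝ, 0 < δL ∧ ∀ s, s ∈ Icc b a → s ≤ r → r - s < δL →
          hausdorffDist (LSet s) (LSet r) < ε := by
        rcases eq_or_lt_of_le hr.1 with hrb | hrb
        · refine ⟨1, one_pos, fun s hs hsr _ => ?_⟩
          have hsr' : s = r := le_antisymm hsr (hrb ▸ hs.1)
          rw [hsr', hausdorffDist_self_zero]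
          exact hε
        · obtain ⟨s0, hs0, hd0⟩ := hLeft r ⟨hrb, hr.2⟩ ε hε
          refine ⟨r - s0, by linarith [hs0.2], fun s hs hsr hlt => ?_⟩
          have hss0 : s0 ≤ s := by linarith
          have hs0Icc : s0 ∈ Icc b a := ⟨hs0.1, hs0.2.le.trans hr.2⟩
          have hnest1 : LSet r ⊆ LSet s := hLmono s hs r hr hsr
          have hnest2 : LSet s ⊆ LSet s0 := hLmono s0 hs0Icc s hs hss0
          calc hausdorffDist (LSet s) (LSet r)
              = hausdorffDist (LSet r) (LSet s) := hausdorffDist_comm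
            _ ≤ hausdorffDist (LSet r) (LSet s0) :=
                BlockedAux.hd_mono_inner hnest1 hnest2 (hLne r) (hLcpt r) (hLne s0)
            _ = hausdorffDist (LSet s0) (LSet r) := hausdorffDist_comm
            _ < ε := hd0
      obtain ⟨δR, hδR, hRp⟩ := hR
      obtain ⟨δL, hδL, hLp⟩ := hL
      refine ⟨min δR δL, lt_min hδR hδL, fun s hs habs => ?_⟩
      rcases le_or_gt r s with h | h
      · apply hRp s hs h
        calc s - r ≤ |s - r| := le_abs_self _
          _ < min δR δL := habs
          _ ≤ δR := min_le_left _ _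
      · apply hLp s hs h.le
        calc r - s ≤ |s - r| := by rw [abs_sub_comm]; exact le_abs_self _
          _ < min δR δL := habs
          _ ≤ δL := min_le_right _ _
    -- the escape path for y
    set ρf : ℝ → ℝ := fun s => a + (b - a) * (min (max (2*s) 0) 1) with hρf
    have hρcont : Continuous ρf := by
      apply continuous_const.add
      apply continuous_const.mul
      exact ((continuous_const.mul continuous_id).max continuous_const).min continuous_const
    have hρmem : ∀ s, ρf s ∈ Icc b a := by
      intro s
      have h1 : 0 ≤ min (max (2*s) 0) 1 := le_min (le_max_right _ _) zero_le_one
      have h2 : min (max (2*s) 0) 1 ≤ 1 := min_le_right _ _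
      constructor
      · show b ≤ a + (b - a) * (min (max (2*s) 0) 1)
        nlinarith
      · show a + (b - a) * (min (max (2*s) 0) 1) ≤ a
        nlinarith
    have hρ0 : ρf 0 = a := by
      show a + (b - a) * (min (max (2*(0:ℝ)) 0) 1) = a
      norm_num
    have hρhalf : ρf (1/2) = b := by
      show a + (b - a) * (min (max (2*((1:ℝ)/2)) 0) 1) = b
      norm_num
    set mkL : ℝ → NonemptyCompacts X := fun r => ⟨⟨LSet r, hLcpt r⟩, hLne r⟩ with hmkL
    have hmkLconton : ContinuousOn mkL (Icc b a) := by
      rw [Metric.continuousOn_iff]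
      intro r hr ε hε
      obtain ⟨δ, hδ, hp⟩ := hLCONT r hr ε hε
      refine ⟨δ, hδ, fun s hs hds => ?_⟩
      rw [NonemptyCompacts.dist_eq]
      exact hp s hs (by rwa [Real.dist_eq] at hds)
    set F : ℝ → NonemptyCompacts X := fun s => mkL (ρf s) with hF
    have hFcont : Continuous F := hmkLconton.comp_continuous hρcont hρmem
    set σf : ℝ → unitInterval := fun s => Set.projIcc 0 1 zero_le_one (2*s - 1) with hσf
    have hσcont : Continuous σf :=
      continuous_projIcc.comp ((continuous_const.mul continuous_id).sub continuous_const)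
    set G : ℝ → NonemptyCompacts X := fun s =>
      ⟨⟨(A₀ : Set X) ∪ (γz (σf s) : Set X), hA₀cpt.union (γz (σf s)).isCompact⟩,
        ⟨y, Or.inl hyA₀⟩⟩ with hG
    have hγσ : Continuous (fun s => γz (σf s)) := hγzc.comp hσcont
    have hGcont : Continuous G := by
      rw [Metric.continuous_iff]
      intro s ε hε
      obtain ⟨δ, hδ, hp⟩ := Metric.continuous_iff.mp hγσ s ε hε
      refine ⟨δ, hδ, fun s' hs' => ?_⟩
      have hb1 := hp s' hs'
      have hb2 : dist (G s') (G s) ≤ dist (γz (σf s')) (γz (σf s)) := by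
        rw [NonemptyCompacts.dist_eq, NonemptyCompacts.dist_eq]
        exact BlockedAux.hd_union _ _ _ (γz (σf s')).nonempty (γz (σf s)).nonempty
      linarith
    have hjunct : ∀ s : ℝ, s = 1/2 → F s = G s := by
      intro s hs
      apply NonemptyCompacts.ext
      show LSet (ρf s) = (A₀ : Set X) ∪ (γz (σf s) : Set X)
      rw [hs]
      have h2 : σf (1/2) = 0 := by
        show Set.projIcc 0 1 zero_le_one (2*((1:ℝ)/2) - 1) = 0
        have h3 : 2*((1:ℝ)/2) - 1 = 0 := by norm_num
        rw [h3, Set.projIcc_left]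
        rfl
      rw [hρhalf, hLb, h2, hγz0]
      exact (union_eq_left.mpr (singleton_subset_iff.mpr hzA₀)).symm
    set Γp : ℝ → NonemptyCompacts X := fun s => if s ≤ 1/2 then F s else G s with hΓp
    have hΓcont : Continuous Γp :=
      Continuous.if_le hFcont hGcont continuous_id continuous_const (fun s hs => hjunct s hs)
    set γ : unitInterval → NonemptyCompacts X := fun t => Γp (t : ℝ) with hγdef
    have hγcont : Continuous γ := hΓcont.comp continuous_subtype_val
    have hγ0 : (γ 0 : Set X) = ({y} : Set X) := by
      show (Γp ((0:unitInterval):ℝ) : Set X) = {y}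
      have h0 : ((0:unitInterval):ℝ) = 0 := rfl
      rw [h0, hΓp]
      simp only [if_pos (by norm_num : (0:ℝ) ≤ 1/2)]
      show LSet (ρf 0) = {y}
      rw [hρ0, hLa]
    have hγ1 : (γ 1 : Set X) = univ := by
      show (Γp ((1:unitInterval):ℝ) : Set X) = univ
      have h0 : ((1:unitInterval):ℝ) = 1 := rfl
      rw [h0, hΓp]
      simp only [if_neg (by norm_num : ¬ (1:ℝ) ≤ 1/2)]
      show (A₀ : Set X) ∪ (γz (σf 1) : Set X) = univ
      have h2 : σf 1 = 1 := by
        show Set.projIcc 0 1 zero_le_one (2*(1:ℝ) - 1) = 1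
        have h3 : 2*(1:ℝ) - 1 = 1 := by norm_num
        rw [h3, Set.projIcc_right]
        rfl
      rw [h2, hγz1, union_univ]
    have hγavoid : ∀ t : unitInterval, t < 1 → x ∉ (γ t : Set X) := by
      intro t ht
      show x ∉ (Γp ((t:unitInterval):ℝ) : Set X)
      rw [hΓp]
      by_cases hts : ((t:unitInterval):ℝ) ≤ 1/2
      · simp only [if_pos hts]
        exact hLx (ρf (t:ℝ))
      · simp only [if_neg hts]
        rintro (hx1 | hx2)
        · exact hxA₀ hx1
        · have ht1 : ((t:unitInterval):ℝ) < 1 := ht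
          have hσlt : σf ((t:unitInterval):ℝ) < 1 := by
            rw [← Subtype.coe_lt_coe]
            show (Set.projIcc 0 1 zero_le_one (2*((t:unitInterval):ℝ) - 1) : ℝ) < (1:ℝ)
            rw [Set.coe_projIcc]
            have hlt2 : 2*((t:unitInterval):ℝ) - 1 < 1 := by linarith
            have hm : min 1 (2*((t:unitInterval):ℝ) - 1) < 1 :=
              lt_of_le_of_lt (min_le_right _ _) hlt2
            exact max_lt one_pos hm
          exact hγzx _ hσlt hx2
    obtain ⟨t, ht1, hts⟩ := hy γ hγcont hγ0 hγ1
    obtain ⟨q', hq'mem, hq'x⟩ := hts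
    rw [mem_singleton_iff] at hq'x
    rw [hq'x] at hq'mem
    exact hγavoid t ht1 hq'mem
  -- Step 2 : W preconnected
  have hWpre : IsPreconnected W := by
    have hWs : W = ⋃₀ ((fun A : ↥PP => (A : Set X)) '' CC) := by
      rw [hWdef, sUnion_image]
    rw [hWs]
    apply isPreconnected_sUnion y
    · rintro s ⟨A, _, rfl⟩
      exact A.2.2.2.1
    · rintro s ⟨A, _, rfl⟩
      exact A.2.2.1
  -- Step 3 : W ⊆ v
  have hWv : W ⊆ v := by
    intro p hpW
    rcases hS (hstep1 hpW) with hp | hp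
    · exfalso
      obtain ⟨q, _, hq⟩ :=
        hWpre u v hu hv (fun q hq => hS (hstep1 hq)) ⟨p, hpW, hp⟩ ⟨y, hyW, hyv⟩
      have hquv : q ∈ u ∩ v := hq
      rw [huv] at hquv
      exact hquv
    · exact hp
  -- Step 4 : x ∈ closure W
  have hxW : x ∈ closure W := by
    by_contra hxcl
    have hKcpt : IsCompact (closure W) := isClosed_closure.isCompact
    obtain ⟨P, hPcpt, hPc, hMP, _, hMne, hqP⟩ :=
      BlockedAux.bump isCompact_univ isPreconnected_univ hKcpt hWpre.closure
        ⟨y, subset_closure hyW⟩ (subset_univ _) (mem_univ x) hxcl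
    have hPPP : P ∈ PP := ⟨hPcpt, hPc, hMP (subset_closure hyW), hqP⟩
    have hPmem := hmem P hPPP
      (fun A hA => Or.inl ((hmemW A hA).trans (subset_closure.trans hMP)))
    have hPW : P ⊆ closure W := (hmemW _ hPmem).trans subset_closure
    exact hMne (Subset.antisymm hMP hPW)
  -- Step 5 : contradiction
  have hxv : x ∈ closure v := closure_mono hWv hxW
  obtain ⟨p, hpu, hpv⟩ := _root_.mem_closure_iff.mp hxv u hu hxu
  have hfin : p ∈ u ∩ v := ⟨hpu, hpv⟩
  rw [huv] at hfin
  exact hfin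

end Core
theorem blocked_set_connected (x : X) : IsConnected (BlockedSet x) := by
  classical
  have hxmem : x ∈ BlockedSet x := by
    intro γ hc h0 h1
    refine ⟨0, ?_, ?_⟩
    · rw [← Subtype.coe_lt_coe]
      norm_num
    · rw [h0]
      exact ⟨x, rfl, rfl⟩
  constructor
  · exact ⟨x, hxmem⟩
  · intro u0 v0 hu0 hv0 hcov hne1 hne2
    by_contra hdis
    have hdis' : ∀ p, p ∈ BlockedSet x → p ∈ u0 → p ∈ v0 → False :=
      fun p h1 h2 h3 => hdis ⟨p, h1, h2, h3⟩
    set A := BlockedSet x ∩ u0 with hA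
    set B := BlockedSet x ∩ v0 with hB
    have hAne : A.Nonempty := hne1
    have hBne : B.Nonempty := hne2
    have hnclA : ∀ p ∈ A, p ∉ closure B := by
      rintro p ⟨hpS, hpu⟩ hpc
      obtain ⟨q, hq1, hq2⟩ := _root_.mem_closure_iff.mp hpc u0 hu0 hpu
      exact hdis' q hq2.1 hq1 hq2.2
    have hnclB : ∀ p ∈ B, p ∉ closure A := by
      rintro p ⟨hpS, hpv⟩ hpc
      obtain ⟨q, hq1, hq2⟩ := _root_.mem_closure_iff.mp hpc v0 hv0 hpv
      exact hdis' q hq2.1 hq2.2 hq1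
    set u' := {p : X | infDist p A < infDist p B} with hu'
    set v' := {p : X | infDist p B < infDist p A} with hv'
    have hou : IsOpen u' := isOpen_lt (continuous_infDist_pt A) (continuous_infDist_pt B)
    have hov : IsOpen v' := isOpen_lt (continuous_infDist_pt B) (continuous_infDist_pt A)
    have hdisj : u' ∩ v' = ∅ := by
      rw [eq_empty_iff_forall_notMem]
      rintro p ⟨h1, h2⟩
      have h1' : infDist p A < infDist p B := h1
      have h2' : infDist p B < infDist p A := h2
      linarith
    have hAu : ∀ p ∈ A, p ∈ u' := by
      intro p hp
      have h1 : infDist p A = 0 := infDist_zero_of_mem hp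
      have h2 : infDist p B ≠ 0 := by
        intro h
        exact hnclA p hp ((mem_closure_iff_infDist_zero hBne).mpr h)
      have h3 : 0 < infDist p B := lt_of_le_of_ne infDist_nonneg (Ne.symm h2)
      show infDist p A < infDist p B
      rw [h1]
      exact h3
    have hBv : ∀ p ∈ B, p ∈ v' := by
      intro p hp
      have h1 : infDist p B = 0 := infDist_zero_of_mem hp
      have h2 : infDist p A ≠ 0 := by
        intro h
        exact hnclB p hp ((mem_closure_iff_infDist_zero hAne).mpr h)
      have h3 : 0 < infDist p A := lt_of_le_of_ne infDist_nonneg (Ne.symm h2)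
      show infDist p B < infDist p A
      rw [h1]
      exact h3
    have hsub : BlockedSet x ⊆ u' ∪ v' := by
      intro p hp
      rcases hcov hp with h | h
      · exact Or.inl (hAu p ⟨hp, h⟩)
      · exact Or.inr (hBv p ⟨hp, h⟩)
    rcases hcov hxmem with hx | hx
    · obtain ⟨y₀, hy₀⟩ := hBne
      exact blocked_core x y₀ u' v' hou hov hdisj hsub (hAu x ⟨hxmem, hx⟩) (hBv y₀ hy₀) hy₀.1
    · obtain ⟨y₀, hy₀⟩ := hAne
      exact blocked_core x y₀ v' u' hov hou (by rw [inter_comm]; exact hdisj)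
        (by rw [union_comm]; exact hsub) (hBv x ⟨hxmem, hx⟩) (hAu y₀ hy₀) hy₀.1
end

section
/- Let X be a continuum and x ∈ X. If A is a subcontinuum of X with B(x) ∩ A ≠ ∅, then A ⊆ B(x) or x ∈ A. -/
open Set Metric TopologicalSpace unitInterval

variable {X : Type*} [MetricSpace X] [CompactSpace X] [ConnectedSpace X] [Nonempty X]

section AuxBlocked

open Topology


theorem exists_isClopen_between {Y : Type*} [TopologicalSpace Y] [T2Space Y] [CompactSpace Y]
    {x : Y} {U : Set Y} (hU : IsOpen U) (hcc : connectedComponent x ⊆ U) :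
    ∃ V : Set Y, IsClopen V ∧ x ∈ V ∧ V ⊆ U := by
  have H1 := hU.isClosed_compl.isCompact.inter_iInter_nonempty
    (fun s : { s : Set Y // IsClopen s ∧ x ∈ s } => (s : Set Y)) (fun s => s.2.1.1)
  rw [← not_disjoint_iff_nonempty_inter, imp_not_comm, not_forall] at H1
  have hdisj : Disjoint Uᶜ (⋂ s : { s : Set Y // IsClopen s ∧ x ∈ s }, (s : Set Y)) := by
    rw [disjoint_compl_left_iff_subset]
    rw [connectedComponent_eq_iInter_isClopen] at hcc
    exact hcc
  obtain ⟨si, H2⟩ := H1 hdisj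
  refine ⟨⋂ s ∈ si, (s : Set Y), isClopen_biInter_finset fun s _ => s.2.1,
    mem_iInter₂.2 fun s _ => s.2.2, ?_⟩
  rwa [← disjoint_compl_left_iff_subset, disjoint_iff_inter_eq_empty,
    ← not_nonempty_iff_eq_empty]

/-- Gap lemma: between strictly nested subcontinua there is a strictly intermediate one. -/
theorem exists_continuum_between {X : Type*} [MetricSpace X] {B C : Set X}
    (hBc : IsCompact B) (hBconn : IsConnected B) (hCc : IsCompact C) (hCconn : IsConnected C)
    (hBC : B ⊂ C) : ∃ D : Set X, IsCompact D ∧ IsConnected D ∧ B ⊂ D ∧ D ⊂ C := by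
  obtain ⟨q, hqC, hqB⟩ := exists_of_ssubset hBC
  have hBne : B.Nonempty := hBconn.nonempty
  set ε := infDist q B with hεdef
  have hε : 0 < ε := (hBc.isClosed.notMem_iff_infDist_pos hBne).1 hqB
  haveI : CompactSpace C := isCompact_iff_compactSpace.1 hCc
  haveI : ConnectedSpace C := Subtype.connectedSpace hCconn
  set f : C → ℝ := fun z => infDist (z : X) B with hfdef
  have hf : Continuous f := (continuous_infDist_pt B).comp continuous_subtype_val
  set E : Set C := {z | f z ≤ ε / 2} with hEdef
  set U : Set C := {z | f z < ε / 2} with hUdef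
  have hEclosed : IsClosed E := isClosed_le hf continuous_const
  have hUopen : IsOpen U := isOpen_lt hf continuous_const
  have hUE : U ⊆ E := fun z hz => by simp only [hEdef, hUdef, mem_setOf_eq] at *; linarith
  obtain ⟨b₀, hb₀⟩ := hBne
  set b : C := ⟨b₀, hBC.1 hb₀⟩ with hbdef
  have hbB : ∀ z : C, (z : X) ∈ B → z ∈ U := by
    intro z hz
    simp only [hUdef, mem_setOf_eq, hfdef]
    have : infDist (z : X) B = 0 := by
      rw [← hBc.isClosed.mem_iff_infDist_zero hBconn.nonempty] at *; exact hz
    rw [this]; positivity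
  have hbU : b ∈ U := hbB b hb₀
  set Bhat : Set C := Subtype.val ⁻¹' B with hBhatdef
  have hBhatE : Bhat ⊆ E := fun z hz => hUE (hbB z hz)
  have hBhatim : Subtype.val '' Bhat = B := by
    rw [Subtype.image_preimage_coe]
    exact inter_eq_self_of_subset_right hBC.1
  have hBhatconn : IsPreconnected Bhat := by
    rw [← IsInducing.subtypeVal.isPreconnected_image, hBhatim]
    exact hBconn.isPreconnected
  have hbE : b ∈ E := hUE hbU
  set Dhat : Set C := connectedComponentIn E b with hDhatdef
  have hBDhat : Bhat ⊆ Dhat := hBhatconn.subset_connectedComponentIn hb₀ hBhatE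
  have hDhatE : Dhat ⊆ E := connectedComponentIn_subset E b
  -- compactness of Dhat
  haveI : CompactSpace E := isCompact_iff_compactSpace.1 hEclosed.isCompact
  have hDhatim : Dhat = Subtype.val '' connectedComponent (⟨b, hbE⟩ : E) :=
    connectedComponentIn_eq_image hbE
  have hKcomp : IsCompact (connectedComponent (⟨b, hbE⟩ : E)) :=
    isClosed_connectedComponent.isCompact
  have hDhatcomp : IsCompact Dhat := by
    rw [hDhatim]; exact hKcomp.image continuous_subtype_val
  have hDhatconn : IsConnected Dhat :=
    (isConnected_connectedComponentIn_iff.2 hbE)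
  -- boundary bumping : Dhat ⊄ U
  have hnotU : ¬ (Dhat ⊆ U) := by
    intro hDU
    have hKU : connectedComponent (⟨b, hbE⟩ : E) ⊆ Subtype.val ⁻¹' U := by
      intro y hy
      have : (y : C) ∈ Dhat := by rw [hDhatim]; exact mem_image_of_mem _ hy
      exact hDU this
    obtain ⟨V, hVclopen, hbV, hVU⟩ :=
      exists_isClopen_between (hUopen.preimage continuous_subtype_val) hKU
    -- W := val '' V is clopen in C
    set W : Set C := Subtype.val '' V with hWdef
    have hWU : W ⊆ U := by rintro z ⟨y, hyV, rfl⟩; exact hVU hyV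
    have hWclosed : IsClosed W :=
      ((hVclopen.1.isCompact).image continuous_subtype_val).isClosed
    have hWopen : IsOpen W := by
      obtain ⟨O, hO, hOV⟩ := isOpen_induced_iff.1 hVclopen.2
      have : W = O ∩ U := by
        apply Subset.antisymm
        · rintro z ⟨y, hyV, rfl⟩
          exact ⟨by rw [← hOV] at hyV; exact hyV, hVU hyV⟩
        · rintro z ⟨hzO, hzU⟩
          exact ⟨⟨z, hUE hzU⟩, by rw [← hOV]; exact hzO, rfl⟩
      rw [this]; exact hO.inter hUopen
    have : W = ∅ ∨ W = univ := isClopen_iff.1 ⟨hWclosed, hWopen⟩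
    rcases this with h | h
    · exact absurd h (by
        apply Nonempty.ne_empty
        exact ⟨b, ⟨⟨b, hbE⟩, hbV, rfl⟩⟩)
    · have hq : (⟨q, hqC⟩ : C) ∈ W := h ▸ mem_univ _
      have := hWU hq
      simp only [hUdef, mem_setOf_eq, hfdef] at this
      rw [← hεdef] at this; linarith
  obtain ⟨z, hzD, hzU⟩ := not_subset.1 hnotU
  have hzB : (z : X) ∉ B := fun h => hzU (hbB z h)
  refine ⟨Subtype.val '' Dhat, hDhatcomp.image continuous_subtype_val,
    hDhatconn.image _ continuous_subtype_val.continuousOn, ⟨?_, ?_⟩, ⟨?_, ?_⟩⟩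
  · intro x hx; exact ⟨⟨x, hBC.1 hx⟩, hBDhat hx, rfl⟩
  · intro hsub
    exact hzB (hsub (mem_image_of_mem _ hzD) : (z : X) ∈ B)
  · rintro x ⟨y, _, rfl⟩; exact y.2
  · intro hsub
    have hq : q ∈ Subtype.val '' Dhat := hsub hqC
    obtain ⟨y, hyD, hyq⟩ := hq
    have := hDhatE hyD
    simp only [hEdef, mem_setOf_eq, hfdef, hyq] at this
    rw [← hεdef] at this; linarith


section Nu
variable {Y : Type*} [MetricSpace Y] [CompactSpace Y] [Nonempty Y]



noncomputable def nuFun (Y : Type*) [MetricSpace Y] [CompactSpace Y] [Nonempty Y] :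
    NonemptyCompacts Y → ℝ :=
  fun K => ∑' n : ℕ, (1/2 : ℝ)^n * infDist (denseSeq Y n) (K : Set Y)

theorem nuFun_continuous : Continuous (nuFun Y) := by
  set C := diam (univ : Set Y) + 1 with hC
  have hCpos : 0 ≤ diam (univ : Set Y) := diam_nonneg
  apply continuous_tsum (u := fun n => (1/2 : ℝ)^n * C)
  · intro n
    exact continuous_const.mul (lipschitz_infDist_set (denseSeq Y n)).continuous
  · exact (summable_geometric_two).mul_right _
  · intro n K
    rw [Real.norm_eq_abs, abs_mul, abs_of_nonneg (by positivity), abs_of_nonneg infDist_nonneg]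
    apply mul_le_mul_of_nonneg_left _ (by positivity)
    obtain ⟨k, hk⟩ := K.nonempty
    calc infDist (denseSeq Y n) (K : Set Y) ≤ dist (denseSeq Y n) k := infDist_le_dist_of_mem hk
      _ ≤ diam (univ : Set Y) := dist_le_diam_of_mem isCompact_univ.isBounded trivial trivial
      _ ≤ C := by simp [hC]

theorem nuFun_summand_summable (K : NonemptyCompacts Y) :
    Summable (fun n : ℕ => (1/2 : ℝ)^n * infDist (denseSeq Y n) (K : Set Y)) := by
  apply Summable.of_nonneg_of_le (fun n => mul_nonneg (by positivity) infDist_nonneg)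
    (fun n => ?_) ((summable_geometric_two).mul_right (diam (univ : Set Y) + 1))
  apply mul_le_mul_of_nonneg_left _ (by positivity)
  obtain ⟨k, hk⟩ := K.nonempty
  calc infDist (denseSeq Y n) (K : Set Y) ≤ dist (denseSeq Y n) k := infDist_le_dist_of_mem hk
    _ ≤ diam (univ : Set Y) := dist_le_diam_of_mem isCompact_univ.isBounded trivial trivial
    _ ≤ _ := by linarith

theorem nuFun_antitone {K L : NonemptyCompacts Y} (h : K ≤ L) : nuFun Y L ≤ nuFun Y K := by
  apply Summable.tsum_le_tsum _ (nuFun_summand_summable L) (nuFun_summand_summable K)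
  intro n
  apply mul_le_mul_of_nonneg_left _ (by positivity)
  exact infDist_le_infDist_of_subset h K.nonempty

theorem nuFun_strict_anti {K L : NonemptyCompacts Y} (h : K < L) : nuFun Y L < nuFun Y K := by
  obtain ⟨hKL, hne⟩ := lt_iff_le_and_ne.1 h
  have hsub : (K : Set Y) ⊆ L := hKL
  obtain ⟨b, hbL, hbK⟩ : ∃ b ∈ (L : Set Y), b ∉ (K : Set Y) := by
    by_contra hc
    push_neg at hc
    exact hne (le_antisymm hKL hc)
  have hr : 0 < infDist b (K : Set Y) :=
    (K.isCompact.isClosed.notMem_iff_infDist_pos K.nonempty).1 hbK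
  set r := infDist b (K : Set Y)
  obtain ⟨n, hn⟩ : ∃ n, dist b (denseSeq Y n) < r/2 := by
    have := denseRange_denseSeq Y
    rw [Metric.denseRange_iff] at this
    exact this b (r/2) (by linarith)
  apply Summable.tsum_lt_tsum (i := n) _ _ (nuFun_summand_summable L) (nuFun_summand_summable K)
  · intro m
    apply mul_le_mul_of_nonneg_left _ (by positivity)
    exact infDist_le_infDist_of_subset hsub K.nonempty
  · apply mul_lt_mul_of_pos_left _ (by positivity)
    have h1 : infDist (denseSeq Y n) (L : Set Y) ≤ dist (denseSeq Y n) b :=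
      infDist_le_dist_of_mem hbL
    have h2 : r ≤ infDist (denseSeq Y n) (K : Set Y) + dist b (denseSeq Y n) :=
      infDist_le_infDist_add_dist
    rw [dist_comm] at h1
    linarith

end Nu


theorem hausdorffEdist_union_le {X : Type*} [MetricSpace X] (s s' t : Set X) :
    EMetric.hausdorffEdist (s ∪ t) (s' ∪ t) ≤ EMetric.hausdorffEdist s s' := by
  apply EMetric.hausdorffEdist_le_of_infEdist
  · rintro x (hx | hx)
    · calc Metric.infEDist x (s' ∪ t) ≤ Metric.infEDist x s' := by
            rw [Metric.infEDist_union]; exact min_le_left _ _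
        _ ≤ Metric.hausdorffEDist s s' := EMetric.infEdist_le_hausdorffEdist_of_mem hx
    · calc Metric.infEDist x (s' ∪ t) ≤ Metric.infEDist x t := by
            rw [Metric.infEDist_union]; exact min_le_right _ _
        _ = 0 := by rw [Metric.infEDist_zero_of_mem hx]
        _ ≤ _ := zero_le
  · rintro x (hx | hx)
    · calc Metric.infEDist x (s ∪ t) ≤ Metric.infEDist x s := by
            rw [Metric.infEDist_union]; exact min_le_left _ _
        _ ≤ Metric.hausdorffEDist s' s := EMetric.infEdist_le_hausdorffEdist_of_mem hx
        _ = Metric.hausdorffEDist s s' := Metric.hausdorffEDist_comm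
    · calc Metric.infEDist x (s ∪ t) ≤ Metric.infEDist x t := by
            rw [Metric.infEDist_union]; exact min_le_right _ _
        _ = 0 := by rw [Metric.infEDist_zero_of_mem hx]
        _ ≤ _ := zero_le

theorem NonemptyCompacts.edist_eq' {X : Type*} [MetricSpace X] (K L : NonemptyCompacts X) :
    edist K L = EMetric.hausdorffEdist (K : Set X) (L : Set X) := rfl

theorem continuous_sup_right {X : Type*} [MetricSpace X] (A : NonemptyCompacts X) :
    Continuous (fun K : NonemptyCompacts X => K ⊔ A) := by
  apply LipschitzWith.continuous (K := 1)
  apply LipschitzWith.of_edist_le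
  intro K L
  exact hausdorffEdist_union_le _ _ _


section Chain
variable {X : Type*} [MetricSpace X] [CompactSpace X] [Nonempty X]

/-- edist between nonempty compacts is finite as hausdorffEdist -/
theorem hEdist_ne_top (K L : NonemptyCompacts X) :
    EMetric.hausdorffEdist (K : Set X) (L : Set X) ≠ ⊤ :=
  hausdorffEdist_ne_top_of_nonempty_of_bounded K.nonempty L.nonempty
    K.isCompact.isBounded L.isCompact.isBounded

set_option maxHeartbeats 1000000 in
theorem exists_orderPath (p : X) (A : Set X) (hAc : IsCompact A) (hAconn : IsConnected A)
    (hp : p ∈ A) :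
    ∃ α : unitInterval → NonemptyCompacts X, Continuous α ∧
      (α 0 : Set X) = {p} ∧ (α 1 : Set X) = A ∧ ∀ t, (α t : Set X) ⊆ A := by
  classical
  set bot : NonemptyCompacts X := ⟨⟨{p}, isCompact_singleton⟩, singleton_nonempty p⟩ with hbot
  set top : NonemptyCompacts X := ⟨⟨A, hAc⟩, hAconn.nonempty⟩ with htop
  set F : Set (Set (NonemptyCompacts X)) :=
    {c | (∀ K ∈ c, IsConnected (K : Set X) ∧ p ∈ (K : Set X) ∧ (K : Set X) ⊆ A) ∧
      IsChain (· ≤ ·) c ∧ bot ∈ c ∧ top ∈ c} with hF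
  have hbotprop : IsConnected (bot : Set X) ∧ p ∈ (bot : Set X) ∧ (bot : Set X) ⊆ A :=
    ⟨isConnected_singleton, rfl, singleton_subset_iff.2 hp⟩
  have htopprop : IsConnected (top : Set X) ∧ p ∈ (top : Set X) ∧ (top : Set X) ⊆ A :=
    ⟨hAconn, hp, Subset.rfl⟩
  have hbotle : ∀ K : NonemptyCompacts X, p ∈ (K : Set X) → bot ≤ K := by
    intro K hK
    exact (singleton_subset_iff.2 hK : (bot : Set X) ⊆ K)
  have hc₀ : {bot, top} ∈ F := by
    refine ⟨?_, ?_, mem_insert _ _, mem_insert_of_mem _ rfl⟩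
    · rintro K (rfl | rfl)
      exacts [hbotprop, htopprop]
    · rintro K (rfl | rfl) L (rfl | rfl) _ <;>
        first
          | exact Or.inl le_rfl
          | exact Or.inl (hbotle top hp)
          | exact Or.inr (hbotle top hp)
  have hub : ∀ c ⊆ F, IsChain (· ⊆ ·) c → c.Nonempty →
      ∃ ub ∈ F, ∀ s ∈ c, s ⊆ ub := by
    intro c hcF hchain hcne
    refine ⟨⋃₀ c, ⟨?_, ?_, ?_, ?_⟩, fun s hs => subset_sUnion_of_mem hs⟩
    · rintro K ⟨s, hs, hK⟩
      exact (hcF hs).1 K hK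
    · rintro K ⟨s, hs, hK⟩ L ⟨s', hs', hL⟩ hne
      rcases hchain.total hs hs' with h | h
      · exact (hcF hs').2.1 (h hK) hL hne
      · exact (hcF hs).2.1 hK (h hL) hne
    · obtain ⟨s, hs⟩ := hcne
      exact ⟨s, hs, (hcF hs).2.2.1⟩
    · obtain ⟨s, hs⟩ := hcne
      exact ⟨s, hs, (hcF hs).2.2.2⟩
  obtain ⟨M, hMsub, hMmax⟩ := zorn_subset_nonempty F hub _ hc₀
  have hMF : M ∈ F := hMmax.1
  obtain ⟨hMprop, hMchain, hbotM, htopM⟩ := hMF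
  -- M is closed
  have hMclosed : IsClosed M := by
    have hclF : closure M ∈ F := by
      have key : ∀ K ∈ closure M, ∀ ε > (0:ℝ), ∃ L ∈ M, hausdorffDist (K : Set X) (L : Set X) < ε := by
        intro K hK ε hε
        obtain ⟨L, hLM, hdist⟩ := Metric.mem_closure_iff.1 hK ε hε
        exact ⟨L, hLM, by rwa [NonemptyCompacts.dist_eq] at hdist⟩
      refine ⟨?_, ?_, subset_closure hbotM, subset_closure htopM⟩
      · intro K hK
        have hpK : p ∈ (K : Set X) := by
          rw [K.isCompact.isClosed.mem_iff_infDist_zero K.nonempty]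
          apply le_antisymm _ infDist_nonneg
          apply le_of_forall_pos_le_add
          intro ε hε
          obtain ⟨L, hLM, hdist⟩ := key K hK ε hε
          have h1 : infDist p (K : Set X) ≤ infDist p (L : Set X)
              + hausdorffDist (L : Set X) (K : Set X) :=
            infDist_le_infDist_add_hausdorffDist (hEdist_ne_top L K)
          have h2 : infDist p (L : Set X) = 0 :=
            (L.isCompact.isClosed.mem_iff_infDist_zero L.nonempty).1 ((hMprop L hLM).2.1)
          rw [hausdorffDist_comm] at hdist
          linarith
        have hKA : (K : Set X) ⊆ A := by
          intro z hz
          rw [hAc.isClosed.mem_iff_infDist_zero hAconn.nonempty]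
          apply le_antisymm _ infDist_nonneg
          apply le_of_forall_pos_le_add
          intro ε hε
          obtain ⟨L, hLM, hdist⟩ := key K hK ε hε
          have h1 : infDist z (L : Set X) ≤ hausdorffDist (K : Set X) (L : Set X) :=
            infDist_le_hausdorffDist_of_mem hz (hEdist_ne_top K L)
          obtain ⟨l, hlL, hl⟩ := (infDist_lt_iff L.nonempty).1 (lt_of_le_of_lt h1 hdist)
          have : infDist z A ≤ dist z l := infDist_le_dist_of_mem ((hMprop L hLM).2.2 hlL)
          linarith
        refine ⟨?_, hpK, hKA⟩
        -- connectedness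
        constructor
        · exact K.nonempty
        by_contra hdisc
        rw [isPreconnected_iff_subset_of_fully_disjoint_closed K.isCompact.isClosed] at hdisc
        push_neg at hdisc
        obtain ⟨K₁, K₂, h₁c, h₂c, hcover, hdisj, hn₁, hn₂⟩ := hdisc
        set C₁ : Set X := K₁ ∩ K with hC₁
        set C₂ : Set X := K₂ ∩ K with hC₂
        have hC₁c : IsCompact C₁ := K.isCompact.inter_left h₁c
        have hC₂c : IsCompact C₂ := K.isCompact.inter_left h₂c
        have hC₁ne : C₁.Nonempty := by
          obtain ⟨z, hzK, hz₂⟩ := not_subset.1 hn₂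
          rcases hcover hzK with h | h
          · exact ⟨z, h, hzK⟩
          · exact absurd h hz₂
        have hC₂ne : C₂.Nonempty := by
          obtain ⟨z, hzK, hz₁⟩ := not_subset.1 hn₁
          rcases hcover hzK with h | h
          · exact absurd h hz₁
          · exact ⟨z, h, hzK⟩
        have hdisj' : Disjoint C₁ C₂ := hdisj.mono inter_subset_left inter_subset_left
        obtain ⟨δ, hδpos, hδ⟩ := hdisj'.exists_thickenings hC₁c hC₂c.isClosed
        obtain ⟨L, hLM, hdist⟩ := key K hK δ hδpos
        have hLconn := (hMprop L hLM).1
        have hcoverK : (K : Set X) ⊆ C₁ ∪ C₂ := by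
          intro z hz
          rcases hcover hz with h | h
          · exact Or.inl ⟨h, hz⟩
          · exact Or.inr ⟨h, hz⟩
        have hLsub : (L : Set X) ⊆ thickening δ C₁ ∪ thickening δ C₂ := by
          intro l hl
          have h1 : infDist l (K : Set X) ≤ hausdorffDist (L : Set X) (K : Set X) :=
            infDist_le_hausdorffDist_of_mem hl (hEdist_ne_top L K)
          rw [hausdorffDist_comm] at h1
          obtain ⟨k, hkK, hk⟩ := (infDist_lt_iff K.nonempty).1 (lt_of_le_of_lt h1 hdist)
          rcases hcoverK hkK with h | h
          · exact Or.inl (Metric.mem_thickening_iff.2 ⟨k, h, hk⟩)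
          · exact Or.inr (Metric.mem_thickening_iff.2 ⟨k, h, hk⟩)
        have hmeet : ∀ (C : Set X), C ⊆ (K : Set X) → C.Nonempty →
            ((L : Set X) ∩ thickening δ C).Nonempty := by
          rintro C hCK ⟨k, hk⟩
          have h1 : infDist k (L : Set X) ≤ hausdorffDist (K : Set X) (L : Set X) :=
            infDist_le_hausdorffDist_of_mem (hCK hk) (hEdist_ne_top K L)
          obtain ⟨l, hlL, hl⟩ := (infDist_lt_iff L.nonempty).1 (lt_of_le_of_lt h1 hdist)
          rw [dist_comm] at hl
          exact ⟨l, hlL, Metric.mem_thickening_iff.2 ⟨k, hk, hl⟩⟩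
        have := hLconn.isPreconnected (thickening δ C₁) (thickening δ C₂)
          isOpen_thickening isOpen_thickening hLsub
          (hmeet C₁ inter_subset_right hC₁ne) (hmeet C₂ inter_subset_right hC₂ne)
        obtain ⟨z, _, hz₁, hz₂⟩ := this
        exact hδ.ne_of_mem hz₁ hz₂ rfl
      · -- chain
        intro K hK K' hK' hne
        by_contra hcon
        push_neg at hcon
        obtain ⟨hnKK', hnK'K⟩ := hcon
        obtain ⟨a, haK, haK'⟩ := not_subset.1 (fun h => hnKK' (SetLike.coe_subset_coe.1 h))
        obtain ⟨b, hbK', hbK⟩ := not_subset.1 (fun h => hnK'K (SetLike.coe_subset_coe.1 h))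
        set r := min (infDist a (K' : Set X)) (infDist b (K : Set X)) with hr
        have hr1 : 0 < infDist a (K' : Set X) :=
          (K'.isCompact.isClosed.notMem_iff_infDist_pos K'.nonempty).1 haK'
        have hr2 : 0 < infDist b (K : Set X) :=
          (K.isCompact.isClosed.notMem_iff_infDist_pos K.nonempty).1 hbK
        have hrpos : 0 < r := lt_min hr1 hr2
        obtain ⟨L, hLM, hdL⟩ := key K hK (r/3) (by positivity)
        obtain ⟨L', hL'M, hdL'⟩ := key K' hK' (r/3) (by positivity)
        have contra : ∀ (c : X) (P Q L₁ L₂ : NonemptyCompacts X), c ∈ (P : Set X) →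
            hausdorffDist (P : Set X) (L₁ : Set X) < r/3 →
            hausdorffDist (Q : Set X) (L₂ : Set X) < r/3 →
            (L₁ : Set X) ⊆ (L₂ : Set X) → r ≤ infDist c (Q : Set X) → False := by
          intro c P Q L₁ L₂ hcP hdP hdQ hLL' hinf
          have h1 : infDist c (L₁ : Set X) ≤ hausdorffDist (P : Set X) (L₁ : Set X) :=
            infDist_le_hausdorffDist_of_mem hcP (hEdist_ne_top P L₁)
          have h2 : infDist c (L₂ : Set X) ≤ infDist c (L₁ : Set X) :=
            infDist_le_infDist_of_subset hLL' L₁.nonempty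
          have h3 : infDist c (Q : Set X) ≤ infDist c (L₂ : Set X)
              + hausdorffDist (L₂ : Set X) (Q : Set X) :=
            infDist_le_infDist_add_hausdorffDist (hEdist_ne_top L₂ Q)
          rw [hausdorffDist_comm] at hdQ
          linarith only [h1, h2, h3, hdP, hdQ, hinf, hrpos]
        rcases hMchain.total hLM hL'M with h | h
        · exact contra a K K' L L' haK hdL hdL' (SetLike.coe_subset_coe.2 h) (min_le_left _ _)
        · exact contra b K' K L' L hbK' hdL' hdL (SetLike.coe_subset_coe.2 h) (min_le_right _ _)
    have : closure M ⊆ M := hMmax.2 hclF subset_closure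
    exact closure_subset_iff_isClosed.1 this
  have hMcompact : IsCompact M := hMclosed.isCompact
  set ν := nuFun X with hν
  have hνcont : Continuous ν := nuFun_continuous
  set c₁ := ν top with hc₁
  set c₀ := ν bot with hc₀
  have hKmemIcc : ∀ K ∈ M, ν K ∈ Icc c₁ c₀ := by
    intro K hK
    constructor
    · exact nuFun_antitone (SetLike.coe_subset_coe.1 ((hMprop K hK).2.2 : (K : Set X) ⊆ top))
    · exact nuFun_antitone (hbotle K (hMprop K hK).2.1)
  have hle : c₁ ≤ c₀ := (hKmemIcc bot hbotM).1
  set S := ν '' M with hS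
  have hScomp : IsCompact S := hMcompact.image hνcont
  have hSIcc : S ⊆ Icc c₁ c₀ := by rintro s ⟨K, hK, rfl⟩; exact hKmemIcc K hK
  have hinj : ∀ K ∈ M, ∀ K' ∈ M, ν K = ν K' → K = K' := by
    intro K hK K' hK' hνeq
    by_contra hne
    rcases hMchain.total hK hK' with h | h
    · exact absurd hνeq (ne_of_gt (nuFun_strict_anti (lt_of_le_of_ne h hne)))
    · exact absurd hνeq (ne_of_lt (nuFun_strict_anti (lt_of_le_of_ne h (Ne.symm hne))))
  have hSurj : Icc c₁ c₀ ⊆ S := by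
    intro c hc
    by_contra hcS
    have hc₁S : c₁ ∈ S := ⟨top, htopM, rfl⟩
    have hc₀S : c₀ ∈ S := ⟨bot, hbotM, rfl⟩
    have hclt : c₁ < c := lt_of_le_of_ne hc.1 (fun heq => hcS (by rw [← heq]; exact hc₁S))
    have hcgt : c < c₀ := lt_of_le_of_ne hc.2 (fun heq => hcS (by rw [heq]; exact hc₀S))
    set Sp := S ∩ Ici c with hSp
    have hSpcomp : IsCompact Sp := hScomp.inter_right isClosed_Ici
    have hSpne : Sp.Nonempty := ⟨c₀, hc₀S, le_of_lt hcgt⟩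
    set a := sInf Sp with ha
    have haSp : a ∈ Sp := hSpcomp.sInf_mem hSpne
    set Sm := S ∩ Iic c with hSm
    have hSmcomp : IsCompact Sm := hScomp.inter_right isClosed_Iic
    have hSmne : Sm.Nonempty := ⟨c₁, hc₁S, le_of_lt hclt⟩
    set b := sSup Sm with hb
    have hbSm : b ∈ Sm := hSmcomp.sSup_mem hSmne
    have hca : c < a := lt_of_le_of_ne haSp.2 (fun heq => hcS (by rw [heq]; exact haSp.1))
    have hbc : b < c := lt_of_le_of_ne hbSm.2 (fun heq => hcS (by rw [← heq]; exact hbSm.1))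
    obtain ⟨B, hBM, hBν⟩ := haSp.1
    obtain ⟨C, hCM, hCν⟩ := hbSm.1
    have hBprop := hMprop B hBM
    have hCprop := hMprop C hCM
    have hBCne : B ≠ C := by
      intro h; rw [h, hCν] at hBν; linarith only [hBν, hbc, hca]
    have hBC : B < C := by
      rcases hMchain.total hBM hCM with h | h
      · exact lt_of_le_of_ne h hBCne
      · exfalso
        have := nuFun_strict_anti (lt_of_le_of_ne h (Ne.symm hBCne))
        rw [← hν] at this
        rw [hBν, hCν] at this; linarith only [this, hbc, hca]
    have hBCset : (B : Set X) ⊂ (C : Set X) := by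
      constructor
      · exact SetLike.coe_subset_coe.2 hBC.le
      · intro h
        exact hBCne (le_antisymm hBC.le (SetLike.coe_subset_coe.1 h))
    obtain ⟨D, hDc, hDconn, hBD, hDC⟩ :=
      exists_continuum_between B.isCompact hBprop.1 C.isCompact hCprop.1 hBCset
    set Delem : NonemptyCompacts X := ⟨⟨D, hDc⟩, hDconn.nonempty⟩ with hDelem
    have hBDel : B < Delem := by
      constructor
      · exact (SetLike.coe_subset_coe.1 (hBD.1 : (B : Set X) ⊆ D))
      · intro h
        exact hBD.2 (SetLike.coe_subset_coe.2 h : (Delem : Set X) ⊆ B)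
    have hDelC : Delem < C := by
      constructor
      · exact (SetLike.coe_subset_coe.1 (hDC.1 : (Delem : Set X) ⊆ C))
      · intro h
        exact hDC.2 (SetLike.coe_subset_coe.2 h : (C : Set X) ⊆ Delem)
    have hνD1 : ν Delem < a := by rw [← hBν]; exact nuFun_strict_anti hBDel
    have hνD2 : b < ν Delem := by rw [← hCν]; exact nuFun_strict_anti hDelC
    have hDelemM : Delem ∉ M := by
      intro hmem
      rcases le_total c (ν Delem) with h | h
      · have : a ≤ ν Delem := csInf_le hSpcomp.bddBelow ⟨⟨Delem, hmem, rfl⟩, h⟩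
        linarith only [this, hνD1]
      · have : ν Delem ≤ b := le_csSup hSmcomp.bddAbove ⟨⟨Delem, hmem, rfl⟩, h⟩
        linarith only [this, hνD2]
    have hKcomp : ∀ K ∈ M, K ≤ B ∨ C ≤ K := by
      intro K hK
      rcases le_total (ν K) c with h | h
      · right
        have hKb : ν K ≤ b := le_csSup hSmcomp.bddAbove ⟨⟨K, hK, rfl⟩, h⟩
        rcases hMchain.total hK hCM with h' | h'
        · rcases eq_or_ne K C with rfl | hne
          · exact le_rfl
          · exfalso
            have := nuFun_strict_anti (lt_of_le_of_ne h' hne)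
            rw [← hν] at this
            rw [hCν] at this; linarith only [this, hKb]
        · exact h'
      · left
        have hKa : a ≤ ν K := csInf_le hSpcomp.bddBelow ⟨⟨K, hK, rfl⟩, h⟩
        rcases hMchain.total hK hBM with h' | h'
        · exact h'
        · rcases eq_or_ne B K with rfl | hne
          · exact le_rfl
          · exfalso
            have := nuFun_strict_anti (lt_of_le_of_ne h' hne)
            rw [← hν] at this
            rw [hBν] at this; linarith only [this, hKa]
    have hM' : M ∪ {Delem} ∈ F := by
      refine ⟨?_, ?_, mem_union_left _ hbotM, mem_union_left _ htopM⟩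
      · rintro K (hK | rfl)
        · exact hMprop K hK
        · exact ⟨hDconn, hBD.1 hBprop.2.1, Subset.trans hDC.1 hCprop.2.2⟩
      · rintro K (hK | rfl) L (hL | rfl) hne
        · exact hMchain hK hL hne
        · rcases hKcomp K hK with h | h
          · exact Or.inl (le_trans h hBDel.le)
          · exact Or.inr (le_trans hDelC.le h)
        · rcases hKcomp L hL with h | h
          · exact Or.inr (le_trans h hBDel.le)
          · exact Or.inl (le_trans hDelC.le h)
        · exact absurd rfl hne
    exact hDelemM (hMmax.2 hM' subset_union_left (mem_union_right _ rfl))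
  -- Build the parametrization
  haveI : CompactSpace ↥M := isCompact_iff_compactSpace.1 hMcompact
  set e : ↥M → ↥(Icc c₁ c₀) := fun K => ⟨ν K.1, hSIcc ⟨K.1, K.2, rfl⟩⟩ with he
  have he_cont : Continuous e :=
    Continuous.subtype_mk (hνcont.comp continuous_subtype_val) _
  have he_bij : Function.Bijective e := by
    constructor
    · intro K K' hKK'
      have : ν K.1 = ν K'.1 := congrArg Subtype.val hKK'
      exact Subtype.ext (hinj K.1 K.2 K'.1 K'.2 this)
    · rintro ⟨y, hy⟩
      obtain ⟨K, hK, hνK⟩ := hSurj hy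
      exact ⟨⟨K, hK⟩, Subtype.ext hνK⟩
  set eq : ↥M ≃ ↥(Icc c₁ c₀) := Equiv.ofBijective e he_bij with heq
  have heq_cont : Continuous eq := he_cont
  set h : ↥M ≃ₜ ↥(Icc c₁ c₀) := Continuous.homeoOfEquivCompactToT2 heq_cont with hh
  have hmemIcc : ∀ t : unitInterval, (1 - (t:ℝ)) * c₀ + t * c₁ ∈ Icc c₁ c₀ := by
    intro t
    have ht0 := t.2.1
    have ht1 := t.2.2
    constructor <;> nlinarith [hle]
  set u : unitInterval → ↥(Icc c₁ c₀) :=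
    fun t => ⟨(1 - (t:ℝ)) * c₀ + t * c₁, hmemIcc t⟩ with hu
  have hu_cont : Continuous u := by
    apply Continuous.subtype_mk
    exact ((continuous_const.sub continuous_subtype_val).mul continuous_const).add
      (continuous_subtype_val.mul continuous_const)
  set α : unitInterval → NonemptyCompacts X := fun t => ((h.symm (u t) : ↥M) : NonemptyCompacts X)
    with hα
  have hα_cont : Continuous α :=
    continuous_subtype_val.comp (h.symm.continuous.comp hu_cont)
  have hαν : ∀ t, ν (α t) = (1 - (t:ℝ)) * c₀ + t * c₁ := by
    intro t
    have : e (h.symm (u t)) = u t := h.apply_symm_apply (u t)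
    have := congrArg Subtype.val this
    exact this
  have hαM : ∀ t, α t ∈ M := fun t => (h.symm (u t)).2
  have hα0 : α 0 = bot := by
    apply hinj _ (hαM 0) _ hbotM
    rw [hαν 0]
    show (1 - ((0:unitInterval):ℝ)) * c₀ + ((0:unitInterval):ℝ) * c₁ = ν bot
    norm_num
    exact hc₀
  have hα1 : α 1 = top := by
    apply hinj _ (hαM 1) _ htopM
    rw [hαν 1]
    show (1 - ((1:unitInterval):ℝ)) * c₀ + ((1:unitInterval):ℝ) * c₁ = ν top
    norm_num
    exact hc₁
  refine ⟨α, hα_cont, ?_, ?_, ?_⟩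
  · rw [hα0]; rfl
  · rw [hα1]; rfl
  · intro t
    exact (hMprop _ (hαM t)).2.2


end Chain

end AuxBlocked

theorem subcontinuum_meets_blocked (x : X) (A : Set X)
    (hAc : IsCompact A) (hAconn : IsConnected A)
    (hmeet : (BlockedSet x ∩ A).Nonempty) :
    A ⊆ BlockedSet x ∨ x ∈ A := by
  classical
  by_cases hx : x ∈ A
  · exact Or.inr hx
  left
  obtain ⟨p, hpB, hpA⟩ := hmeet
  intro y hy
  intro γ hγcont hγ0 hγ1
  obtain ⟨α, hαcont, hα0, hα1, hαsub⟩ := exists_orderPath p A hAc hAconn hpA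
  set Ael : NonemptyCompacts X := ⟨⟨A, hAc⟩, hAconn.nonempty⟩ with hAel
  set pel : NonemptyCompacts X := ⟨⟨{p}, isCompact_singleton⟩, singleton_nonempty p⟩ with hpel
  set uel : NonemptyCompacts X := ⟨⟨univ, isCompact_univ⟩, univ_nonempty⟩ with huel
  have hα0' : α 0 = pel := NonemptyCompacts.ext hα0
  have hα1' : α 1 = Ael := NonemptyCompacts.ext hα1
  set P1 : Path pel Ael := Path.mk ⟨α, hαcont⟩ hα0' hα1' with hP1
  have hδ2cont : Continuous (fun t => γ t ⊔ Ael) := (continuous_sup_right Ael).comp hγcont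
  have hδ2_0 : γ 0 ⊔ Ael = Ael := by
    apply NonemptyCompacts.ext
    show (γ 0 : Set X) ∪ A = A
    rw [hγ0]
    exact union_eq_self_of_subset_left (singleton_subset_iff.2 hy)
  have hδ2_1 : γ 1 ⊔ Ael = uel := by
    apply NonemptyCompacts.ext
    show (γ 1 : Set X) ∪ A = univ
    rw [hγ1]
    exact univ_union A
  set P2 : Path Ael uel := Path.mk ⟨fun t => γ t ⊔ Ael, hδ2cont⟩ hδ2_0 hδ2_1 with hP2
  set δ : Path pel uel := P1.trans P2 with hδ
  have hδ0 : ((fun t => δ t) 0 : Set X) = ({p} : Set X) := by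
    show (δ 0 : Set X) = {p}
    rw [δ.source]
    rfl
  have hδ1 : ((fun t => δ t) 1 : Set X) = (univ : Set X) := by
    show (δ 1 : Set X) = univ
    rw [δ.target]
    rfl
  obtain ⟨t, ht1, hhit⟩ := hpB (fun t => δ t) δ.continuous hδ0 hδ1
  obtain ⟨z, hzδ, hzx⟩ := hhit
  rw [mem_singleton_iff] at hzx
  subst hzx
  have hxδ : z ∈ (δ t : Set X) := hzδ
  rw [hδ, Path.trans_apply] at hxδ
  split_ifs at hxδ with h
  · exact absurd (hαsub _ hxδ) hx
  · have hmem : z ∈ (γ ⟨2 * (t:ℝ) - 1, _⟩ : Set X) ∪ A := hxδ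
    rcases hmem with h' | h'
    · refine ⟨⟨2 * (t:ℝ) - 1, _⟩, ?_, ⟨z, h', rfl⟩⟩
      have ht1' : (t : ℝ) < 1 := ht1
      exact Subtype.mk_lt_mk.2 (by linarith)
    · exact absurd h' hx
end

section
/- Let X be a continuum and x, y, z ∈ X such that x ∈ B(y) and y ∈ B(z). Then x ∈ B(z). (Blocking of points is transitive.) -/
open Set Metric TopologicalSpace unitInterval

variable {X : Type*} [MetricSpace X] [CompactSpace X] [ConnectedSpace X] [Nonempty X]

namespace BTmain

set_option linter.unusedSectionVars false
set_option maxHeartbeats 1000000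

open Filter

variable {X : Type*} [MetricSpace X] [CompactSpace X]

lemma hEdist_ne_top (s t : NonemptyCompacts X) :
    EMetric.hausdorffEdist (s : Set X) (t : Set X) ≠ ⊤ :=
  Metric.hausdorffEdist_ne_top_of_nonempty_of_bounded s.nonempty t.nonempty
    s.isCompact.isBounded t.isCompact.isBounded

lemma hEdist_ne_top' {s t : Set X} (hs : s.Nonempty) (ht : t.Nonempty)
    (hsc : IsCompact s) (htc : IsCompact t) :
    EMetric.hausdorffEdist s t ≠ ⊤ :=
  Metric.hausdorffEdist_ne_top_of_nonempty_of_bounded hs ht hsc.isBounded htc.isBounded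

lemma mem_of_forall_exists_close {p : X} {L : Set X} (hL : IsClosed L)
    (h : ∀ ε > (0:ℝ), ∃ q ∈ L, dist p q < ε) : p ∈ L := by
  rw [← hL.closure_eq]
  exact Metric.mem_closure_iff.2 h

/-- if frequently `f n ⊆ L` (L closed) and `f → K` then `K ⊆ L`. -/
lemma subset_of_freq {f : ℕ → NonemptyCompacts X} {K : NonemptyCompacts X} {L : Set X}
    (hlim : Tendsto f atTop (nhds K)) (hL : IsClosed L)
    (hf : ∃ᶠ n in atTop, (f n : Set X) ⊆ L) : (K : Set X) ⊆ L := by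
  intro p hp
  refine mem_of_forall_exists_close hL fun ε hε => ?_
  have hev : ∀ᶠ n in atTop, dist (f n) K < ε := (Metric.tendsto_nhds.1 hlim) ε hε
  obtain ⟨n, hn1, hn2⟩ := (hf.and_eventually hev).exists
  have hd : Metric.hausdorffDist (K : Set X) (f n : Set X) < ε := by
    rw [Metric.hausdorffDist_comm]
    rwa [NonemptyCompacts.dist_eq] at hn2
  obtain ⟨q, hq, hpq⟩ := Metric.exists_dist_lt_of_hausdorffDist_lt hp hd (hEdist_ne_top K (f n))
  exact ⟨q, hn1 hq, hpq⟩

/-- if frequently `S ⊆ f n` and `f → K` then `S ⊆ K`. -/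
lemma superset_of_freq {f : ℕ → NonemptyCompacts X} {K : NonemptyCompacts X} {S : Set X}
    (hlim : Tendsto f atTop (nhds K)) (hf : ∃ᶠ n in atTop, S ⊆ (f n : Set X)) :
    S ⊆ (K : Set X) := by
  intro p hp
  refine mem_of_forall_exists_close K.isCompact.isClosed fun ε hε => ?_
  have hev : ∀ᶠ n in atTop, dist (f n) K < ε := (Metric.tendsto_nhds.1 hlim) ε hε
  obtain ⟨n, hn1, hn2⟩ := (hf.and_eventually hev).exists
  have hd : Metric.hausdorffDist (f n : Set X) (K : Set X) < ε := by
    rwa [NonemptyCompacts.dist_eq] at hn2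
  exact Metric.exists_dist_lt_of_hausdorffDist_lt (hn1 hp) hd (hEdist_ne_top (f n) K)

lemma compact_sep {A B : Set X} (hA : IsCompact A) (hB : IsCompact B)
    (hAne : A.Nonempty) (hBne : B.Nonempty) (hd : A ∩ B = ∅) :
    ∃ δ > (0:ℝ), ∀ a ∈ A, ∀ b ∈ B, δ ≤ dist a b := by
  obtain ⟨a₀, ha₀, hmin⟩ := hA.exists_isMinOn hAne (continuous_infDist_pt B).continuousOn
  have ha₀B : a₀ ∉ B := fun hb => by
    have : a₀ ∈ A ∩ B := ⟨ha₀, hb⟩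
    simp [hd] at this
  have hpos : 0 < infDist a₀ B := (hB.isClosed.notMem_iff_infDist_pos hBne).1 ha₀B
  refine ⟨infDist a₀ B, hpos, fun a ha b hb => ?_⟩
  calc infDist a₀ B ≤ infDist a B := hmin ha
    _ ≤ dist a b := infDist_le_dist_of_mem hb

/-- Hausdorff limits of preconnected nonempty compacts are preconnected. -/
lemma isPreconnected_of_freq {f : ℕ → NonemptyCompacts X} {K : NonemptyCompacts X}
    (hlim : Tendsto f atTop (nhds K))
    (hf : ∃ᶠ n in atTop, IsPreconnected (f n : Set X)) :
    IsPreconnected (K : Set X) := by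
  intro U V hU hV hcov ⟨p, hpK, hpU⟩ ⟨q, hqK, hqV⟩
  by_contra hemp
  rw [not_nonempty_iff_eq_empty] at hemp
  -- the two closed pieces
  set A : Set X := (K : Set X) \ V with hAdef
  set B : Set X := (K : Set X) \ U with hBdef
  have hKA : ∀ r ∈ (K : Set X), r ∉ V → r ∈ A := fun r hr hrV => ⟨hr, hrV⟩
  have hA : IsCompact A := K.isCompact.diff hV
  have hB : IsCompact B := K.isCompact.diff hU
  have hAne : A.Nonempty := ⟨p, hpK, fun hpV => by
    have : p ∈ (K : Set X) ∩ (U ∩ V) := ⟨hpK, hpU, hpV⟩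
    simp [hemp] at this⟩
  have hBne : B.Nonempty := ⟨q, hqK, fun hqU => by
    have : q ∈ (K : Set X) ∩ (U ∩ V) := ⟨hqK, hqU, hqV⟩
    simp [hemp] at this⟩
  have hAB : A ∩ B = ∅ := by
    ext r; simp only [mem_inter_iff, mem_empty_iff_false, iff_false, not_and]
    rintro ⟨hrK, hrV⟩ ⟨-, hrU⟩
    rcases hcov hrK with h | h
    exacts [hrU h, hrV h]
  obtain ⟨δ, hδ, hsep⟩ := compact_sep hA hB hAne hBne hAB
  -- pick a close preconnected approximant
  have hev : ∀ᶠ n in atTop, dist (f n) K < δ/3 := (Metric.tendsto_nhds.1 hlim) _ (by linarith)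
  obtain ⟨n, hnc, hnd⟩ := (hf.and_eventually hev).exists
  have hdH : Metric.hausdorffDist (f n : Set X) (K : Set X) < δ/3 := by
    rwa [NonemptyCompacts.dist_eq] at hnd
  have hdH' : Metric.hausdorffDist (K : Set X) (f n : Set X) < δ/3 := by
    rwa [Metric.hausdorffDist_comm] at hdH
  set U' : Set X := {r | infDist r A < δ/3} with hU'def
  set V' : Set X := {r | infDist r B < δ/3} with hV'def
  have hU'o : IsOpen U' := isOpen_lt (continuous_infDist_pt A) continuous_const
  have hV'o : IsOpen V' := isOpen_lt (continuous_infDist_pt B) continuous_const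
  have hcov' : (f n : Set X) ⊆ U' ∪ V' := by
    intro r hr
    obtain ⟨s, hsK, hrs⟩ :=
      Metric.exists_dist_lt_of_hausdorffDist_lt hr hdH (hEdist_ne_top (f n) K)
    by_cases hsV : s ∈ V
    · right
      have hsB : s ∈ B := by
        refine ⟨hsK, fun hsU => ?_⟩
        have : s ∈ (K : Set X) ∩ (U ∩ V) := ⟨hsK, hsU, hsV⟩
        simp [hemp] at this
      exact lt_of_le_of_lt (infDist_le_dist_of_mem hsB) hrs
    · left
      exact lt_of_le_of_lt (infDist_le_dist_of_mem (hKA s hsK hsV)) hrs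
  have hU'ne : ((f n : Set X) ∩ U').Nonempty := by
    obtain ⟨a, haA⟩ := hAne
    obtain ⟨r, hrf, har⟩ :=
      Metric.exists_dist_lt_of_hausdorffDist_lt haA.1 hdH' (hEdist_ne_top K (f n))
    exact ⟨r, hrf, lt_of_le_of_lt (infDist_le_dist_of_mem haA) (by rwa [dist_comm])⟩
  have hV'ne : ((f n : Set X) ∩ V').Nonempty := by
    obtain ⟨b, hbB⟩ := hBne
    obtain ⟨r, hrf, hbr⟩ :=
      Metric.exists_dist_lt_of_hausdorffDist_lt hbB.1 hdH' (hEdist_ne_top K (f n))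
    exact ⟨r, hrf, lt_of_le_of_lt (infDist_le_dist_of_mem hbB) (by rwa [dist_comm])⟩
  obtain ⟨r, hrf, hrU', hrV'⟩ := hnc U' V' hU'o hV'o hcov' hU'ne hV'ne
  -- r is δ/3-close to both A and B: contradiction with separation δ
  obtain ⟨a, haA, hra⟩ := (infDist_lt_iff hAne).1 hrU'
  obtain ⟨b, hbB, hrb⟩ := (infDist_lt_iff hBne).1 hrV'
  have : δ ≤ dist a b := hsep a haA b hbB
  have : dist a b < δ := by
    calc dist a b ≤ dist a r + dist r b := dist_triangle a r b
      _ < δ/3 + δ/3 := by rw [dist_comm a r]; exact add_lt_add hra hrb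
      _ < δ := by linarith
  linarith


variable {X : Type*} [MetricSpace X] [CompactSpace X]


lemma exists_near_sup {c : Set (NonemptyCompacts X)}
    (hc : ∀ K ∈ c, ∀ L ∈ c, (K : Set X) ⊆ L ∨ (L : Set X) ⊆ K)
    {A : NonemptyCompacts X} (hA : (A : Set X) = closure (⋃ K ∈ c, (K : Set X)))
    {ε : ℝ} (hε : 0 < ε) : ∃ K ∈ c, dist A K < ε := by
  have hcov : (A : Set X) ⊆ ⋃ p ∈ (⋃ K ∈ c, (K : Set X)), ball p (ε/3) := by
    intro q hq
    rw [hA] at hq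
    obtain ⟨p, hp, hqp⟩ := Metric.mem_closure_iff.1 hq (ε/3) (by linarith)
    exact mem_biUnion hp (by simpa [dist_comm] using hqp)
  obtain ⟨b', hb'sub, hb'fin, hb'cov⟩ :=
    A.isCompact.elim_finite_subcover_image (fun p _ => isOpen_ball) hcov
  have hmem : ∀ p ∈ b', ∃ K ∈ c, p ∈ (K : Set X) := fun p hp => by
    simpa using mem_iUnion₂.1 (hb'sub hp)
  classical
  choose! Kof hKof1 hKof2 using hmem
  rcases eq_empty_or_nonempty b' with hb'e | hb'ne
  · obtain ⟨q, hq⟩ := A.nonempty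
    have := hb'cov hq
    simp [hb'e] at this
  obtain ⟨Kmax, hKmaxS, hmax⟩ := Set.Finite.exists_maximalFor
    (fun K : NonemptyCompacts X => (K : Set X)) (Kof '' b') (hb'fin.image Kof)
    (hb'ne.image Kof)
  obtain ⟨pm, hpm, rfl⟩ := hKmaxS
  have hKmc : Kof pm ∈ c := hKof1 pm hpm
  have hsub : ∀ p ∈ b', p ∈ (Kof pm : Set X) := by
    intro p hp
    rcases hc _ (hKof1 p hp) _ hKmc with h | h
    · exact h (hKof2 p hp)
    · have := hmax (j := Kof p) (mem_image_of_mem _ hp) h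
      rw [show ((Kof pm : Set X)) = (Kof p : Set X) from h.antisymm this]
      exact hKof2 p hp
  refine ⟨Kof pm, hKmc, ?_⟩
  have hd : Metric.hausdorffDist (A : Set X) (Kof pm : Set X) ≤ ε/3 := by
    apply Metric.hausdorffDist_le_of_mem_dist (by linarith)
    · intro q hq
      obtain ⟨p, hp, hqp⟩ := mem_iUnion₂.1 (hb'cov hq)
      exact ⟨p, hsub p hp, le_of_lt (by simpa [dist_comm] using hqp)⟩
    · intro r hr
      refine ⟨r, ?_, by simp; linarith⟩
      rw [hA]
      exact subset_closure (mem_biUnion hKmc hr)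
  rw [NonemptyCompacts.dist_eq]
  calc Metric.hausdorffDist (A : Set X) (Kof pm : Set X) ≤ ε/3 := hd
    _ < ε := by linarith

lemma exists_near_inf {c : Set (NonemptyCompacts X)} (hne : c.Nonempty)
    (hc : ∀ K ∈ c, ∀ L ∈ c, (K : Set X) ⊆ L ∨ (L : Set X) ⊆ K)
    {B : NonemptyCompacts X} (hB : (B : Set X) = ⋂ K ∈ c, (K : Set X))
    {ε : ℝ} (hε : 0 < ε) : ∃ K ∈ c, dist B K < ε := by
  have hBsub : ∀ K ∈ c, (B : Set X) ⊆ (K : Set X) := by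
    intro K hK
    rw [hB]
    exact biInter_subset_of_mem hK
  have hkey : ∃ K ∈ c, ∀ p ∈ (K : Set X), infDist p (B : Set X) < ε/2 := by
    by_contra hcon
    push_neg at hcon
    haveI hcne : Nonempty ↥c := hne.to_subtype
    have hdir : Directed (· ⊇ ·)
        (fun K : ↥c => (K.1 : Set X) ∩ {p | ε/2 ≤ infDist p (B : Set X)}) := by
      rintro ⟨K, hK⟩ ⟨L, hL⟩
      rcases hc K hK L hL with h | h
      · exact ⟨⟨K, hK⟩, subset_rfl, inter_subset_inter_left _ h⟩
      · exact ⟨⟨L, hL⟩, inter_subset_inter_left _ h, subset_rfl⟩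
    have hint := IsCompact.nonempty_iInter_of_directed_nonempty_isCompact_isClosed
      (fun K : ↥c => (K.1 : Set X) ∩ {p | ε/2 ≤ infDist p (B : Set X)}) hdir
      (fun K => by
        obtain ⟨p, hp, hple⟩ := hcon K.1 K.2
        exact ⟨p, hp, hple⟩)
      (fun K => (K.1.isCompact.inter_right
        (isClosed_le continuous_const (continuous_infDist_pt _))))
      (fun K => ((K.1.isCompact.isClosed).inter
        (isClosed_le continuous_const (continuous_infDist_pt _))))
    obtain ⟨q, hq⟩ := hint
    have hqB : q ∈ (B : Set X) := by
      rw [hB]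
      exact mem_biInter fun K hK => ((mem_iInter.1 hq) ⟨K, hK⟩).1
    have hqE : ε/2 ≤ infDist q (B : Set X) := ((mem_iInter.1 hq) hcne.some).2
    rw [infDist_zero_of_mem hqB] at hqE
    linarith
  obtain ⟨K, hKc, hKlt⟩ := hkey
  refine ⟨K, hKc, ?_⟩
  rw [NonemptyCompacts.dist_eq]
  have : Metric.hausdorffDist (B : Set X) (K : Set X) ≤ ε/2 := by
    apply Metric.hausdorffDist_le_of_infDist (by linarith)
    · intro p hp
      rw [infDist_zero_of_mem (hBsub K hKc hp)]
      linarith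
    · intro p hp
      exact le_of_lt (hKlt p hp)
  linarith


variable {X : Type*} [MetricSpace X] [CompactSpace X]


/-- the building blocks of the strictly monotone functional -/
noncomputable def nmw (u : ℕ → X) (n : ℕ) (K : NonemptyCompacts X) : ℝ :=
  (1/2:ℝ)^n * (1 - min 1 (infDist (u n) (K : Set X)))

lemma nmw_nonneg (u : ℕ → X) (n : ℕ) (K : NonemptyCompacts X) : 0 ≤ nmw u n K := by
  have h1 : min 1 (infDist (u n) (K : Set X)) ≤ 1 := min_le_left _ _
  have : (0:ℝ) ≤ (1/2:ℝ)^n := by positivity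
  unfold nmw
  nlinarith

lemma nmw_le (u : ℕ → X) (n : ℕ) (K : NonemptyCompacts X) : nmw u n K ≤ (1/2:ℝ)^n := by
  have h0 : 0 ≤ min 1 (infDist (u n) (K : Set X)) :=
    le_min zero_le_one infDist_nonneg
  have : (0:ℝ) ≤ (1/2:ℝ)^n := by positivity
  unfold nmw
  nlinarith

lemma summable_geom : Summable (fun n : ℕ => (1/2:ℝ)^n) := by
  apply summable_geometric_of_lt_one <;> norm_num

lemma nmw_summable (u : ℕ → X) (K : NonemptyCompacts X) : Summable (fun n => nmw u n K) :=
  Summable.of_nonneg_of_le (nmw_nonneg u · K) (nmw_le u · K) summable_geom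

lemma nmw_continuous (u : ℕ → X) (n : ℕ) : Continuous (nmw u n) := by
  have hlip : Continuous (fun K : NonemptyCompacts X => infDist (u n) (K : Set X)) := by
    refine (LipschitzWith.of_dist_le_mul (K := 1) fun K L => ?_).continuous
    rw [Real.dist_eq, NNReal.coe_one, one_mul, abs_sub_le_iff, NonemptyCompacts.dist_eq]
    constructor
    · have := Metric.infDist_le_infDist_add_hausdorffDist (x := u n)
        (s := (L : Set X)) (t := (K : Set X))
        (by rw [EMetric.hausdorffEdist_comm]; exact hEdist_ne_top K L)
      rw [Metric.hausdorffDist_comm] at this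
      linarith [this]
    · have := Metric.infDist_le_infDist_add_hausdorffDist (x := u n)
        (s := (K : Set X)) (t := (L : Set X)) (hEdist_ne_top K L)
      linarith [this]
  unfold nmw
  fun_prop

lemma nmw_mono (u : ℕ → X) (n : ℕ) {K L : NonemptyCompacts X}
    (h : (K : Set X) ⊆ (L : Set X)) : nmw u n K ≤ nmw u n L := by
  have h1 : infDist (u n) (L : Set X) ≤ infDist (u n) (K : Set X) :=
    infDist_le_infDist_of_subset h K.nonempty
  have h2 : min 1 (infDist (u n) (L : Set X)) ≤ min 1 (infDist (u n) (K : Set X)) :=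
    min_le_min le_rfl h1
  have : (0:ℝ) ≤ (1/2:ℝ)^n := by positivity
  unfold nmw
  nlinarith

/-- strictly monotone continuous functional on nonempty compacts -/
noncomputable def nmf (u : ℕ → X) (K : NonemptyCompacts X) : ℝ := ∑' n, nmw u n K

lemma nmf_continuous (u : ℕ → X) : Continuous (nmf u) := by
  apply continuous_tsum (nmw_continuous u) summable_geom
  intro n K
  rw [Real.norm_eq_abs, abs_of_nonneg (nmw_nonneg u n K)]
  exact nmw_le u n K

lemma nmf_mono (u : ℕ → X) {K L : NonemptyCompacts X}
    (h : (K : Set X) ⊆ (L : Set X)) : nmf u K ≤ nmf u L :=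
  Summable.tsum_le_tsum (fun n => nmw_mono u n h) (nmw_summable u K) (nmw_summable u L)

lemma nmf_strict_mono {u : ℕ → X} (hu : DenseRange u) {K L : NonemptyCompacts X}
    (hKL : (K : Set X) ⊆ (L : Set X)) (hne : (K : Set X) ≠ (L : Set X)) :
    nmf u K < nmf u L := by
  obtain ⟨p, hpL, hpK⟩ := exists_of_ssubset ⟨hKL, fun h => hne (hKL.antisymm h)⟩
  have hδpos : 0 < infDist p (K : Set X) :=
    (K.isCompact.isClosed.notMem_iff_infDist_pos K.nonempty).1 hpK
  set δ := infDist p (K : Set X)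
  set δ' := min δ 1 with hδ'def
  have hδ'pos : 0 < δ' := lt_min hδpos zero_lt_one
  have hδ'le1 : δ' ≤ 1 := min_le_right _ _
  have hδ'leδ : δ' ≤ δ := min_le_left _ _
  obtain ⟨n, hn⟩ := hu.exists_dist_lt p (show 0 < δ'/3 by linarith)
  -- strict inequality at index n
  have hL : infDist (u n) (L : Set X) < δ'/3 := by
    calc infDist (u n) (L : Set X) ≤ dist (u n) p := infDist_le_dist_of_mem hpL
      _ < δ'/3 := by rwa [dist_comm]
  have hK : 2*δ'/3 ≤ infDist (u n) (K : Set X) := by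
    have h1 : infDist p (K : Set X) ≤ infDist (u n) (K : Set X) + dist p (u n) :=
      infDist_le_infDist_add_dist
    have h2 : dist p (u n) < δ'/3 := hn
    have : δ ≤ infDist (u n) (K : Set X) + δ'/3 := by linarith
    linarith
  have hstrict : nmw u n K < nmw u n L := by
    have hminL : min 1 (infDist (u n) (L : Set X)) < δ'/3 :=
      lt_of_le_of_lt (min_le_right _ _) hL
    have hminK : 2*δ'/3 ≤ min 1 (infDist (u n) (K : Set X)) := by
      apply le_min (by linarith) hK
    have hpow : (0:ℝ) < (1/2:ℝ)^n := by positivity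
    unfold nmw
    have : min 1 (infDist (u n) (L : Set X)) < min 1 (infDist (u n) (K : Set X)) := by
      linarith
    nlinarith
  exact Summable.tsum_lt_tsum_of_nonneg (fun m => nmw_nonneg u m K)
    (fun m => nmw_mono u m hKL) hstrict (nmw_summable u L)


variable {X : Type*} [MetricSpace X] [CompactSpace X]

/-- The gap lemma: between two nested distinct subcontinua there is a strictly
intermediate subcontinuum. -/
lemma gap_lemma {A B : Set X} (hAc : IsCompact A) (hApc : IsPreconnected A)
    (hAne : A.Nonempty) (hBc : IsCompact B) (hBpc : IsPreconnected B) (hAB : A ⊆ B)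
    {b : X} (hbB : b ∈ B) (hbA : b ∉ A) :
    ∃ D : Set X, IsCompact D ∧ IsPreconnected D ∧ A ⊆ D ∧ D ⊆ B ∧ A ≠ D ∧ D ≠ B := by
  have hδ2pos : 0 < infDist b A := (hAc.isClosed.notMem_iff_infDist_pos hAne).1 hbA
  set δ : ℝ := infDist b A / 2 with hδdef
  have hδpos : 0 < δ := by positivity
  set K' : Set X := B ∩ {p | infDist p A ≤ δ} with hK'def
  have hK'c : IsCompact K' :=
    hBc.inter_right (isClosed_le (continuous_infDist_pt _) continuous_const)
  obtain ⟨a₀, ha₀⟩ := hAne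
  have hAK' : A ⊆ K' := fun p hp =>
    ⟨hAB hp, by simp only [mem_setOf_eq, infDist_zero_of_mem hp]; linarith⟩
  have ha₀K' : a₀ ∈ K' := hAK' ha₀
  have hbK' : b ∉ K' := by
    rintro ⟨-, hble⟩
    simp only [mem_setOf_eq] at hble
    rw [hδdef] at hble
    linarith
  set D : Set X := connectedComponentIn K' a₀ with hDdef
  have hAD : A ⊆ D := hApc.subset_connectedComponentIn ha₀ hAK'
  have hDK' : D ⊆ K' := connectedComponentIn_subset _ _
  have hDpc : IsPreconnected D := isPreconnected_connectedComponentIn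
  haveI : CompactSpace ↥K' := isCompact_iff_compactSpace.1 hK'c
  have hDim : D = Subtype.val '' connectedComponent (⟨a₀, ha₀K'⟩ : ↥K') :=
    connectedComponentIn_eq_image ha₀K'
  have hDc : IsCompact D := by
    rw [hDim]
    exact (isClosed_connectedComponent.isCompact).image continuous_subtype_val
  have hbD : b ∉ D := fun h => hbK' (hDK' h)
  -- boundary bumping: D contains a point at infDist exactly ≥ δ from A
  have hbump : ∃ p ∈ D, δ ≤ infDist p A := by
    by_contra hcon
    push_neg at hcon
    set pt : ↥K' := ⟨a₀, ha₀K'⟩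
    set Ft : Set ↥K' := {q | infDist (q : X) A = δ} with hFtdef
    have hFtclosed : IsClosed Ft :=
      isClosed_eq ((continuous_infDist_pt _).comp continuous_subtype_val) continuous_const
    have hdisj : Ft ∩ ⋂ (Z : {Z : Set ↥K' // IsClopen Z ∧ pt ∈ Z}), (Z : Set ↥K') = ∅ := by
      rw [← connectedComponent_eq_iInter_isClopen pt]
      ext q
      simp only [mem_inter_iff, mem_empty_iff_false, iff_false, not_and, hFtdef, mem_setOf_eq]
      intro hq hqcc
      have hqD : (q : X) ∈ D := by
        rw [hDim]; exact mem_image_of_mem _ hqcc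
      exact absurd hq (ne_of_lt (hcon _ hqD))
    obtain ⟨w, hw⟩ := IsCompact.elim_finite_subfamily_closed
      (hFtclosed.isCompact) (fun Z : {Z : Set ↥K' // IsClopen Z ∧ pt ∈ Z} => Z.1)
      (fun Z => Z.2.1.isClosed) hdisj
    set V : Set ↥K' := ⋂ Z ∈ w, (Z : Set ↥K') with hVdef
    have hVclopen : IsClopen V := isClopen_biInter_finset fun Z _ => Z.2.1
    have hptV : pt ∈ V := mem_biInter fun Z _ => Z.2.2
    have hVFt : ∀ q ∈ V, (q : X) ∈ B ∧ infDist (q : X) A < δ := by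
      intro q hq
      refine ⟨q.2.1, lt_of_le_of_ne q.2.2 fun heq => ?_⟩
      have : q ∈ Ft ∩ ⋂ Z ∈ w, (Z : Set ↥K') := ⟨heq, hq⟩
      rw [hw] at this
      exact this
    set V' : Set X := Subtype.val '' V with hV'def
    have hV'c : IsCompact V' := (hVclopen.isClosed.isCompact).image continuous_subtype_val
    obtain ⟨O, hOopen, hOpre⟩ := isOpen_induced_iff.1 hVclopen.isOpen
    have hV'eq : V' = (O ∩ {p | infDist p A < δ}) ∩ B := by
      ext p
      constructor
      · rintro ⟨q, hqV, rfl⟩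
        have h1 := hVFt q hqV
        have h2 : q ∈ Subtype.val ⁻¹' O := by rw [hOpre]; exact hqV
        exact ⟨⟨h2, h1.2⟩, h1.1⟩
      · rintro ⟨⟨hpO, hplt⟩, hpB⟩
        have hpK' : p ∈ K' := ⟨hpB, show infDist p A ≤ δ from le_of_lt hplt⟩
        have : (⟨p, hpK'⟩ : ↥K') ∈ V := by rw [← hOpre]; exact hpO
        exact ⟨⟨p, hpK'⟩, this, rfl⟩
    -- contradiction with connectedness of B
    have hcontra := hBpc (O ∩ {p | infDist p A < δ}) V'ᶜ
      (hOopen.inter (isOpen_lt (continuous_infDist_pt _) continuous_const))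
      (hV'c.isClosed.isOpen_compl) ?_ ?_ ?_
    · obtain ⟨r, hrB, hr1, hr2⟩ := hcontra
      exact hr2 (by rw [hV'eq]; exact ⟨hr1, hrB⟩)
    · intro p hpB
      by_cases hpV' : p ∈ V'
      · left
        rw [hV'eq] at hpV'
        exact hpV'.1
      · right; exact hpV'
    · refine ⟨a₀, hAB ha₀, ?_⟩
      have : a₀ ∈ V' := ⟨pt, hptV, rfl⟩
      rw [hV'eq] at this
      exact this.1
    · refine ⟨b, hbB, fun hbV' => ?_⟩
      rw [hV'eq] at hbV'
      exact hbK' ⟨hbV'.2, show infDist b A ≤ δ from le_of_lt hbV'.1.2⟩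
  obtain ⟨p, hpD, hpδ⟩ := hbump
  have hpA : p ∉ A := fun h => by
    rw [infDist_zero_of_mem h] at hpδ
    linarith
  exact ⟨D, hDc, hDpc, hAD, fun q hq => (hDK' hq).1,
    fun h => hpA (h ▸ hpD), fun h => hbD (h ▸ hbB)⟩


variable {X : Type*} [MetricSpace X] [CompactSpace X]




/-- joint continuity of the membership distance -/
lemma infDist_pair_continuous :
    Continuous (fun q : X × NonemptyCompacts X => infDist q.1 (q.2 : Set X)) := by
  refine (LipschitzWith.of_dist_le_mul (K := 2) fun q q' => ?_).continuous
  have h1 : |infDist q.1 (q.2 : Set X) - infDist q'.1 (q.2 : Set X)| ≤ dist q.1 q'.1 := by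
    have e1 := infDist_le_infDist_add_dist (x := q.1) (y := q'.1) (s := (q.2 : Set X))
    have e2 := infDist_le_infDist_add_dist (x := q'.1) (y := q.1) (s := (q.2 : Set X))
    have hdc : dist q'.1 q.1 = dist q.1 q'.1 := dist_comm _ _
    rw [abs_sub_le_iff]
    constructor <;> linarith
  have h2 : |infDist q'.1 (q.2 : Set X) - infDist q'.1 (q'.2 : Set X)| ≤ dist q.2 q'.2 := by
    rw [abs_sub_le_iff, NonemptyCompacts.dist_eq]
    constructor
    · have := Metric.infDist_le_infDist_add_hausdorffDist (x := q'.1)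
        (s := (q'.2 : Set X)) (t := (q.2 : Set X))
        (by rw [EMetric.hausdorffEdist_comm]; exact hEdist_ne_top q.2 q'.2)
      rw [Metric.hausdorffDist_comm] at this
      linarith
    · have := Metric.infDist_le_infDist_add_hausdorffDist (x := q'.1)
        (s := (q.2 : Set X)) (t := (q'.2 : Set X)) (hEdist_ne_top q.2 q'.2)
      linarith
  have h3 : dist q.1 q'.1 ≤ dist q q' := le_max_left _ _
  have h4 : dist q.2 q'.2 ≤ dist q q' := le_max_right _ _
  rw [Real.dist_eq]
  have := abs_sub_abs_le_abs_sub (infDist q.1 (q.2 : Set X)) (infDist q'.1 (q'.2 : Set X))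
  have htri : |infDist q.1 (q.2 : Set X) - infDist q'.1 (q'.2 : Set X)| ≤
      |infDist q.1 (q.2 : Set X) - infDist q'.1 (q.2 : Set X)| +
      |infDist q'.1 (q.2 : Set X) - infDist q'.1 (q'.2 : Set X)| := by
    have := abs_sub_le (infDist q.1 (q.2 : Set X)) (infDist q'.1 (q.2 : Set X))
      (infDist q'.1 (q'.2 : Set X))
    linarith
  push_cast
  linarith

section Gamma

variable (γ : unitInterval → NonemptyCompacts X)

/-- the union of the path up to time `t` -/
def Gset (t : unitInterval) : Set X := ⋃ (s : unitInterval) (_ : s ≤ t), (γ s : Set X)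

lemma mem_Gset {p : X} {t : unitInterval} :
    p ∈ Gset γ t ↔ ∃ s ≤ t, p ∈ (γ s : Set X) := by
  simp [Gset]

lemma Gset_mono {s t : unitInterval} (h : s ≤ t) : Gset γ s ⊆ Gset γ t := by
  intro p hp
  obtain ⟨s', hs', hps'⟩ := (mem_Gset γ).1 hp
  exact (mem_Gset γ).2 ⟨s', le_trans hs' h, hps'⟩

lemma subset_Gset (t : unitInterval) : (γ t : Set X) ⊆ Gset γ t :=
  fun p hp => (mem_Gset γ).2 ⟨t, le_rfl, hp⟩

lemma Gset_nonempty (t : unitInterval) : (Gset γ t).Nonempty := by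
  obtain ⟨p, hp⟩ := (γ t).nonempty
  exact ⟨p, subset_Gset γ t hp⟩

variable {γ}

lemma Gset_compact (hγ : Continuous γ) (t : unitInterval) : IsCompact (Gset γ t) := by
  set T : Set (unitInterval × X) :=
    ((fun q : unitInterval × X => infDist q.2 (γ q.1 : Set X)) ⁻¹' {0}) ∩
      (Prod.fst ⁻¹' Iic t) with hTdef
  have hT : IsCompact T := by
    apply IsClosed.isCompact
    apply IsClosed.inter
    · exact IsClosed.preimage
        (infDist_pair_continuous.comp ((continuous_snd).prodMk (hγ.comp continuous_fst)))
        isClosed_singleton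
    · exact IsClosed.preimage continuous_fst isClosed_Iic
  have hmemT : ∀ q : unitInterval × X, q ∈ T ↔ q.2 ∈ (γ q.1 : Set X) ∧ q.1 ≤ t := by
    intro q
    rw [hTdef]
    simp only [mem_inter_iff, mem_preimage, mem_singleton_iff, mem_Iic]
    rw [← (γ q.1).isCompact.isClosed.mem_iff_infDist_zero (γ q.1).nonempty]
  have heq : Gset γ t = Prod.snd '' T := by
    ext p
    rw [mem_Gset]
    constructor
    · rintro ⟨s, hs, hps⟩
      exact ⟨(s, p), (hmemT (s, p)).2 ⟨hps, hs⟩, rfl⟩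
    · rintro ⟨⟨s, p'⟩, hq, rfl⟩
      obtain ⟨hp', hs⟩ := (hmemT (s, p')).1 hq
      exact ⟨s, hs, hp'⟩
  rw [heq]
  exact hT.image continuous_snd

/-- the union path as nonempty compacts -/
noncomputable def GNC (hγ : Continuous γ) (t : unitInterval) : NonemptyCompacts X :=
  ⟨⟨Gset γ t, Gset_compact hγ t⟩, Gset_nonempty γ t⟩

lemma GNC_coe (hγ : Continuous γ) (t : unitInterval) : (GNC hγ t : Set X) = Gset γ t := rfl

lemma GNC_continuous (hγ : Continuous γ) : Continuous (GNC hγ) := by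
  rw [Metric.continuous_iff]
  intro t ε hε
  have huc := CompactSpace.uniformContinuous_of_continuous hγ
  rw [Metric.uniformContinuous_iff] at huc
  obtain ⟨δ, hδ, hd⟩ := huc (ε/2) (by linarith)
  refine ⟨δ, hδ, fun t' ht' => ?_⟩
  have key : ∀ t₁ t₂ : unitInterval, dist t₁ t₂ < δ →
      ∀ p ∈ Gset γ t₁, ∃ q ∈ Gset γ t₂, dist p q ≤ ε/2 := by
    intro t₁ t₂ h12 p hp
    obtain ⟨s, hs, hps⟩ := (mem_Gset γ).1 hp
    by_cases hst : s ≤ t₂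
    · exact ⟨p, (mem_Gset γ).2 ⟨s, hst, hps⟩, by simp; linarith⟩
    · push_neg at hst
      have hds : dist s t₂ < δ := by
        rw [Subtype.dist_eq, Real.dist_eq] at h12 ⊢
        have h1 : (t₂ : ℝ) < s := hst
        have h2 : (s : ℝ) ≤ t₁ := hs
        rw [abs_of_pos (by linarith)]
        calc (s:ℝ) - t₂ ≤ (t₁:ℝ) - t₂ := by linarith
          _ ≤ |(t₁:ℝ) - t₂| := le_abs_self _
          _ < δ := h12
      have hgd : dist (γ s) (γ t₂) < ε/2 := hd hds
      rw [NonemptyCompacts.dist_eq] at hgd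
      obtain ⟨q, hq, hpq⟩ :=
        Metric.exists_dist_lt_of_hausdorffDist_lt hps hgd (hEdist_ne_top (γ s) (γ t₂))
      exact ⟨q, subset_Gset γ t₂ hq, le_of_lt hpq⟩
  rw [NonemptyCompacts.dist_eq]
  have hHd : Metric.hausdorffDist (Gset γ t') (Gset γ t) ≤ ε/2 := by
    apply Metric.hausdorffDist_le_of_mem_dist (by linarith)
    · exact key t' t ht'
    · exact key t t' (by rwa [dist_comm])
  show Metric.hausdorffDist (Gset γ t') (Gset γ t) < ε
  linarith

lemma Gset_zero (hγ0 : (γ 0 : Set X) = ({x} : Set X)) : Gset γ 0 = {x} := by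
  apply Subset.antisymm
  · intro p hp
    obtain ⟨s, hs, hps⟩ := (mem_Gset γ).1 hp
    have hs0 : s = 0 := le_antisymm hs (by
      change (0:ℝ) ≤ (s:ℝ)
      exact s.2.1)
    rw [hs0, hγ0] at hps
    exact hps
  · rw [← hγ0]
    exact subset_Gset γ 0

/-- Key connectedness lemma: the union path starting from a singleton
has preconnected values. -/
lemma Gset_preconnected (hγ : Continuous γ) {x : X} (hγ0 : (γ 0 : Set X) = ({x} : Set X))
    (t' : unitInterval) : IsPreconnected (Gset γ t') := by
  -- inner lemma
  have inner : ∀ A B : Set X, IsClosed A → IsClosed B → Gset γ t' ⊆ A ∪ B →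
      A ∩ B = ∅ → x ∈ A → Gset γ t' ⊆ A := by
    intro A B hA hB hcov hdisj hxA
    by_cases hBne : (Gset γ t' ∩ B).Nonempty
    · exfalso
      set projI : ℝ → unitInterval := fun r => Set.projIcc (0:ℝ) 1 zero_le_one r with hprojdef
      have hprojc : Continuous projI := continuous_projIcc
      have hproj_le : ∀ r : ℝ, r ∈ Icc (0:ℝ) (t' : ℝ) → projI r ≤ t' := by
        intro r hr
        have hr1 : r ∈ Icc (0:ℝ) 1 := ⟨hr.1, le_trans hr.2 t'.2.2⟩
        rw [hprojdef]
        simp only []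
        rw [Set.projIcc_of_mem _ hr1]
        exact Subtype.coe_le_coe.1 (by exact hr.2)
      set S₁ : Set ℝ := {r | r ∈ Icc (0:ℝ) (t' : ℝ) ∧ Gset γ (projI r) ⊆ A} with hS₁def
      set S₂ : Set ℝ := {r | r ∈ Icc (0:ℝ) (t' : ℝ) ∧ (Gset γ (projI r) ∩ B).Nonempty}
        with hS₂def
      have hcover : ∀ r ∈ Icc (0:ℝ) (t' : ℝ), r ∈ S₁ ∪ S₂ := by
        intro r hr
        by_cases h2 : (Gset γ (projI r) ∩ B).Nonempty
        · right; exact ⟨hr, h2⟩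
        · left
          refine ⟨hr, fun p hp => ?_⟩
          have hpt' : p ∈ Gset γ t' := Gset_mono γ (hproj_le r hr) hp
          rcases hcov hpt' with h | h
          · exact h
          · exact absurd ⟨p, hp, h⟩ h2
      have hdisjS : ∀ r, r ∈ S₁ → r ∈ S₂ → False := by
        rintro r ⟨-, hsub⟩ ⟨-, p, hpG, hpB⟩
        have : p ∈ A ∩ B := ⟨hsub hpG, hpB⟩
        simp [hdisj] at this
      have h0S₁ : (0:ℝ) ∈ S₁ := by
        refine ⟨⟨le_rfl, t'.2.1⟩, ?_⟩
        have hp0 : projI 0 = 0 := by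
          rw [hprojdef]
          simp only []
          rw [Set.projIcc_left]
          rfl
        rw [hp0, Gset_zero hγ0]
        exact singleton_subset_iff.2 hxA
      have ht'S₂ : (t' : ℝ) ∈ S₂ := by
        refine ⟨⟨t'.2.1, le_rfl⟩, ?_⟩
        have hpt : projI (t' : ℝ) = t' := by
          rw [hprojdef]
          simp only []
          rw [Set.projIcc_of_mem _ t'.2]
        rw [hpt]
        exact hBne
      have hS₂closed : IsClosed S₂ := by
        apply IsSeqClosed.isClosed
        intro rs r hrs hlim
        have hrIcc : r ∈ Icc (0:ℝ) (t' : ℝ) :=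
          isClosed_Icc.mem_of_tendsto hlim (Eventually.of_forall fun n => (hrs n).1)
        choose pf hpf using fun n => (hrs n).2
        obtain ⟨p, hpB, φ, hφmono, hφlim⟩ :=
          (hB.isCompact).tendsto_subseq (fun n => (hpf n).2)
        refine ⟨hrIcc, p, ?_, hpB⟩
        have hGlim : Tendsto (fun n => GNC hγ (projI (rs (φ n)))) atTop
            (nhds (GNC hγ (projI r))) :=
          ((GNC_continuous hγ).tendsto _).comp
            ((hprojc.tendsto _).comp (hlim.comp hφmono.tendsto_atTop))
        apply mem_of_forall_exists_close (Gset_compact hγ _).isClosed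
        intro ε hε
        have h1 : ∀ᶠ n in atTop, dist (pf (φ n)) p < ε/2 :=
          Metric.tendsto_nhds.1 hφlim (ε/2) (by linarith)
        have h2 : ∀ᶠ n in atTop,
            dist (GNC hγ (projI (rs (φ n)))) (GNC hγ (projI r)) < ε/2 :=
          Metric.tendsto_nhds.1 hGlim (ε/2) (by linarith)
        obtain ⟨n, hn1, hn2⟩ := (h1.and h2).exists
        rw [NonemptyCompacts.dist_eq] at hn2
        obtain ⟨q, hq, hpq⟩ := Metric.exists_dist_lt_of_hausdorffDist_lt
          ((hpf (φ n)).1) hn2 (hEdist_ne_top (GNC hγ (projI (rs (φ n)))) (GNC hγ (projI r)))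
        refine ⟨q, hq, ?_⟩
        calc dist p q ≤ dist p (pf (φ n)) + dist (pf (φ n)) q := dist_triangle _ _ _
          _ < ε/2 + ε/2 := add_lt_add (by rwa [dist_comm]) hpq
          _ = ε := by ring
      have hS₁closed : IsClosed S₁ := by
        apply IsSeqClosed.isClosed
        intro rs r hrs hlim
        have hrIcc : r ∈ Icc (0:ℝ) (t' : ℝ) :=
          isClosed_Icc.mem_of_tendsto hlim (Eventually.of_forall fun n => (hrs n).1)
        refine ⟨hrIcc, fun p hp => ?_⟩
        apply mem_of_forall_exists_close hA
        intro ε hε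
        have hGlim : Tendsto (fun n => GNC hγ (projI (rs n))) atTop
            (nhds (GNC hγ (projI r))) :=
          ((GNC_continuous hγ).tendsto _).comp ((hprojc.tendsto _).comp hlim)
        have h2 : ∀ᶠ n in atTop,
            dist (GNC hγ (projI (rs n))) (GNC hγ (projI r)) < ε :=
          Metric.tendsto_nhds.1 hGlim ε hε
        obtain ⟨n, hn⟩ := h2.exists
        rw [NonemptyCompacts.dist_eq, Metric.hausdorffDist_comm] at hn
        obtain ⟨q, hq, hpq⟩ := Metric.exists_dist_lt_of_hausdorffDist_lt hp hn
          (by rw [EMetric.hausdorffEdist_comm]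
              exact hEdist_ne_top (GNC hγ (projI (rs n))) (GNC hγ (projI r)))
        exact ⟨q, (hrs n).2 hq, hpq⟩
      have hpc : IsPreconnected (Icc (0:ℝ) (t' : ℝ)) := isPreconnected_Icc
      have hfinal := hpc S₂ᶜ S₁ᶜ hS₂closed.isOpen_compl hS₁closed.isOpen_compl ?_ ?_ ?_
      · obtain ⟨ρ, hρIcc, hρ1, hρ2⟩ := hfinal
        rcases hcover ρ hρIcc with h | h
        · exact hρ2 h
        · exact hρ1 h
      · intro ρ hρ
        by_cases h1 : ρ ∈ S₁
        · left; exact fun h2 => hdisjS ρ h1 h2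
        · rcases hcover ρ hρ with h | h
          · exact absurd h h1
          · right; exact h1
      · exact ⟨0, ⟨le_rfl, t'.2.1⟩, fun h2 => hdisjS 0 h0S₁ h2⟩
      · exact ⟨(t' : ℝ), ⟨t'.2.1, le_rfl⟩, fun h1 => hdisjS _ h1 ht'S₂⟩
    · intro p hp
      rcases hcov hp with h | h
      · exact h
      · exact absurd ⟨p, hp, h⟩ hBne
  intro U V hU hV hcov ⟨p, hpG, hpU⟩ ⟨q, hqG, hqV⟩
  by_contra hemp
  rw [not_nonempty_iff_eq_empty] at hemp
  set A : Set X := Gset γ t' \ V with hAdef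
  set B : Set X := Gset γ t' \ U with hBdef
  have hGc : IsCompact (Gset γ t') := Gset_compact hγ t'
  have hAc : IsClosed A := (hGc.diff hV).isClosed
  have hBc : IsClosed B := (hGc.diff hU).isClosed
  have hcov' : Gset γ t' ⊆ A ∪ B := by
    intro r hr
    by_cases hrV : r ∈ V
    · right
      refine ⟨hr, fun hrU => ?_⟩
      have : r ∈ Gset γ t' ∩ (U ∩ V) := ⟨hr, hrU, hrV⟩
      simp [hemp] at this
    · left; exact ⟨hr, hrV⟩
  have hdisj : A ∩ B = ∅ := by
    ext r
    simp only [mem_inter_iff, mem_empty_iff_false, iff_false, not_and]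
    rintro ⟨hrG, hrV⟩ ⟨-, hrU⟩
    rcases hcov hrG with h | h
    exacts [hrU h, hrV h]
  have hxG : x ∈ Gset γ t' := by
    have : x ∈ Gset γ 0 := by
      rw [Gset_zero hγ0]; rfl
    exact Gset_mono γ (by
      change (0:ℝ) ≤ (t':ℝ)
      exact t'.2.1) this
  rcases hcov' hxG with hxA | hxB
  · have := inner A B hAc hBc hcov' hdisj hxA
    have : q ∈ A := this hqG
    exact this.2 hqV
  · have hdisj' : B ∩ A = ∅ := by rw [inter_comm]; exact hdisj
    have hcov'' : Gset γ t' ⊆ B ∪ A := by rw [union_comm]; exact hcov'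
    have := inner B A hBc hAc hcov'' hdisj' hxB
    have : p ∈ B := this hpG
    exact this.2 hpU

end Gamma


variable {X : Type*} [MetricSpace X] [CompactSpace X]

/-- The segment (order arc) theorem: from a singleton up to a subcontinuum. -/
lemma segment_exists [Nonempty X] {C : Set X} (hCc : IsCompact C) (hCpc : IsPreconnected C)
    {y : X} (hy : y ∈ C) :
    ∃ β : unitInterval → NonemptyCompacts X, Continuous β ∧ (β 0 : Set X) = {y} ∧
      (β 1 : Set X) = C ∧ ∀ s, (β s : Set X) ⊆ C := by
  classical
  set yN : NonemptyCompacts X := ⟨⟨{y}, isCompact_singleton⟩, singleton_nonempty y⟩ with hyNdef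
  set CN : NonemptyCompacts X := ⟨⟨C, hCc⟩, ⟨y, hy⟩⟩ with hCNdef
  have hyNcoe : (yN : Set X) = {y} := rfl
  have hCNcoe : (CN : Set X) = C := rfl
  by_cases hyC : ({y} : Set X) = C
  · refine ⟨fun _ => yN, continuous_const, rfl, hyC, fun _ => ?_⟩
    rw [hyNcoe, hyC]
  obtain ⟨u, hu⟩ := TopologicalSpace.exists_dense_seq X
  set f : NonemptyCompacts X → ℝ := nmf u with hfdef
  -- the subtype of admissible subcontinua
  set P : NonemptyCompacts X → Prop :=
    fun K => y ∈ (K : Set X) ∧ (K : Set X) ⊆ C ∧ IsPreconnected (K : Set X) with hPdef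
  have hPy : P yN := ⟨rfl, by rw [hyNcoe]; exact singleton_subset_iff.2 hy,
    by rw [hyNcoe]; exact isPreconnected_singleton⟩
  have hPC : P CN := ⟨hy, subset_rfl, hCpc⟩
  set r : {K : NonemptyCompacts X // P K} → {K : NonemptyCompacts X // P K} → Prop :=
    fun K L => (K.1 : Set X) ⊆ L.1 with hrdef
  have hchain0 : IsChain r {(⟨yN, hPy⟩ : {K // P K}), ⟨CN, hPC⟩} := by
    rintro k (rfl | hk) l (rfl | hl) hne
    · exact absurd rfl hne
    · rw [mem_singleton_iff] at hl
      subst hl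
      left
      exact show ({y} : Set X) ⊆ C from singleton_subset_iff.2 hy
    · rw [mem_singleton_iff] at hk
      subst hk
      right
      exact show ({y} : Set X) ⊆ C from singleton_subset_iff.2 hy
    · rw [mem_singleton_iff] at hk hl
      subst hk; subst hl
      exact absurd rfl hne
  obtain ⟨M, hMmax, hM0⟩ := hchain0.exists_maxChain
  set Mset : Set (NonemptyCompacts X) := Subtype.val '' M with hMsetdef
  have hyM : yN ∈ Mset := ⟨⟨yN, hPy⟩, hM0 (mem_insert _ _), rfl⟩
  have hCM : CN ∈ Mset := ⟨⟨CN, hPC⟩, hM0 (mem_insert_of_mem _ rfl), rfl⟩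
  have hPM : ∀ K ∈ Mset, P K := by
    rintro K ⟨k, _, rfl⟩
    exact k.2
  have hchainM : ∀ K ∈ Mset, ∀ L ∈ Mset, (K : Set X) ⊆ L ∨ (L : Set X) ⊆ K := by
    rintro K ⟨k, hk, rfl⟩ L ⟨l, hl, rfl⟩
    by_cases heq : k = l
    · subst heq; left; exact subset_rfl
    · exact hMmax.1 hk hl heq
  have hmaxM : ∀ K, P K → (∀ L ∈ Mset, (K : Set X) ⊆ L ∨ (L : Set X) ⊆ K) → K ∈ Mset := by
    intro K hPK hcomp
    have hins : IsChain r (insert ⟨K, hPK⟩ M) := by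
      refine hMmax.1.insert fun l hl hne => ?_
      rcases hcomp l.1 ⟨l, hl, rfl⟩ with h | h
      · exact Or.inl h
      · exact Or.inr h
    have := hMmax.2 hins (subset_insert _ _)
    exact ⟨⟨K, hPK⟩, by rw [this]; exact mem_insert _ _, rfl⟩
  -- Mset is closed
  have hMclosed : IsClosed Mset := by
    refine IsSeqClosed.isClosed fun g K hg hlim => ?_
    have hPK : P K := by
      refine ⟨?_, ?_, ?_⟩
      · have : ({y} : Set X) ⊆ (K : Set X) :=
          superset_of_freq hlim (Eventually.frequently (Eventually.of_forall fun n =>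
            singleton_subset_iff.2 (hPM _ (hg n)).1))
        exact singleton_subset_iff.1 this
      · exact subset_of_freq hlim hCc.isClosed
          (Eventually.frequently (Eventually.of_forall fun n => (hPM _ (hg n)).2.1))
      · exact isPreconnected_of_freq hlim
          (Eventually.frequently (Eventually.of_forall fun n => (hPM _ (hg n)).2.2))
    refine hmaxM K hPK fun L hL => ?_
    by_cases hfreq : ∃ᶠ n in atTop, (g n : Set X) ⊆ (L : Set X)
    · exact Or.inl (subset_of_freq hlim L.isCompact.isClosed hfreq)
    · rw [not_frequently] at hfreq
      refine Or.inr (superset_of_freq hlim ?_)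
      refine Eventually.frequently (hfreq.mono fun n hn => ?_)
      rcases hchainM _ (hg n) _ hL with h | h
      · exact absurd h hn
      · exact h
  have hMcompact : IsCompact Mset := hMclosed.isCompact
  -- endpoints of the value interval
  set a : ℝ := f yN with hadef
  set b : ℝ := f CN with hbdef
  have hab : a < b := by
    have h1 : (yN : Set X) ⊆ (CN : Set X) := singleton_subset_iff.2 hy
    have h2 : (yN : Set X) ≠ (CN : Set X) := hyC
    exact nmf_strict_mono hu h1 h2
  have hbounds : ∀ K ∈ Mset, f K ∈ Icc a b := by
    intro K hK
    obtain ⟨h1, h2, _⟩ := hPM K hK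
    constructor
    · exact nmf_mono u (by rw [hyNcoe]; exact singleton_subset_iff.2 h1)
    · exact nmf_mono u (by rw [hCNcoe]; exact h2)
  have hinj : ∀ K ∈ Mset, ∀ L ∈ Mset, f K = f L → K = L := by
    intro K hK L hL hfKL
    rcases hchainM K hK L hL with h | h
    · by_contra hne
      have : (K : Set X) ≠ (L : Set X) := fun hs => hne (NonemptyCompacts.ext hs)
      exact absurd hfKL (ne_of_lt (nmf_strict_mono hu h this))
    · by_contra hne
      have : (L : Set X) ≠ (K : Set X) := fun hs => hne (NonemptyCompacts.ext hs.symm)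
      exact absurd hfKL.symm (ne_of_lt (nmf_strict_mono hu h this))
  -- surjectivity of f onto [a, b]
  have hsurj : ∀ v ∈ Icc a b, ∃ K ∈ Mset, f K = v := by
    intro v hv
    by_contra hcon
    push_neg at hcon
    have hvne : ∀ K ∈ Mset, f K ≠ v := hcon
    have hav : a < v := lt_of_le_of_ne hv.1 (fun h : a = v => hvne yN hyM h)
    have hvb : v < b := lt_of_le_of_ne hv.2 (fun h : v = b => hvne CN hCM h.symm)
    set Mlo : Set (NonemptyCompacts X) := {K ∈ Mset | f K < v} with hMlodef
    set Mhi : Set (NonemptyCompacts X) := {K ∈ Mset | v < f K} with hMhidef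
    have hyMlo : yN ∈ Mlo := ⟨hyM, hav⟩
    have hCMhi : CN ∈ Mhi := ⟨hCM, hvb⟩
    have hchainlo : ∀ K ∈ Mlo, ∀ L ∈ Mlo, (K : Set X) ⊆ L ∨ (L : Set X) ⊆ K :=
      fun K hK L hL => hchainM K hK.1 L hL.1
    have hchainhi : ∀ K ∈ Mhi, ∀ L ∈ Mhi, (K : Set X) ⊆ L ∨ (L : Set X) ⊆ K :=
      fun K hK L hL => hchainM K hK.1 L hL.1
    -- the supremum of Mlo
    have hA₀c : IsCompact (closure (⋃ K ∈ Mlo, (K : Set X))) :=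
      isClosed_closure.isCompact
    have hyA₀ : y ∈ closure (⋃ K ∈ Mlo, (K : Set X)) :=
      subset_closure (mem_biUnion hyMlo (by rw [hyNcoe]; exact rfl))
    set A₀ : NonemptyCompacts X :=
      ⟨⟨closure (⋃ K ∈ Mlo, (K : Set X)), hA₀c⟩, ⟨y, hyA₀⟩⟩ with hA₀def
    have hA₀coe : (A₀ : Set X) = closure (⋃ K ∈ Mlo, (K : Set X)) := rfl
    have hA₀cl : A₀ ∈ closure Mlo := by
      refine Metric.mem_closure_iff.2 fun ε hε => ?_
      obtain ⟨K, hK, hdist⟩ := exists_near_sup hchainlo hA₀coe hε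
      exact ⟨K, hK, hdist⟩
    have hA₀M : A₀ ∈ Mset := by
      have : closure Mlo ⊆ Mset := by
        rw [← hMclosed.closure_eq]
        exact closure_mono fun K hK => hK.1
      exact this hA₀cl
    have hfA₀le : f A₀ ≤ v := by
      have h1 : f A₀ ∈ closure (f '' Mlo) := by
        have := image_closure_subset_closure_image (f := f) (nmf_continuous u) (s := Mlo)
        exact this (mem_image_of_mem f hA₀cl)
      have h2 : closure (f '' Mlo) ⊆ Iic v := by
        rw [← IsClosed.closure_eq (isClosed_Iic (a := v))]
        refine closure_mono ?_
        rintro w ⟨K, hK, rfl⟩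
        exact le_of_lt hK.2
      exact h2 h1
    have hA₀lo : A₀ ∈ Mlo := ⟨hA₀M, lt_of_le_of_ne hfA₀le (hvne _ hA₀M)⟩
    have hA₀sup : ∀ K ∈ Mlo, (K : Set X) ⊆ A₀ := by
      intro K hK
      rw [hA₀coe]
      exact (subset_biUnion_of_mem hK).trans subset_closure
    -- the infimum of Mhi
    have hB₀closed : IsClosed (⋂ K ∈ Mhi, (K : Set X)) :=
      isClosed_biInter fun K _ => K.isCompact.isClosed
    have hyB₀ : y ∈ ⋂ K ∈ Mhi, (K : Set X) :=
      mem_biInter fun K hK => (hPM K hK.1).1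
    set B₀ : NonemptyCompacts X :=
      ⟨⟨⋂ K ∈ Mhi, (K : Set X), hB₀closed.isCompact⟩, ⟨y, hyB₀⟩⟩ with hB₀def
    have hB₀coe : (B₀ : Set X) = ⋂ K ∈ Mhi, (K : Set X) := rfl
    have hB₀cl : B₀ ∈ closure Mhi := by
      refine Metric.mem_closure_iff.2 fun ε hε => ?_
      obtain ⟨K, hK, hdist⟩ := exists_near_inf ⟨CN, hCMhi⟩ hchainhi hB₀coe hε
      exact ⟨K, hK, hdist⟩
    have hB₀M : B₀ ∈ Mset := by
      have : closure Mhi ⊆ Mset := by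
        rw [← hMclosed.closure_eq]
        exact closure_mono fun K hK => hK.1
      exact this hB₀cl
    have hfB₀ge : v ≤ f B₀ := by
      have h1 : f B₀ ∈ closure (f '' Mhi) := by
        have := image_closure_subset_closure_image (f := f) (nmf_continuous u) (s := Mhi)
        exact this (mem_image_of_mem f hB₀cl)
      have h2 : closure (f '' Mhi) ⊆ Ici v := by
        rw [← IsClosed.closure_eq (isClosed_Ici (a := v))]
        refine closure_mono ?_
        rintro w ⟨K, hK, rfl⟩
        exact le_of_lt hK.2
      exact h2 h1
    have hB₀hi : B₀ ∈ Mhi := ⟨hB₀M, lt_of_le_of_ne hfB₀ge (fun h => hvne _ hB₀M h.symm)⟩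
    have hB₀inf : ∀ K ∈ Mhi, (B₀ : Set X) ⊆ K := by
      intro K hK
      rw [hB₀coe]
      exact biInter_subset_of_mem hK
    -- A₀ is strictly contained in B₀
    have hA₀B₀ : (A₀ : Set X) ⊆ B₀ := by
      rcases hchainM A₀ hA₀M B₀ hB₀M with h | h
      · exact h
      · exfalso
        have := nmf_mono u h
        rw [← hfdef] at this
        linarith [hA₀lo.2, hB₀hi.2]
    have hA₀B₀ne : (A₀ : Set X) ≠ (B₀ : Set X) := by
      intro h
      have : A₀ = B₀ := NonemptyCompacts.ext h
      rw [this] at hA₀lo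
      linarith [hA₀lo.2, hB₀hi.2]
    obtain ⟨w, hwB₀, hwA₀⟩ := exists_of_ssubset ⟨hA₀B₀, fun h => hA₀B₀ne (hA₀B₀.antisymm h)⟩
    obtain ⟨D, hDc, hDpc, hAD, hDB, hADne, hDBne⟩ :=
      gap_lemma A₀.isCompact (hPM A₀ hA₀M).2.2 A₀.nonempty B₀.isCompact
        (hPM B₀ hB₀M).2.2 hA₀B₀ hwB₀ hwA₀
    set DN : NonemptyCompacts X := ⟨⟨D, hDc⟩, ⟨y, hAD (hPM A₀ hA₀M).1⟩⟩ with hDNdef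
    have hDNcoe : (DN : Set X) = D := rfl
    have hPD : P DN := ⟨hAD (hPM A₀ hA₀M).1, by
      rw [hDNcoe]; exact hDB.trans (hPM B₀ hB₀M).2.1, hDpc⟩
    have hDNM : DN ∈ Mset := by
      refine hmaxM DN hPD fun L hL => ?_
      rcases lt_or_gt_of_ne (hvne L hL) with h | h
      · exact Or.inr ((hA₀sup L ⟨hL, h⟩).trans hAD)
      · exact Or.inl (hDB.trans (hB₀inf L ⟨hL, h⟩))
    rcases lt_or_gt_of_ne (hvne DN hDNM) with h | h
    · exact hADne (hAD.antisymm (hA₀sup DN ⟨hDNM, h⟩))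
    · exact hDBne (hDB.antisymm (hB₀inf DN ⟨hDNM, h⟩))
  -- build the homeomorphism and the path
  haveI : CompactSpace ↥Mset := isCompact_iff_compactSpace.1 hMcompact
  set φ : ↥Mset → ↥(Icc a b) := fun K => ⟨f K.1, hbounds K.1 K.2⟩ with hφdef
  have hφc : Continuous φ :=
    Continuous.subtype_mk ((nmf_continuous u).comp continuous_subtype_val) _
  have hφbij : Function.Bijective φ := by
    constructor
    · intro K L h
      apply Subtype.ext
      exact hinj K.1 K.2 L.1 L.2 (congrArg Subtype.val h)
    · rintro ⟨v, hv⟩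
      obtain ⟨K, hK, hfK⟩ := hsurj v hv
      exact ⟨⟨K, hK⟩, Subtype.ext hfK⟩
  set e : ↥Mset ≃ ↥(Icc a b) := Equiv.ofBijective φ hφbij with hedef
  have hec : Continuous (e : ↥Mset → ↥(Icc a b)) := hφc
  set h : ↥Mset ≃ₜ ↥(Icc a b) := hec.homeoOfEquivCompactToT2 with hhdef
  have hmem : ∀ s : unitInterval, a + (s : ℝ) * (b - a) ∈ Icc a b := by
    intro s
    have h1 : (0:ℝ) ≤ s := s.2.1
    have h2 : (s:ℝ) ≤ 1 := s.2.2
    constructor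
    · nlinarith
    · nlinarith
  set β : unitInterval → NonemptyCompacts X :=
    fun s => ((h.symm ⟨a + (s : ℝ) * (b - a), hmem s⟩ : ↥Mset) : NonemptyCompacts X)
    with hβdef
  have hβc : Continuous β := by
    apply continuous_subtype_val.comp
    apply h.symm.continuous.comp
    exact Continuous.subtype_mk (by fun_prop) _
  have hβmem : ∀ s, β s ∈ Mset := fun s => (h.symm _).2
  have hβval : ∀ s : unitInterval, ∀ (K : NonemptyCompacts X) (hK : K ∈ Mset),
      f K = a + (s:ℝ) * (b - a) → β s = K := by
    intro s K hK hfK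
    show ((h.symm ⟨a + (s : ℝ) * (b - a), hmem s⟩ : ↥Mset) : NonemptyCompacts X) = K
    have heq : h.symm ⟨a + (s : ℝ) * (b - a), hmem s⟩ = ⟨K, hK⟩ := by
      apply (Equiv.symm_apply_eq h.toEquiv).mpr
      apply Subtype.ext
      show (a + (s:ℝ) * (b - a)) = f K
      exact hfK.symm
    rw [heq]
  have hβ0 : β 0 = yN := by
    apply hβval 0 yN hyM
    have h0 : ((0 : unitInterval) : ℝ) = 0 := rfl
    rw [h0, hadef]
    ring
  have hβ1 : β 1 = CN := by
    apply hβval 1 CN hCM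
    have h1 : ((1 : unitInterval) : ℝ) = 1 := rfl
    rw [h1, hbdef, hadef]
    ring
  refine ⟨β, hβc, ?_, ?_, ?_⟩
  · rw [hβ0, hyNcoe]
  · rw [hβ1, hCNcoe]
  · intro s
    exact (hPM _ (hβmem s)).2.1


end BTmain

theorem blocked_transitive (x y z : X) (hxy : x ∈ BlockedSet y)
    (hyz : y ∈ BlockedSet z) : x ∈ BlockedSet z := by
  intro γ hγc hγ0 hγ1
  by_contra hcon
  have hzfree : ∀ t : unitInterval, t < 1 → z ∉ (γ t : Set X) := by
    intro t ht hz
    exact hcon ⟨t, ht, ⟨z, hz, rfl⟩⟩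
  -- the union (track) path Γ
  have hΓ0 : (BTmain.GNC hγc 0 : Set X) = {x} := by
    rw [BTmain.GNC_coe]
    exact BTmain.Gset_zero hγ0
  have hΓ1 : (BTmain.GNC hγc 1 : Set X) = univ := by
    rw [BTmain.GNC_coe]
    apply eq_univ_of_univ_subset
    rw [← hγ1]
    exact BTmain.subset_Gset γ 1
  obtain ⟨t₀, ht₀, w, hwΓ, hwy⟩ :=
    hxy (BTmain.GNC hγc) (BTmain.GNC_continuous hγc) hΓ0 hΓ1
  rw [mem_singleton_iff] at hwy
  rw [BTmain.GNC_coe] at hwΓ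
  rw [hwy] at hwΓ
  -- C = Gset γ t₀ is a z-free subcontinuum containing y
  set C : Set X := BTmain.Gset γ t₀ with hCdef
  have hCc : IsCompact C := BTmain.Gset_compact hγc t₀
  have hCpc : IsPreconnected C := BTmain.Gset_preconnected hγc hγ0 t₀
  have ht₀r : (t₀ : ℝ) < 1 := ht₀
  have hzC : ∀ s : unitInterval, s < 1 → z ∉ BTmain.Gset γ s := by
    intro s hs hz
    obtain ⟨s', hs', hzs'⟩ := (BTmain.mem_Gset γ).1 hz
    exact hzfree s' (lt_of_le_of_lt hs' hs) hzs'
  obtain ⟨β₁, hβ₁c, hβ₁0, hβ₁1, hβ₁sub⟩ := BTmain.segment_exists hCc hCpc hwΓ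
  -- concatenate β₁ with the growing track
  set projI : ℝ → unitInterval := fun r => Set.projIcc (0:ℝ) 1 zero_le_one r with hprojdef
  have hprojc : Continuous projI := continuous_projIcc
  set F : ℝ → NonemptyCompacts X := fun r =>
    if r ≤ 1/2 then β₁ (projI (2*r))
    else BTmain.GNC hγc (projI ((t₀:ℝ) + (2*r - 1) * (1 - (t₀:ℝ)))) with hFdef
  have hFc : Continuous F := by
    apply Continuous.if_le
    · exact hβ₁c.comp (hprojc.comp (by fun_prop))
    · exact (BTmain.GNC_continuous hγc).comp (hprojc.comp (by fun_prop))
    · exact continuous_id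
    · exact continuous_const
    · intro r hr
      have h2r : 2*r = 1 := by rw [hr]; ring
      have harg : (t₀:ℝ) + (2*r - 1) * (1 - (t₀:ℝ)) = (t₀:ℝ) := by rw [hr]; ring
      rw [harg, h2r]
      apply NonemptyCompacts.ext
      have hp1 : projI 1 = 1 := by
        rw [hprojdef]
        simp only []
        rw [Set.projIcc_right]
        rfl
      have hpt₀ : projI (t₀:ℝ) = t₀ := by
        rw [hprojdef]
        simp only []
        rw [Set.projIcc_of_mem _ t₀.2]
      rw [hp1, hpt₀, BTmain.GNC_coe, hβ₁1]
  set β : unitInterval → NonemptyCompacts X := fun s => F ((s : unitInterval) : ℝ) with hβdef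
  have hβc : Continuous β := hFc.comp continuous_subtype_val
  have hβ0 : (β 0 : Set X) = {y} := by
    have h00 : ((0 : unitInterval) : ℝ) = 0 := rfl
    have : β 0 = β₁ (projI 0) := by
      rw [hβdef]
      simp only [h00]
      rw [hFdef]
      simp only []
      rw [if_pos (by norm_num : (0:ℝ) ≤ 1/2)]
      norm_num
    rw [this]
    have hp0 : projI 0 = 0 := by
      rw [hprojdef]
      simp only []
      rw [Set.projIcc_left]
      rfl
    rw [hp0, hβ₁0]
  have hβ1 : (β 1 : Set X) = univ := by
    have h11 : ((1 : unitInterval) : ℝ) = 1 := rfl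
    have harg : (t₀:ℝ) + (2*(1:ℝ) - 1) * (1 - (t₀:ℝ)) = 1 := by ring
    have : β 1 = BTmain.GNC hγc (projI 1) := by
      rw [hβdef]
      simp only [h11]
      rw [hFdef]
      simp only []
      rw [if_neg (by norm_num : ¬ ((1:ℝ) ≤ 1/2)), harg]
    rw [this]
    have hp1 : projI 1 = 1 := by
      rw [hprojdef]
      simp only []
      rw [Set.projIcc_right]
      rfl
    rw [hp1, hΓ1]
  obtain ⟨s, hs, q, hqβ, hqz⟩ := hyz β hβc hβ0 hβ1
  rw [mem_singleton_iff] at hqz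
  rw [hqz] at hqβ
  have hsr : (s : ℝ) < 1 := hs
  by_cases hhalf : (s : ℝ) ≤ 1/2
  · have hzin : z ∈ (β₁ (projI (2*(s:ℝ))) : Set X) := by
      have : β s = β₁ (projI (2*(s:ℝ))) := by
        rw [hβdef]
        simp only []
        rw [hFdef]
        simp only []
        rw [if_pos hhalf]
      rwa [this] at hqβ
    have hzC' : z ∈ C := hβ₁sub _ hzin
    exact hzC t₀ (by exact_mod_cast ht₀r) hzC'
  · push_neg at hhalf
    set r : ℝ := (t₀:ℝ) + (2*(s:ℝ) - 1) * (1 - (t₀:ℝ)) with hrdef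
    have ht₀0 : (0:ℝ) ≤ (t₀:ℝ) := t₀.2.1
    have ht₀1 : (t₀:ℝ) ≤ 1 := t₀.2.2
    have hrmem : r ∈ Icc (0:ℝ) 1 := by
      constructor
      · rw [hrdef]; nlinarith
      · rw [hrdef]; nlinarith
    have hrlt : r < 1 := by
      rw [hrdef]; nlinarith
    have hzin : z ∈ BTmain.Gset γ (projI r) := by
      have : β s = BTmain.GNC hγc (projI r) := by
        rw [hβdef]
        simp only []
        rw [hFdef]
        simp only []
        rw [if_neg (not_le.2 hhalf)]
      rw [this, BTmain.GNC_coe] at hqβ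
      exact hqβ
    refine hzC (projI r) ?_ hzin
    have hpr : projI r = ⟨r, hrmem⟩ := by
      rw [hprojdef]
      simp only []
      rw [Set.projIcc_of_mem _ hrmem]
    rw [hpr]
    exact_mod_cast hrlt
end
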